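/- arXiv:1212.3191 — 3 statements merged into one kernel-verified Lean document; each statement's English description precedes it below -/
import Mathlib

section
/- For nonnegative integers n, r, the greatest maximizing index K of the sequence k ↦ {n+r brace k+r}_r (0 ≤ k ≤ n) satisfies |K − (B_{n+1}(1;r)/B_n(1;r) − (r+1))| < 1, where B_n(1;r) = Σ_{k=0}^n {n+r brace k+r}_r is the r-Bell number. -/
open Finset

/-- `𝒜` is a set partition of `Fin N`: blocks are nonempty and every element
lies in exactly one block. -/
def IsSetPartition {N : ℕ} (𝒜 : Finset (Finset (Fin N))) : Prop :=
  (∀ t ∈ 𝒜, t.Nonempty) ∧ ∀ x : Fin N, ∃! t, t ∈ 𝒜 ∧ x ∈ t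

/-- The elements of `S` lie in pairwise distinct blocks of `𝒜`. -/
def DistinctBlocks {N : ℕ} (𝒜 : Finset (Finset (Fin N))) (S : Set (Fin N)) : Prop :=
  ∀ a ∈ S, ∀ b ∈ S, a ≠ b → ∀ t ∈ 𝒜, ¬(a ∈ t ∧ b ∈ t)

/-- The `r`-Stirling number of the second kind `{n+r brace k+r}_r`: the number of
partitions of `{1,…,n+r}` into `k+r` nonempty blocks with `1,…,r` in distinct blocks. -/
noncomputable def rStirling (r n k : ℕ) : ℕ :=
  Nat.card {𝒜 : Finset (Finset (Fin (n + r))) //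
    IsSetPartition 𝒜 ∧ 𝒜.card = k + r ∧ DistinctBlocks 𝒜 {x | (x : ℕ) < r}}

/-- The `(r₁,r₂)`-Stirling number of the second kind `{n+r₁+r₂ brace k+r₂}_{r₁,r₂}`. -/
noncomputable def rrStirling (r₁ r₂ n k : ℕ) : ℕ :=
  Nat.card {𝒜 : Finset (Finset (Fin (n + r₁ + r₂))) //
    IsSetPartition 𝒜 ∧ 𝒜.card = k + r₂ ∧
    DistinctBlocks 𝒜 {x | (x : ℕ) < r₁} ∧
    DistinctBlocks 𝒜 {x | r₁ ≤ (x : ℕ) ∧ (x : ℕ) < r₁ + r₂}}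

/-- The `r`-Bell polynomial `B_n(z;r) = Σ_{k=0}^n {n+r brace k+r}_r z^k`. -/
noncomputable def rBell (r n : ℕ) (z : ℝ) : ℝ :=
  ∑ k ∈ range (n + 1), (rStirling r n k : ℝ) * z ^ k

/-- The `(r₁,r₂)`-Bell polynomial `B_n(z;r₁,r₂) = Σ_{k=0}^{n+r₁} {n+r₁+r₂ brace k+r₂}_{r₁,r₂} z^k`. -/
noncomputable def rrBell (r₁ r₂ n : ℕ) (z : ℝ) : ℝ :=
  ∑ k ∈ range (n + r₁ + 1), (rrStirling r₁ r₂ n k : ℝ) * z ^ k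

open Finset

namespace PBaux

/-- coefficients of ∏ (q_i + p_i z) -/
noncomputable def pb : List ℝ → ℕ → ℝ
  | [], 0 => 1
  | [], _+1 => 0
  | p :: M, 0 => (1 - p) * pb M 0
  | p :: M, k+1 => (1 - p) * pb M (k+1) + p * pb M k

@[simp] lemma pb_nil_zero : pb [] 0 = 1 := rfl
@[simp] lemma pb_nil_succ (k : ℕ) : pb [] (k+1) = 0 := rfl
@[simp] lemma pb_cons_zero (p : ℝ) (M : List ℝ) : pb (p :: M) 0 = (1 - p) * pb M 0 := rfl
@[simp] lemma pb_cons_succ (p : ℝ) (M : List ℝ) (k : ℕ) :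
    pb (p :: M) (k+1) = (1 - p) * pb M (k+1) + p * pb M k := rfl

lemma pb_nonneg {L : List ℝ} (h : ∀ p ∈ L, 0 ≤ p ∧ p ≤ 1) (k : ℕ) : 0 ≤ pb L k := by
  induction L generalizing k with
  | nil => cases k <;> simp
  | cons p M ih =>
    have hp := h p (by simp)
    have hM : ∀ q ∈ M, 0 ≤ q ∧ q ≤ 1 := fun q hq => h q (by simp [hq])
    cases k with
    | zero => simpa using mul_nonneg (by linarith [hp.2]) (ih hM 0)
    | succ k =>
      simpa using add_nonneg (mul_nonneg (by linarith [hp.2]) (ih hM (k+1)))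
        (mul_nonneg hp.1 (ih hM k))

lemma pb_zero_pos {L : List ℝ} (h : ∀ p ∈ L, p < 1) : 0 < pb L 0 := by
  induction L with
  | nil => simp
  | cons p M ih =>
    have : (0:ℝ) < 1 - p := by have := h p (by simp); linarith
    simpa using mul_pos this (ih fun q hq => h q (by simp [hq]))

lemma pb_eq_zero_of_length_lt {L : List ℝ} {k : ℕ} (h : L.length < k) : pb L k = 0 := by
  induction L generalizing k with
  | nil => cases k with
    | zero => simp at h
    | succ k => simp
  | cons p M ih =>
    cases k with
    | zero => simp at h
    | succ k =>
      simp only [List.length_cons, Nat.succ_lt_succ_iff] at h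
      rw [pb_cons_succ, ih (h.trans (Nat.lt_succ_self k)), ih h]
      ring

lemma pb_length_pos {L : List ℝ} (h : ∀ p ∈ L, 0 < p) : 0 < pb L L.length := by
  induction L with
  | nil => simp
  | cons p M ih =>
    have hp := h p (by simp)
    have hM := ih fun q hq => h q (by simp [hq])
    simp only [List.length_cons, pb_cons_succ]
    rw [pb_eq_zero_of_length_lt (Nat.lt_succ_self _)]
    nlinarith

/-- sum of all coefficients is 1 -/
lemma pb_sum (L : List ℝ) : ∑ k ∈ range (L.length + 1), pb L k = 1 := by
  induction L with
  | nil => simp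
  | cons p M ih =>
    have h1 : ∑ k ∈ range (M.length + 1 + 1), pb M k = 1 := by
      rw [Finset.sum_range_succ, pb_eq_zero_of_length_lt (Nat.lt_succ_self _), ih]; ring
    have h2 : ∑ k ∈ range (M.length + 1), pb M (k+1) + pb M 0 = 1 := by
      rw [← Finset.sum_range_succ' (pb M) (M.length + 1)]; exact h1
    rw [List.length_cons, Finset.sum_range_succ' _ (M.length + 1)]
    simp only [pb_cons_succ, pb_cons_zero]
    rw [Finset.sum_add_distrib, ← Finset.mul_sum, ← Finset.mul_sum]
    linear_combination (1 - p) * h2 + p * ih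

/-- mean: ∑ k·a_k = ∑ p_i -/
lemma pb_mean (L : List ℝ) : ∑ k ∈ range (L.length + 1), (k : ℝ) * pb L k = L.sum := by
  induction L with
  | nil => simp
  | cons p M ih =>
    rw [List.length_cons, Finset.sum_range_succ' _ (M.length + 1)]
    simp only [pb_cons_succ, Nat.cast_add, Nat.cast_one, Nat.cast_zero, List.sum_cons]
    have e1 : ∑ k ∈ range (M.length + 1), ((k:ℝ)+1) * ((1 - p) * pb M (k+1) + p * pb M k)
        = (1-p) * (∑ k ∈ range (M.length + 1), ((k:ℝ)+1) * pb M (k+1))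
          + p * (∑ k ∈ range (M.length + 1), ((k:ℝ)+1) * pb M k) := by
      rw [Finset.mul_sum, Finset.mul_sum, ← Finset.sum_add_distrib]
      congr 1; ext k; ring
    have h1 : ∑ k ∈ range (M.length + 1 + 1), (k:ℝ) * pb M k = M.sum := by
      rw [Finset.sum_range_succ, pb_eq_zero_of_length_lt (Nat.lt_succ_self _), ih]; ring
    have e2 : ∑ k ∈ range (M.length + 1), ((k:ℝ)+1) * pb M (k+1) = M.sum := by
      rw [← h1, Finset.sum_range_succ' (fun k => (k:ℝ) * pb M k) (M.length + 1)]
      push_cast; ring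
    have e4 : ∑ k ∈ range (M.length + 1), ((k:ℝ)+1) * pb M k
        = (∑ k ∈ range (M.length + 1), (k:ℝ) * pb M k) + ∑ k ∈ range (M.length + 1), pb M k := by
      rw [← Finset.sum_add_distrib]; congr 1; ext k; ring
    rw [e1, e2, e4, ih, pb_sum]
    ring

/-- key identity I: (k+1)·a_{k+1} = ∑_i p_i · a^{(i)}_k -/
lemma pb_ident1 (L : List ℝ) (k : ℕ) :
    ((k:ℝ)+1) * pb L (k+1) = ∑ i ∈ range L.length, L.getD i 0 * pb (L.eraseIdx i) k := by
  induction L generalizing k with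
  | nil => simp
  | cons p M ih =>
    rw [List.length_cons, Finset.sum_range_succ' _ M.length]
    simp only [List.eraseIdx_cons_succ, List.eraseIdx_cons_zero, List.getD_cons_succ,
      List.getD_cons_zero]
    cases k with
    | zero =>
      simp only [pb_cons_succ, pb_cons_zero]
      have e : ∑ i ∈ range M.length, M.getD i 0 * ((1 - p) * pb (M.eraseIdx i) 0)
          = (1-p) * ∑ i ∈ range M.length, M.getD i 0 * pb (M.eraseIdx i) 0 := by
        rw [Finset.mul_sum]; congr 1; ext i; ring
      rw [e, ← ih 0]; push_cast; ring
    | succ k =>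
      simp only [pb_cons_succ]
      have e : ∑ i ∈ range M.length,
            M.getD i 0 * ((1 - p) * pb (M.eraseIdx i) (k+1) + p * pb (M.eraseIdx i) k)
          = (1-p) * (∑ i ∈ range M.length, M.getD i 0 * pb (M.eraseIdx i) (k+1))
            + p * (∑ i ∈ range M.length, M.getD i 0 * pb (M.eraseIdx i) k) := by
        rw [Finset.mul_sum, Finset.mul_sum, ← Finset.sum_add_distrib]; congr 1; ext i; ring
      rw [e, ← ih (k+1), ← ih k]
      push_cast; ring

/-- key identity II: (n−k)·a_k = ∑_i (1−p_i) · a^{(i)}_k -/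
lemma pb_ident2 (L : List ℝ) (k : ℕ) :
    ((L.length:ℝ) - k) * pb L k = ∑ i ∈ range L.length, (1 - L.getD i 0) * pb (L.eraseIdx i) k := by
  induction L generalizing k with
  | nil => cases k <;> simp
  | cons p M ih =>
    rw [List.length_cons, Finset.sum_range_succ' _ M.length]
    simp only [List.eraseIdx_cons_succ, List.eraseIdx_cons_zero, List.getD_cons_succ,
      List.getD_cons_zero]
    cases k with
    | zero =>
      simp only [pb_cons_succ, pb_cons_zero]
      have e : ∑ i ∈ range M.length, (1 - M.getD i 0) * ((1 - p) * pb (M.eraseIdx i) 0)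
          = (1-p) * ∑ i ∈ range M.length, (1 - M.getD i 0) * pb (M.eraseIdx i) 0 := by
        rw [Finset.mul_sum]; congr 1; ext i; ring
      rw [e, ← ih 0]; push_cast; ring
    | succ k =>
      simp only [pb_cons_succ]
      have e : ∑ i ∈ range M.length,
            (1 - M.getD i 0) * ((1 - p) * pb (M.eraseIdx i) (k+1) + p * pb (M.eraseIdx i) k)
          = (1-p) * (∑ i ∈ range M.length, (1 - M.getD i 0) * pb (M.eraseIdx i) (k+1))
            + p * (∑ i ∈ range M.length, (1 - M.getD i 0) * pb (M.eraseIdx i) k) := by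
        rw [Finset.mul_sum, Finset.mul_sum, ← Finset.sum_add_distrib]; congr 1; ext i; ring
      rw [e, ← ih (k+1), ← ih k]
      push_cast; ring

lemma perm_getD_eraseIdx : ∀ (L : List ℝ) (i : ℕ), i < L.length →
    L.Perm (L.getD i 0 :: L.eraseIdx i) := by
  intro L
  induction L with
  | nil => intro i hi; simp at hi
  | cons p M ih =>
    intro i hi
    cases i with
    | zero => simp
    | succ i =>
      simp only [List.length_cons, Nat.succ_lt_succ_iff] at hi
      simp only [List.getD_cons_succ, List.eraseIdx_cons_succ]
      exact ((ih i hi).cons p).trans (List.Perm.swap (M.getD i 0) p (M.eraseIdx i))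

lemma pb_perm {L L' : List ℝ} (h : L.Perm L') : pb L = pb L' := by
  induction h with
  | nil => rfl
  | cons x _ ih =>
    funext k
    cases k with
    | zero => rw [pb_cons_zero, pb_cons_zero, ih]
    | succ k => rw [pb_cons_succ, pb_cons_succ, ih]
  | swap x y M =>
    funext k
    match k with
    | 0 => simp only [pb_cons_zero]; ring
    | 1 => simp only [pb_cons_succ, pb_cons_zero]; ring
    | (k+2) => simp only [pb_cons_succ]; ring
  | trans _ _ ih1 ih2 => rw [ih1, ih2]

lemma sum_getD (L : List ℝ) : ∑ i ∈ range L.length, L.getD i 0 = L.sum := by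
  induction L with
  | nil => simp
  | cons p M ih =>
    rw [List.length_cons, Finset.sum_range_succ' _ M.length]
    simp only [List.getD_cons_succ, List.getD_cons_zero]
    rw [ih, List.sum_cons]; ring

/-- Darroch I : if μ ≥ k+1 then a_k < a_{k+1}. -/
lemma darroch_I : ∀ (n : ℕ) (L : List ℝ), L.length = n →
    (∀ p ∈ L, 0 < p ∧ p < 1) → ∀ k : ℕ, ((k:ℝ) + 1) ≤ L.sum → pb L k < pb L (k+1) := by
  intro n
  induction n using Nat.strong_induction_on with
  | _ n ih =>
    intro L hlen hL k hsum
    have hlpos : 0 < L.length := by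
      rcases L with _ | ⟨p, M⟩
      · exfalso; simp only [List.sum_nil] at hsum
        have : (0:ℝ) ≤ (k:ℝ) := Nat.cast_nonneg k
        linarith
      · simp
    have claim : ∀ i ∈ range L.length, pb L k < pb (L.eraseIdx i) k := by
      intro i hi
      rw [Finset.mem_range] at hi
      have hq : 0 < L.getD i 0 ∧ L.getD i 0 < 1 := by
        have : L.getD i 0 ∈ L := by
          rw [List.getD_eq_getElem L 0 hi]; exact List.getElem_mem hi
        exact hL _ this
      have hperm := pb_perm (perm_getD_eraseIdx L i hi)
      have hE : ∀ p ∈ L.eraseIdx i, 0 < p ∧ p < 1 :=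
        fun p hp => hL p (List.eraseIdx_subset hp)
      have hsumE : L.getD i 0 + (L.eraseIdx i).sum = L.sum := by
        have h := (perm_getD_eraseIdx L i hi).sum_eq
        rw [List.sum_cons] at h
        linarith [h]
      cases k with
      | zero =>
        rw [hperm, pb_cons_zero]
        have h0 : 0 < pb (L.eraseIdx i) 0 := pb_zero_pos (fun p hp => (hE p hp).2)
        nlinarith [hq.1, hq.2]
      | succ k =>
        have hlenE : (L.eraseIdx i).length = n - 1 := by
          rw [List.length_eraseIdx_of_lt hi, hlen]
        have hrec : pb (L.eraseIdx i) k < pb (L.eraseIdx i) (k+1) := by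
          apply ih (n-1) (by omega) _ hlenE hE
          push_cast at hsum ⊢
          linarith [hq.2]
        rw [hperm, pb_cons_succ]
        nlinarith [hq.1, hq.2]
    have hkey := pb_ident1 L k
    have hstrict : ∑ i ∈ range L.length, L.getD i 0 * pb L k
        < ∑ i ∈ range L.length, L.getD i 0 * pb (L.eraseIdx i) k := by
      apply Finset.sum_lt_sum_of_nonempty
      · exact Finset.nonempty_range_iff.mpr (by omega)
      · intro i hi
        have hq : 0 < L.getD i 0 := by
          rw [Finset.mem_range] at hi
          have : L.getD i 0 ∈ L := by
            rw [List.getD_eq_getElem L 0 hi]; exact List.getElem_mem hi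
          exact (hL _ this).1
        exact (mul_lt_mul_iff_right₀ hq).mpr (claim i hi)
    have hsum2 : ∑ i ∈ range L.length, L.getD i 0 * pb L k = L.sum * pb L k := by
      rw [← Finset.sum_mul, sum_getD]
    have hnn : 0 ≤ pb L k := pb_nonneg (fun p hp => ⟨(hL p hp).1.le, (hL p hp).2.le⟩) k
    have : ((k:ℝ)+1) * pb L k < ((k:ℝ)+1) * pb L (k+1) := by
      rw [hkey]
      calc ((k:ℝ)+1) * pb L k ≤ L.sum * pb L k := by nlinarith
        _ < _ := by rw [← hsum2]; exact hstrict
    have hk1 : (0:ℝ) < (k:ℝ)+1 := by positivity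
    exact lt_of_mul_lt_mul_left this hk1.le

/-- Darroch II : if μ ≤ k < n then a_{k+1} < a_k. -/
lemma darroch_II : ∀ (n : ℕ) (L : List ℝ), L.length = n →
    (∀ p ∈ L, 0 < p ∧ p < 1) → ∀ k : ℕ, k < L.length → L.sum ≤ (k:ℝ) →
    pb L (k+1) < pb L k := by
  intro n
  induction n using Nat.strong_induction_on with
  | _ n ih =>
    intro L hlen hL k hk hsum
    have claim : ∀ i ∈ range L.length, pb L (k+1) < pb (L.eraseIdx i) k := by
      intro i hi
      rw [Finset.mem_range] at hi
      have hq : 0 < L.getD i 0 ∧ L.getD i 0 < 1 := by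
        have : L.getD i 0 ∈ L := by
          rw [List.getD_eq_getElem L 0 hi]; exact List.getElem_mem hi
        exact hL _ this
      have hperm := pb_perm (perm_getD_eraseIdx L i hi)
      have hE : ∀ p ∈ L.eraseIdx i, 0 < p ∧ p < 1 :=
        fun p hp => hL p (List.eraseIdx_subset hp)
      have hsumE : L.getD i 0 + (L.eraseIdx i).sum = L.sum := by
        have h := (perm_getD_eraseIdx L i hi).sum_eq
        rw [List.sum_cons] at h
        linarith [h]
      have hlenE : (L.eraseIdx i).length = L.length - 1 := List.length_eraseIdx_of_lt hi
      have hrec : pb (L.eraseIdx i) (k+1) < pb (L.eraseIdx i) k := by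
        rcases lt_or_ge k (L.eraseIdx i).length with hlt | hge
        · apply ih (n-1) (by omega) _ (by omega) hE k hlt
          linarith [hq.1]
        · have hkk : k = (L.eraseIdx i).length := by omega
          rw [hkk]
          have h1 : pb (L.eraseIdx i) ((L.eraseIdx i).length + 1) = 0 :=
            pb_eq_zero_of_length_lt (by omega)
          have h2 : 0 < pb (L.eraseIdx i) (L.eraseIdx i).length :=
            pb_length_pos (fun p hp => (hE p hp).1)
          rw [h1]; exact h2
      rw [hperm, pb_cons_succ]
      nlinarith [hq.1, hq.2]
    have hkey := pb_ident2 L k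
    have hstrict : ∑ i ∈ range L.length, (1 - L.getD i 0) * pb L (k+1)
        < ∑ i ∈ range L.length, (1 - L.getD i 0) * pb (L.eraseIdx i) k := by
      apply Finset.sum_lt_sum_of_nonempty
      · exact Finset.nonempty_range_iff.mpr (by omega)
      · intro i hi
        have hq : L.getD i 0 < 1 := by
          rw [Finset.mem_range] at hi
          have : L.getD i 0 ∈ L := by
            rw [List.getD_eq_getElem L 0 hi]; exact List.getElem_mem hi
          exact (hL _ this).2
        exact (mul_lt_mul_iff_right₀ (by linarith)).mpr (claim i hi)
    have hsum2 : ∑ i ∈ range L.length, (1 - L.getD i 0) * pb L (k+1)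
        = ((L.length:ℝ) - L.sum) * pb L (k+1) := by
      rw [← Finset.sum_mul, Finset.sum_sub_distrib, sum_getD]
      simp
    have hnn : 0 ≤ pb L (k+1) := pb_nonneg (fun p hp => ⟨(hL p hp).1.le, (hL p hp).2.le⟩) _
    have hklt : (k:ℝ) < (L.length:ℝ) := by exact_mod_cast hk
    have : ((L.length:ℝ) - k) * pb L (k+1) < ((L.length:ℝ) - k) * pb L k := by
      rw [hkey]
      calc ((L.length:ℝ) - k) * pb L (k+1) ≤ ((L.length:ℝ) - L.sum) * pb L (k+1) := by nlinarith
        _ < _ := by rw [← hsum2]; exact hstrict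
    exact lt_of_mul_lt_mul_left this (by linarith)

end PBaux

open Finset Filter Polynomial Topology

namespace RootAux

lemma chain_lt (f : ℕ → ℝ) (n : ℕ) (h : ∀ i, i + 1 < n → f i < f (i+1)) :
    ∀ i j, i < j → j < n → f i < f j := by
  intro i j hij hjn
  induction j with
  | zero => omega
  | succ j ih =>
    rcases Nat.lt_or_ge i j with h' | h'
    · exact (ih h' (by omega)).trans (h j (by omega))
    · have hj : i = j := by omega
      subst hj; exact h i (by omega)

lemma tendsto_monomial_mul_exp_atBot (k : ℕ) :
    Tendsto (fun z : ℝ => z^k * Real.exp z) atBot (𝓝 0) := by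
  have h := (Real.tendsto_pow_mul_exp_neg_atTop_nhds_zero k).comp tendsto_neg_atBot_atTop
  have h2 := h.const_mul ((-1:ℝ)^k)
  rw [mul_zero] at h2
  refine h2.congr fun z => ?_
  show (-1:ℝ)^k * ((-z)^k * Real.exp (-(-z))) = z^k * Real.exp z
  rw [neg_neg, ← mul_assoc, ← mul_pow]
  norm_num

lemma tendsto_poly_mul_exp_atBot (P : Polynomial ℝ) :
    Tendsto (fun z : ℝ => P.eval z * Real.exp z) atBot (𝓝 0) := by
  have he : ∀ z:ℝ, P.eval z * Real.exp z
      = ∑ k ∈ range (P.natDegree + 1), P.coeff k * (z^k * Real.exp z) := by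
    intro z
    rw [Polynomial.eval_eq_sum_range, Finset.sum_mul]
    congr 1; ext k; ring
  have h := tendsto_finset_sum (range (P.natDegree+1))
    (fun k _ => (tendsto_monomial_mul_exp_atBot k).const_mul (P.coeff k))
  simp only [mul_zero, Finset.sum_const_zero] at h
  exact h.congr (fun z => (he z).symm)

lemma rolle_atBot_aux (f f' : ℝ → ℝ) (hf : ∀ x, HasDerivAt f (f' x) x) (b z₀ : ℝ)
    (hb : f b = 0) (hlim : Tendsto f atBot (𝓝 0)) (hz : z₀ < b) (hz0 : 0 < f z₀) :
    ∃ c, c < b ∧ f' c = 0 := by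
  have hev : ∀ᶠ z in atBot, f z < f z₀ := hlim.eventually (gt_mem_nhds hz0)
  obtain ⟨w₀, hw₀⟩ := eventually_atBot.mp hev
  set w : ℝ := min w₀ (z₀ - 1) with hw
  have hwz : w < z₀ := lt_of_le_of_lt (min_le_right _ _) (by linarith)
  have hwb : w < b := hwz.trans hz
  have hcont : ContinuousOn f (Set.Icc w b) :=
    fun x _ => (hf x).continuousAt.continuousWithinAt
  obtain ⟨c, hcmem, hcmax⟩ := (isCompact_Icc).exists_isMaxOn
    (Set.nonempty_Icc.mpr hwb.le) hcont
  have hfc : f z₀ ≤ f c := hcmax ⟨hwz.le, hz.le⟩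
  have hfw : f w < f z₀ := hw₀ w (min_le_left _ _)
  have hcw : w < c := by
    rcases lt_or_eq_of_le hcmem.1 with h | h
    · exact h
    · exfalso; rw [← h] at hfc; linarith
  have hcb : c < b := by
    rcases lt_or_eq_of_le hcmem.2 with h | h
    · exact h
    · exfalso; rw [h] at hfc; linarith
  have hloc : IsLocalMax f c := hcmax.isLocalMax (Icc_mem_nhds hcw hcb)
  exact ⟨c, hcb, hloc.hasDerivAt_eq_zero (hf c)⟩

lemma rolle_atBot (f f' : ℝ → ℝ) (hf : ∀ x, HasDerivAt f (f' x) x) (b z₀ : ℝ)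
    (hb : f b = 0) (hlim : Tendsto f atBot (𝓝 0)) (hz : z₀ < b) (hz0 : f z₀ ≠ 0) :
    ∃ c, c < b ∧ f' c = 0 := by
  rcases hz0.lt_or_gt with hneg | hpos
  · have hlim' : Tendsto (fun x => - f x) atBot (𝓝 0) := by
      have := hlim.neg; rwa [neg_zero] at this
    obtain ⟨c, h1, h2⟩ := rolle_atBot_aux (fun x => - f x) (fun x => - f' x)
      (fun x => (hf x).neg) b z₀ (by rw [hb, neg_zero]) hlim' hz
      (by linarith)
    exact ⟨c, h1, by linarith⟩
  · exact rolle_atBot_aux f f' hf b z₀ hb hlim hz hpos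

lemma eq_prod_of_roots (d : ℕ) (S : ℕ → ℝ) (htop : S d = 1)
    (w : ℕ → ℝ) (hinj : ∀ i j, i < d → j < d → w i = w j → i = j)
    (hroots : ∀ i, i < d → ∑ k ∈ range (d+1), S k * (w i)^k = 0) :
    ∀ z : ℝ, ∑ k ∈ range (d+1), S k * z^k = ∏ i ∈ range d, (z - w i) := by
  classical
  set P : Polynomial ℝ := ∑ k ∈ range (d+1), C (S k) * X^k with hP
  have hPeval : ∀ z, P.eval z = ∑ k ∈ range (d+1), S k * z^k := by
    intro z; rw [hP, Polynomial.eval_finset_sum]; simp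
  set G : Polynomial ℝ := ∏ i ∈ range d, (X - C (w i)) with hG
  have hGeval : ∀ z, G.eval z = ∏ i ∈ range d, (z - w i) := by
    intro z; rw [hG, Polynomial.eval_prod]; simp
  have hGmonic : G.Monic := monic_prod_of_monic _ _ fun i _ => monic_X_sub_C _
  have hGdeg : G.natDegree = d := by
    rw [hG, Polynomial.natDegree_prod _ _ fun i _ => X_sub_C_ne_zero _]
    simp [Polynomial.natDegree_X_sub_C]
  have hPdeg : P.natDegree ≤ d := by
    apply Polynomial.natDegree_sum_le_of_forall_le
    intro k hk
    refine (Polynomial.natDegree_C_mul_le _ _).trans ?_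
    simpa using Nat.lt_succ_iff.mp (mem_range.mp hk)
  have hPcoeff : P.coeff d = 1 := by
    rw [hP, Polynomial.finset_sum_coeff]
    simp only [Polynomial.coeff_C_mul, Polynomial.coeff_X_pow]
    rw [Finset.sum_eq_single d]
    · simp [htop]
    · intro k _ hk; simp [Ne.symm hk]
    · intro hd; exact absurd (Finset.self_mem_range_succ d) hd
  have hGcoeff : G.coeff d = 1 := by
    have := hGmonic.coeff_natDegree
    rwa [hGdeg] at this
  have hcd : (P - G).coeff d = 0 := by
    rw [Polynomial.coeff_sub, hPcoeff, hGcoeff, sub_self]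
  have hdeg : (P - G).natDegree ≤ d :=
    le_trans (Polynomial.natDegree_sub_le _ _) (by simp [hPdeg, hGdeg.le])
  have hzero : P - G = 0 := by
    rcases lt_or_eq_of_le hdeg with hlt | heq
    · apply Polynomial.eq_zero_of_natDegree_lt_card_of_eval_eq_zero' (P-G) ((range d).image w)
      · intro x hx
        obtain ⟨i, hi, rfl⟩ := Finset.mem_image.mp hx
        rw [Polynomial.eval_sub, hPeval, hGeval]
        rw [hroots i (mem_range.mp hi)]
        have : ∏ j ∈ range d, (w i - w j) = 0 :=
          Finset.prod_eq_zero hi (sub_self _)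
        rw [this, sub_zero]
      · rwa [Finset.card_image_of_injOn
          (fun a ha b hb hab => hinj a b (mem_range.mp ha) (mem_range.mp hb) hab),
          Finset.card_range]
    · by_contra h0
      have hlc := Polynomial.leadingCoeff_ne_zero.mpr h0
      rw [Polynomial.leadingCoeff, heq, hcd] at hlc
      exact hlc rfl
  intro z
  have := congrArg (Polynomial.eval z) hzero
  rw [Polynomial.eval_sub, Polynomial.eval_zero, sub_eq_zero] at this
  rw [← hPeval, ← hGeval, this]

lemma pow_pred_mul (c : ℝ) (r : ℕ) : c * ((r:ℝ) * c^(r-1)) = (r:ℝ) * c^r := by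
  cases r with
  | zero => simp
  | succ r => rw [Nat.add_sub_cancel, pow_succ]; push_cast; ring

/-- The interlacing step: from a full negative factorization of `B` we get
`len + 1` decreasing negative roots of `Bnext = z B' + (z+r) B`. -/
lemma step (r m len : ℕ) (B Bd Bnext : ℝ → ℝ)
    (hB : ∀ z, HasDerivAt B (Bd z) z)
    (hid : ∀ z, Bnext z = z * Bd z + (z + (r:ℝ)) * B z)
    (y : ℕ → ℝ) (hmono : ∀ i, i + 1 < len → y i < y (i+1)) (hneg : ∀ i, i < len → y i < 0)
    (hfac : ∀ z, B z = z^m * ∏ i ∈ range len, (z - y i)) (hmr : 1 ≤ m + r) :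
    ∃ c : ℕ → ℝ, (∀ i, i + 1 < len + 1 → c i < c (i+1)) ∧ (∀ i, i < len + 1 → c i < 0)
      ∧ (∀ i, i < len + 1 → Bnext (c i) = 0) := by
  classical
  set q : ℕ → ℝ := fun i => if i < len then y i else 0 with hq
  have hqle : ∀ j, q j ≤ 0 := by
    intro j; rw [hq]; dsimp only
    split
    · exact (hneg j (by assumption)).le
    · exact le_refl 0
  have hqmono : ∀ i, i + 1 < len + 1 → q i < q (i+1) := by
    intro i hi
    have hilen : i < len := by omega
    rw [hq]; dsimp only
    rw [if_pos hilen]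
    by_cases h2 : i + 1 < len
    · rw [if_pos h2]; exact hmono i h2
    · rw [if_neg h2]; exact hneg i hilen
  set h : ℝ → ℝ := fun z => z^r * Real.exp z * B z with hh
  set hd : ℝ → ℝ := fun z =>
    ((r:ℝ) * z^(r-1)) * Real.exp z * B z + z^r * Real.exp z * B z + z^r * Real.exp z * Bd z
    with hhd
  have hD : ∀ z, HasDerivAt h (hd z) z := by
    intro z
    have h1 := ((hasDerivAt_pow r z).mul (Real.hasDerivAt_exp z)).mul (hB z)
    refine h1.congr_deriv ?_
    simp only [hhd, Pi.mul_apply]; ring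
  have hq0 : ∀ i, i < len + 1 → h (q i) = 0 := by
    intro i hi
    rw [hh]; dsimp only
    rw [hq]; dsimp only
    by_cases hil : i < len
    · rw [if_pos hil, hfac]
      have : ∏ j ∈ range len, (y i - y j) = 0 :=
        Finset.prod_eq_zero (mem_range.mpr hil) (sub_self _)
      rw [this]; ring
    · rw [if_neg hil, hfac]
      have h0 : (0:ℝ)^r * Real.exp 0 * (0^m * ∏ i ∈ range len, (0 - y i))
          = 0^(r+m) * (Real.exp 0 * ∏ i ∈ range len, (0 - y i)) := by
        rw [pow_add]; ring
      rw [h0, zero_pow (by omega : r + m ≠ 0), zero_mul]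
  have hroot : ∀ c : ℝ, c ≠ 0 → hd c = 0 → Bnext c = 0 := by
    intro c hc hdc
    rw [hhd] at hdc; dsimp only at hdc
    have hexp : Real.exp c ≠ 0 := (Real.exp_pos c).ne'
    have hinner : (r:ℝ) * c^(r-1) * B c + c^r * B c + c^r * Bd c = 0 := by
      have : Real.exp c * ((r:ℝ) * c^(r-1) * B c + c^r * B c + c^r * Bd c) = 0 := by
        rw [← hdc]; ring
      exact (mul_eq_zero.mp this).resolve_left hexp
    have hkey : c^r * Bnext c = c * ((r:ℝ) * c^(r-1) * B c + c^r * B c + c^r * Bd c) := by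
      rw [hid]
      linear_combination (-(B c)) * pow_pred_mul c r
    rw [hinner, mul_zero] at hkey
    exact (mul_eq_zero.mp hkey).resolve_left (pow_ne_zero r hc)
  have htend : Tendsto h atBot (𝓝 0) := by
    set Pl : Polynomial ℝ := X^(r+m) * ∏ i ∈ range len, (X - C (y i)) with hPl
    have he : ∀ z, h z = Pl.eval z * Real.exp z := by
      intro z
      rw [hh, hPl]; dsimp only
      rw [Polynomial.eval_mul, Polynomial.eval_pow, Polynomial.eval_prod]
      simp only [Polynomial.eval_X, Polynomial.eval_sub, Polynomial.eval_C]
      rw [hfac, pow_add]; ring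
    exact (tendsto_poly_mul_exp_atBot Pl).congr (fun z => (he z).symm)
  -- gap roots
  have hgap : ∀ i, i + 1 < len + 1 → ∃ x, q i < x ∧ x < q (i+1) ∧ Bnext x = 0 := by
    intro i hi
    obtain ⟨c, hcmem, hc0⟩ := exists_hasDerivAt_eq_zero (f := h) (f' := hd)
      (hqmono i hi) (fun x _ => (hD x).continuousAt.continuousWithinAt)
      ((hq0 i (by omega)).trans (hq0 (i+1) hi).symm) (fun x _ => hD x)
    refine ⟨c, hcmem.1, hcmem.2, hroot c ?_ hc0⟩
    have h1 := hcmem.2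
    have h2 := hqle (i+1)
    intro h0
    rw [h0] at h1
    linarith
  -- leftmost root
  have hleft : ∃ x, x < q 0 ∧ Bnext x = 0 := by
    have hz0 : h (q 0 - 1) ≠ 0 := by
      rw [hh]; dsimp only
      have hlt : q 0 - 1 < 0 := by linarith [hqle 0]
      apply mul_ne_zero (mul_ne_zero (pow_ne_zero r hlt.ne) (Real.exp_pos _).ne')
      rw [hfac]
      apply mul_ne_zero (pow_ne_zero m hlt.ne)
      rw [Finset.prod_ne_zero_iff]
      intro i hi
      have hlen0 : 0 < len := lt_of_le_of_lt (Nat.zero_le i) (mem_range.mp hi)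
      have hy0 : q 0 ≤ y i := by
        rw [hq]; dsimp only
        rw [if_pos hlen0]
        rcases Nat.eq_zero_or_pos i with h0 | hpos
        · rw [h0]
        · exact (chain_lt y len hmono 0 i hpos (mem_range.mp hi)).le
      exact sub_ne_zero.mpr (by linarith)
    obtain ⟨c, hcb, hc0⟩ := rolle_atBot h hd hD (q 0) (q 0 - 1)
      (hq0 0 (by omega)) htend (by linarith) hz0
    refine ⟨c, hcb, hroot c ?_ hc0⟩
    intro h0; rw [h0] at hcb; linarith [hqle 0]
  -- assemble
  obtain ⟨cl, hcl1, hcl2⟩ := hleft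
  have hgap' : ∀ i, ∃ x, i + 1 < len + 1 → (q i < x ∧ x < q (i+1) ∧ Bnext x = 0) := by
    intro i
    by_cases hi : i + 1 < len + 1
    · obtain ⟨x, hx⟩ := hgap i hi; exact ⟨x, fun _ => hx⟩
    · exact ⟨0, fun h => absurd h hi⟩
  choose g hg using hgap'
  refine ⟨fun i => Nat.rec cl (fun j _ => g j) i, ?_, ?_, ?_⟩
  · intro i hi
    cases i with
    | zero =>
      show cl < g 0
      exact hcl1.trans (hg 0 hi).1
    | succ i =>
      show g i < g (i+1)
      have h1 := (hg i (by omega)).2.1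
      have h2 := (hg (i+1) (by omega)).1
      exact h1.trans h2
  · intro i hi
    cases i with
    | zero =>
      show cl < 0
      linarith [hqle 0]
    | succ i =>
      show g i < 0
      linarith [(hg i (by omega)).2.1, hqle (i+1)]
  · intro i hi
    cases i with
    | zero => exact hcl2
    | succ i => exact (hg i (by omega)).2.2

end RootAux
namespace Comb
open Finset

/-- generalized count -/
noncomputable def cnt (M k r' : ℕ) : ℕ :=
  Nat.card {𝒜 : Finset (Finset (Fin M)) //
    IsSetPartition 𝒜 ∧ 𝒜.card = k ∧ DistinctBlocks 𝒜 {x | (x : ℕ) < r'}}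

lemma rStirling_eq_cnt (r n k : ℕ) : rStirling r n k = cnt (n + r) (k + r) r := rfl

lemma part_eq_of_mem {M : ℕ} {𝒜 : Finset (Finset (Fin M))} (h : IsSetPartition 𝒜)
    {t₁ t₂ : Finset (Fin M)} (h₁ : t₁ ∈ 𝒜) (h₂ : t₂ ∈ 𝒜) {x : Fin M}
    (hx₁ : x ∈ t₁) (hx₂ : x ∈ t₂) : t₁ = t₂ := by
  obtain ⟨t, -, huniq⟩ := h.2 x
  rw [huniq t₁ ⟨h₁, hx₁⟩, huniq t₂ ⟨h₂, hx₂⟩]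

lemma part_sum_card {M : ℕ} {𝒜 : Finset (Finset (Fin M))} (h : IsSetPartition 𝒜) :
    ∑ t ∈ 𝒜, t.card = M := by
  have huniv : (Finset.univ : Finset (Fin M)) = 𝒜.biUnion id := by
    ext x
    simp only [Finset.mem_biUnion, id]
    constructor
    · intro _
      obtain ⟨t, ⟨ht, hxt⟩, -⟩ := h.2 x
      exact ⟨t, ht, hxt⟩
    · intro _; exact Finset.mem_univ x
  have hcard := congrArg Finset.card huniv
  rw [Finset.card_univ, Fintype.card_fin, Finset.card_biUnion] at hcard
  · exact hcard.symm
  · intro t₁ h₁ t₂ h₂ hne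
    simp only [Function.onFun, id]; rw [Finset.disjoint_left]
    intro x hx₁ hx₂
    exact hne (part_eq_of_mem h h₁ h₂ hx₁ hx₂)

lemma part_card_le {M : ℕ} {𝒜 : Finset (Finset (Fin M))} (h : IsSetPartition 𝒜) :
    𝒜.card ≤ M := by
  have h1 : 𝒜.card = ∑ t ∈ 𝒜, 1 := by simp
  have h2 : ∑ t ∈ 𝒜, 1 ≤ ∑ t ∈ 𝒜, t.card :=
    Finset.sum_le_sum (fun t ht => Finset.card_pos.mpr (h.1 t ht))
  rw [part_sum_card h] at h2
  omega

lemma cnt_eq_zero_of_gt {M k r' : ℕ} (h : M < k) : cnt M k r' = 0 := by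
  rw [cnt, Nat.card_eq_zero]
  left
  constructor
  rintro ⟨𝒜, hP, hcard, -⟩
  have := part_card_le hP
  omega

lemma cnt_zero_eq_zero {M r' : ℕ} (h : 1 ≤ M) : cnt M 0 r' = 0 := by
  rw [cnt, Nat.card_eq_zero]
  left
  constructor
  rintro ⟨𝒜, hP, hcard, -⟩
  rw [Finset.card_eq_zero] at hcard
  have := part_sum_card hP
  rw [hcard] at this
  simp at this
  omega

lemma cnt_eq_zero_of_lt_r {M k r' : ℕ} (hk : k < r') (hr : r' ≤ M) : cnt M k r' = 0 := by
  rw [cnt, Nat.card_eq_zero]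
  left
  constructor
  rintro ⟨𝒜, hP, hcard, hD⟩
  have hf : ∀ i : Fin r', ∃ t, t ∈ 𝒜 ∧ (⟨i.val, lt_of_lt_of_le i.isLt hr⟩ : Fin M) ∈ t :=
    fun i => (hP.2 _).exists
  choose f hf1 hf2 using hf
  have hinj : Function.Injective f := by
    intro i j hij
    by_contra hne
    refine hD ⟨i.val, lt_of_lt_of_le i.isLt hr⟩ i.isLt ⟨j.val, lt_of_lt_of_le j.isLt hr⟩ j.isLt
      ?_ (f i) (hf1 i) ⟨hf2 i, ?_⟩
    · intro hc
      rw [Fin.mk.injEq] at hc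
      exact hne (Fin.ext hc)
    · rw [hij]; exact hf2 j
  have hsub : Finset.univ.image f ⊆ 𝒜 := by
    intro t ht
    obtain ⟨i, -, rfl⟩ := Finset.mem_image.mp ht
    exact hf1 i
  have h2 : (Finset.univ.image f).card = r' := by
    rw [Finset.card_image_of_injective _ hinj, Finset.card_univ, Fintype.card_fin]
  have := Finset.card_le_card hsub
  omega

lemma cnt_diag {M r' : ℕ} : cnt M M r' = 1 := by
  classical
  rw [cnt, Nat.card_eq_one_iff_unique]
  have hsingle : ∀ (𝒜 : Finset (Finset (Fin M))), IsSetPartition 𝒜 → 𝒜.card = M →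
      𝒜 = Finset.univ.image (fun x : Fin M => ({x} : Finset (Fin M))) := by
    intro 𝒜 hP hcard
    have hsum := part_sum_card hP
    have hone : ∀ t ∈ 𝒜, t.card = 1 := by
      have hle : ∀ t ∈ 𝒜, 1 ≤ t.card :=
        fun t ht => Finset.card_pos.mpr (hP.1 t ht)
      have heq : ∑ t ∈ 𝒜, 1 = ∑ t ∈ 𝒜, t.card := by
        rw [hsum]; simp [hcard]
      intro t ht
      exact ((Finset.sum_eq_sum_iff_of_le hle).mp heq t ht).symm
    ext t
    simp only [Finset.mem_image, Finset.mem_univ, true_and]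
    constructor
    · intro ht
      obtain ⟨x, hx⟩ := Finset.card_eq_one.mp (hone t ht)
      exact ⟨x, hx.symm⟩
    · rintro ⟨x, rfl⟩
      obtain ⟨u, ⟨hu, hxu⟩, -⟩ := hP.2 x
      obtain ⟨y, hy⟩ := Finset.card_eq_one.mp (hone u hu)
      rw [hy] at hxu
      rw [Finset.mem_singleton] at hxu
      subst hxu
      rwa [← hy]
  constructor
  · constructor
    rintro ⟨𝒜, hPa, hca, -⟩ ⟨ℬ, hPb, hcb, -⟩
    apply Subtype.ext
    show 𝒜 = ℬ
    rw [hsingle 𝒜 hPa hca, hsingle ℬ hPb hcb]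
  · refine ⟨⟨Finset.univ.image (fun x : Fin M => ({x} : Finset (Fin M))), ?_, ?_, ?_⟩⟩
    · constructor
      · intro t ht
        obtain ⟨x, -, rfl⟩ := Finset.mem_image.mp ht
        exact ⟨x, Finset.mem_singleton_self x⟩
      · intro x
        refine ⟨{x}, ⟨Finset.mem_image_of_mem _ (Finset.mem_univ x),
          Finset.mem_singleton_self x⟩, ?_⟩
        rintro t ⟨ht, hxt⟩
        obtain ⟨y, -, rfl⟩ := Finset.mem_image.mp ht
        rw [Finset.mem_singleton] at hxt
        rw [hxt]
    · rw [Finset.card_image_of_injective _ Finset.singleton_injective,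
        Finset.card_univ, Fintype.card_fin]
    · rintro a _ b _ hne t ht ⟨hat, hbt⟩
      obtain ⟨y, -, rfl⟩ := Finset.mem_image.mp ht
      rw [Finset.mem_singleton] at hat hbt
      exact hne (hat.trans hbt.symm)

end Comb
namespace Comb
open Finset

variable {M : ℕ}

/-- lift a subset of `Fin M` to `Fin (M+1)` -/
def fup (s : Finset (Fin M)) : Finset (Fin (M+1)) :=
  s.map ⟨Fin.castSucc, Fin.castSucc_injective M⟩

/-- restrict a subset of `Fin (M+1)` to `Fin M` -/
noncomputable def fdown (t : Finset (Fin (M+1))) : Finset (Fin M) :=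
  t.preimage Fin.castSucc (Set.injOn_of_injective (Fin.castSucc_injective M))

lemma mem_fup {s : Finset (Fin M)} {x : Fin (M+1)} :
    x ∈ fup s ↔ ∃ y ∈ s, Fin.castSucc y = x := by
  simp [fup]

lemma mem_fup' {s : Finset (Fin M)} {y : Fin M} :
    Fin.castSucc y ∈ fup s ↔ y ∈ s := by
  simp [fup]

lemma mem_fdown {t : Finset (Fin (M+1))} {y : Fin M} :
    y ∈ fdown t ↔ Fin.castSucc y ∈ t := by
  simp [fdown]

lemma last_not_mem_fup (s : Finset (Fin M)) : Fin.last M ∉ fup s := by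
  rw [mem_fup]
  rintro ⟨y, -, hy⟩
  exact absurd (hy ▸ Fin.castSucc_lt_last y) (lt_irrefl _)

lemma fdown_fup (s : Finset (Fin M)) : fdown (fup s) = s := by
  ext y; rw [mem_fdown, mem_fup']

lemma fup_fdown {t : Finset (Fin (M+1))} (h : Fin.last M ∉ t) : fup (fdown t) = t := by
  ext x
  by_cases hx : x = Fin.last M
  · subst hx
    simp only [last_not_mem_fup, false_iff]
    exact h
  · obtain ⟨y, rfl⟩ := Fin.exists_castSucc_eq.mpr hx
    rw [mem_fup', mem_fdown]

lemma fup_injective : Function.Injective (fup (M := M)) :=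
  fun s₁ s₂ h => by rw [← fdown_fup s₁, h, fdown_fup]

lemma fup_nonempty {s : Finset (Fin M)} (h : s.Nonempty) : (fup s).Nonempty := by
  obtain ⟨y, hy⟩ := h
  exact ⟨Fin.castSucc y, mem_fup'.mpr hy⟩

lemma fdown_nonempty {t : Finset (Fin (M+1))} (hne : t.Nonempty) (hl : Fin.last M ∉ t) :
    (fdown t).Nonempty := by
  obtain ⟨x, hx⟩ := hne
  have hxl : x ≠ Fin.last M := fun h => hl (h ▸ hx)
  obtain ⟨y, rfl⟩ := Fin.exists_castSucc_eq.mpr hxl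
  exact ⟨y, mem_fdown.mpr hx⟩

lemma fup_ne_singleton_last (s : Finset (Fin M)) : fup s ≠ {Fin.last M} := by
  intro h
  have := last_not_mem_fup s
  rw [h] at this
  exact this (Finset.mem_singleton_self _)

/-- Pushing down a family of blocks avoiding `last`. -/
lemma down_family (r' : ℕ) (𝒞 : Finset (Finset (Fin (M+1))))
    (hne : ∀ t ∈ 𝒞, t.Nonempty)
    (hlast : ∀ t ∈ 𝒞, Fin.last M ∉ t)
    (hcover : ∀ x : Fin (M+1), x ≠ Fin.last M → ∃! t, t ∈ 𝒞 ∧ x ∈ t)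
    (hD : ∀ a : Fin (M+1), (a:ℕ) < r' → ∀ b : Fin (M+1), (b:ℕ) < r' → a ≠ b →
      ∀ t ∈ 𝒞, ¬(a ∈ t ∧ b ∈ t)) :
    IsSetPartition (𝒞.image fdown) ∧ (𝒞.image fdown).card = 𝒞.card ∧
      DistinctBlocks (𝒞.image fdown) {x | (x:ℕ) < r'} := by
  have hinj : Set.InjOn fdown (𝒞 : Set (Finset (Fin (M+1)))) := by
    intro t₁ h₁ t₂ h₂ h
    rw [← fup_fdown (hlast t₁ h₁), ← fup_fdown (hlast t₂ h₂), h]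
  refine ⟨⟨?_, ?_⟩, Finset.card_image_of_injOn hinj, ?_⟩
  · intro s hs
    obtain ⟨t, ht, rfl⟩ := Finset.mem_image.mp hs
    exact fdown_nonempty (hne t ht) (hlast t ht)
  · intro y
    have hy : Fin.castSucc y ≠ Fin.last M := (Fin.castSucc_lt_last y).ne
    obtain ⟨t, ⟨ht, hyt⟩, huniq⟩ := hcover (Fin.castSucc y) hy
    refine ⟨fdown t, ⟨Finset.mem_image_of_mem _ ht, mem_fdown.mpr hyt⟩, ?_⟩
    rintro s ⟨hs, hys⟩
    obtain ⟨t₀, ht₀, rfl⟩ := Finset.mem_image.mp hs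
    rw [huniq t₀ ⟨ht₀, mem_fdown.mp hys⟩]
  · intro a ha b hb hab s hs ⟨has, hbs⟩
    obtain ⟨t, ht, rfl⟩ := Finset.mem_image.mp hs
    refine hD (Fin.castSucc a) (by simpa using ha) (Fin.castSucc b) (by simpa using hb)
      (fun h => hab (Fin.castSucc_injective M h)) t ht
      ⟨mem_fdown.mp has, mem_fdown.mp hbs⟩

/-- Lifting a partition of `Fin M`, putting `last` into the (possibly empty) block `c`. -/
lemma lift_family (r' : ℕ) (hr : r' ≤ M) (ℬ : Finset (Finset (Fin M)))
    (hP : IsSetPartition ℬ) (hD : DistinctBlocks ℬ {x | (x:ℕ) < r'})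
    (c : Finset (Fin M)) (hc : c = ∅ ∨ c ∈ ℬ) :
    IsSetPartition (insert (insert (Fin.last M) (fup c)) ((ℬ.erase c).image fup)) ∧
    (insert (insert (Fin.last M) (fup c)) ((ℬ.erase c).image fup)).card
        = (ℬ.erase c).card + 1 ∧
    DistinctBlocks (insert (insert (Fin.last M) (fup c)) ((ℬ.erase c).image fup))
        {x | (x:ℕ) < r'} := by
  set b₀ : Finset (Fin (M+1)) := insert (Fin.last M) (fup c) with hb₀
  set 𝒜 : Finset (Finset (Fin (M+1))) := insert b₀ ((ℬ.erase c).image fup) with h𝒜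
  have hfupinj : Set.InjOn fup ((ℬ.erase c : Finset (Finset (Fin M))) : Set (Finset (Fin M))) := fun s₁ _ s₂ _ h => fup_injective h
  have hb₀main : b₀ ∉ (ℬ.erase c).image fup := by
    intro hmem
    obtain ⟨s, -, hs⟩ := Finset.mem_image.mp hmem
    have : Fin.last M ∈ fup s := by rw [hs, hb₀]; exact Finset.mem_insert_self _ _
    exact last_not_mem_fup s this
  have hmem𝒜 : ∀ t, t ∈ 𝒜 ↔ t = b₀ ∨ ∃ s ∈ ℬ.erase c, fup s = t := by
    intro t
    rw [h𝒜, Finset.mem_insert]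
    simp [Finset.mem_image]
  refine ⟨⟨?_, ?_⟩, ?_, ?_⟩
  · -- nonempty blocks
    intro t ht
    rw [hmem𝒜] at ht
    rcases ht with rfl | ⟨s, hs, rfl⟩
    · exact ⟨Fin.last M, Finset.mem_insert_self _ _⟩
    · exact fup_nonempty (hP.1 s (Finset.mem_of_mem_erase hs))
  · -- exists unique block
    intro x
    by_cases hx : x = Fin.last M
    · subst hx
      refine ⟨b₀, ⟨Finset.mem_insert_self _ _, Finset.mem_insert_self _ _⟩, ?_⟩
      rintro t ⟨ht, hlt⟩
      rw [hmem𝒜] at ht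
      rcases ht with rfl | ⟨s, -, rfl⟩
      · rfl
      · exact absurd hlt (last_not_mem_fup s)
    · obtain ⟨y, rfl⟩ := Fin.exists_castSucc_eq.mpr hx
      obtain ⟨s, ⟨hs, hys⟩, huniq⟩ := hP.2 y
      by_cases hsc : s = c
      · -- y's block is c ; its lifted block is b₀
        subst hsc
        refine ⟨b₀, ⟨Finset.mem_insert_self _ _,
          Finset.mem_insert_of_mem (mem_fup'.mpr hys)⟩, ?_⟩
        rintro t ⟨ht, hyt⟩
        rw [hmem𝒜] at ht
        rcases ht with rfl | ⟨s', hs', rfl⟩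
        · rfl
        · exfalso
          have hys' : y ∈ s' := mem_fup'.mp hyt
          have : s' = s := huniq s' ⟨Finset.mem_of_mem_erase hs', hys'⟩
          exact (Finset.ne_of_mem_erase hs') this
      · refine ⟨fup s, ⟨?_, mem_fup'.mpr hys⟩, ?_⟩
        · rw [hmem𝒜]
          exact Or.inr ⟨s, Finset.mem_erase.mpr ⟨hsc, hs⟩, rfl⟩
        · rintro t ⟨ht, hyt⟩
          rw [hmem𝒜] at ht
          rcases ht with rfl | ⟨s', hs', rfl⟩
          · exfalso
            rw [hb₀, Finset.mem_insert] at hyt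
            rcases hyt with h | h
            · exact hx h
            · have hyc : y ∈ c := mem_fup'.mp h
              rcases hc with rfl | hcB
              · exact absurd hyc (Finset.notMem_empty y)
              · exact hsc (huniq c ⟨hcB, hyc⟩).symm
          · rw [huniq s' ⟨Finset.mem_of_mem_erase hs', mem_fup'.mp hyt⟩]
  · -- card
    rw [h𝒜, Finset.card_insert_of_notMem hb₀main, Finset.card_image_of_injOn hfupinj]
  · -- distinct blocks
    intro a ha b hb hab t ht ⟨hat, hbt⟩
    have hal : a ≠ Fin.last M := by
      intro h
      rw [h] at ha
      simp only [Set.mem_setOf_eq, Fin.val_last] at ha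
      omega
    have hbl : b ≠ Fin.last M := by
      intro h
      rw [h] at hb
      simp only [Set.mem_setOf_eq, Fin.val_last] at hb
      omega
    obtain ⟨a', rfl⟩ := Fin.exists_castSucc_eq.mpr hal
    obtain ⟨b', rfl⟩ := Fin.exists_castSucc_eq.mpr hbl
    have ha' : (a' : ℕ) < r' := by simpa using ha
    have hb' : (b' : ℕ) < r' := by simpa using hb
    have hab' : a' ≠ b' := fun h => hab (by rw [h])
    rw [hmem𝒜] at ht
    rcases ht with rfl | ⟨s, hs, rfl⟩
    · rw [hb₀, Finset.mem_insert] at hat hbt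
      rcases hat with h | hat'
      · exact hal h
      rcases hbt with h | hbt'
      · exact hbl h
      rcases hc with rfl | hcB
      · exact absurd (mem_fup'.mp hat') (Finset.notMem_empty a')
      · exact hD a' ha' b' hb' hab' c hcB ⟨mem_fup'.mp hat', mem_fup'.mp hbt'⟩
    · exact hD a' ha' b' hb' hab' s (Finset.mem_of_mem_erase hs)
        ⟨mem_fup'.mp hat, mem_fup'.mp hbt⟩

end Comb
namespace Comb
open Finset

variable {M : ℕ}

/-- the block containing `last` -/
noncomputable def lastBlock (𝒜 : Finset (Finset (Fin (M+1)))) (h : IsSetPartition 𝒜) :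
    Finset (Fin (M+1)) :=
  @Finset.choose _ (fun t => Fin.last M ∈ t) (Classical.decPred _) 𝒜 (h.2 (Fin.last M))

lemma lastBlock_mem {𝒜 : Finset (Finset (Fin (M+1)))} (h : IsSetPartition 𝒜) :
    lastBlock 𝒜 h ∈ 𝒜 :=
  @Finset.choose_mem _ (fun t => Fin.last M ∈ t) (Classical.decPred _) 𝒜 (h.2 (Fin.last M))

lemma lastBlock_last {𝒜 : Finset (Finset (Fin (M+1)))} (h : IsSetPartition 𝒜) :
    Fin.last M ∈ lastBlock 𝒜 h :=
  @Finset.choose_property _ (fun t => Fin.last M ∈ t) (Classical.decPred _) 𝒜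
    (h.2 (Fin.last M))

lemma lastBlock_eq {𝒜 : Finset (Finset (Fin (M+1)))} (h : IsSetPartition 𝒜)
    {t : Finset (Fin (M+1))} (ht : t ∈ 𝒜) (hl : Fin.last M ∈ t) : t = lastBlock 𝒜 h :=
  part_eq_of_mem h ht (lastBlock_mem h) hl (lastBlock_last h)

section Drop1

variable {r' : ℕ} {𝒜 : Finset (Finset (Fin (M+1)))}

lemma drop1_spec (hP : IsSetPartition 𝒜) (hD : DistinctBlocks 𝒜 {x | (x:ℕ) < r'})
    (hs : ({Fin.last M} : Finset (Fin (M+1))) ∈ 𝒜) :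
    IsSetPartition ((𝒜.erase {Fin.last M}).image fdown) ∧
    ((𝒜.erase {Fin.last M}).image fdown).card = 𝒜.card - 1 ∧
    DistinctBlocks ((𝒜.erase {Fin.last M}).image fdown) {x | (x:ℕ) < r'} := by
  have hlast : ∀ t ∈ 𝒜.erase {Fin.last M}, Fin.last M ∉ t := by
    intro t ht hl
    exact (Finset.ne_of_mem_erase ht)
      (part_eq_of_mem hP (Finset.mem_of_mem_erase ht) hs hl (Finset.mem_singleton_self _))
  have h := down_family r' (𝒜.erase {Fin.last M})
    (fun t ht => hP.1 t (Finset.mem_of_mem_erase ht)) hlast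
    (fun x hx => by
      obtain ⟨t, ⟨ht, hxt⟩, huniq⟩ := hP.2 x
      have htne : t ≠ {Fin.last M} := by
        intro h
        rw [h, Finset.mem_singleton] at hxt
        exact hx hxt
      refine ⟨t, ⟨Finset.mem_erase.mpr ⟨htne, ht⟩, hxt⟩, ?_⟩
      rintro s ⟨hs', hxs⟩
      exact huniq s ⟨Finset.mem_of_mem_erase hs', hxs⟩)
    (fun a ha b hb hab t ht => hD a ha b hb hab t (Finset.mem_of_mem_erase ht))
  refine ⟨h.1, ?_, h.2.2⟩
  rw [h.2.1, Finset.card_erase_of_mem hs]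

lemma drop1_recon (hP : IsSetPartition 𝒜)
    (hs : ({Fin.last M} : Finset (Fin (M+1))) ∈ 𝒜) :
    insert {Fin.last M} (((𝒜.erase {Fin.last M}).image fdown).image fup) = 𝒜 := by
  have hlast : ∀ t ∈ 𝒜.erase {Fin.last M}, Fin.last M ∉ t := by
    intro t ht hl
    exact (Finset.ne_of_mem_erase ht)
      (part_eq_of_mem hP (Finset.mem_of_mem_erase ht) hs hl (Finset.mem_singleton_self _))
  rw [Finset.image_image]
  have : ∀ t ∈ 𝒜.erase {Fin.last M}, (fup ∘ fdown) t = t := by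
    intro t ht
    exact fup_fdown (hlast t ht)
  rw [Finset.image_congr (fun t ht => this t ht), Finset.image_id',
    Finset.insert_erase hs]

end Drop1

section Lift1

variable {r' : ℕ} {ℬ : Finset (Finset (Fin M))}

lemma lift1_spec (hr : r' ≤ M) (hP : IsSetPartition ℬ)
    (hD : DistinctBlocks ℬ {x | (x:ℕ) < r'}) :
    IsSetPartition (insert {Fin.last M} (ℬ.image fup)) ∧
    (insert {Fin.last M} (ℬ.image fup)).card = ℬ.card + 1 ∧
    DistinctBlocks (insert {Fin.last M} (ℬ.image fup)) {x | (x:ℕ) < r'} := by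
  have hrw : insert ({Fin.last M} : Finset (Fin (M+1))) (ℬ.image fup)
      = insert (insert (Fin.last M) (fup ∅)) ((ℬ.erase ∅).image fup) := by
    have h1 : fup (∅ : Finset (Fin M)) = ∅ := rfl
    have h2 : ℬ.erase ∅ = ℬ := Finset.erase_eq_of_notMem
      (fun h => by obtain ⟨x, hx⟩ := hP.1 ∅ h; exact Finset.notMem_empty x hx)
    rw [h1, h2]
    simp
  rw [hrw]
  have h := lift_family r' hr ℬ hP hD ∅ (Or.inl rfl)
  refine ⟨h.1, ?_, h.2.2⟩
  rw [h.2.1]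
  congr 1
  exact congrArg Finset.card (Finset.erase_eq_of_notMem
    (fun hc => by obtain ⟨x, hx⟩ := hP.1 ∅ hc; exact Finset.notMem_empty x hx))

lemma lift1_recon (hP : IsSetPartition ℬ) :
    ((insert {Fin.last M} (ℬ.image fup)).erase {Fin.last M}).image fdown = ℬ := by
  rw [Finset.erase_insert (fun h => by
    obtain ⟨s, -, hs⟩ := Finset.mem_image.mp h
    exact fup_ne_singleton_last s hs)]
  rw [Finset.image_image]
  have : ∀ s ∈ ℬ, (fdown ∘ fup) s = s := fun s _ => fdown_fup s
  rw [Finset.image_congr (fun s hs => this s hs), Finset.image_id']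

end Lift1

section Drop2

variable {r' : ℕ} {𝒜 : Finset (Finset (Fin (M+1)))}

lemma drop2_aux (hP : IsSetPartition 𝒜)
    (hns : ({Fin.last M} : Finset (Fin (M+1))) ∉ 𝒜) :
    ((lastBlock 𝒜 hP).erase (Fin.last M)).Nonempty := by
  set b := lastBlock 𝒜 hP with hb
  have hbne : b ≠ {Fin.last M} := fun h => hns (h ▸ lastBlock_mem hP)
  rcases Finset.eq_empty_or_nonempty (b.erase (Fin.last M)) with h | h
  · exfalso
    apply hbne
    apply Finset.eq_singleton_iff_unique_mem.mpr
    refine ⟨lastBlock_last hP, ?_⟩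
    intro x hx
    by_contra hxl
    exact Finset.notMem_empty x (h ▸ Finset.mem_erase.mpr ⟨hxl, hx⟩)
  · exact h

lemma drop2_notmem (hP : IsSetPartition 𝒜)
    (hns : ({Fin.last M} : Finset (Fin (M+1))) ∉ 𝒜) :
    (lastBlock 𝒜 hP).erase (Fin.last M) ∉ 𝒜.erase (lastBlock 𝒜 hP) := by
  set b := lastBlock 𝒜 hP with hb
  intro hmem
  obtain ⟨x, hx⟩ := drop2_aux hP hns
  have hx1 : x ∈ b := Finset.mem_of_mem_erase hx
  have hx2 : x ∈ b.erase (Fin.last M) := hx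
  have := part_eq_of_mem hP (Finset.mem_of_mem_erase hmem) (lastBlock_mem hP) hx2 hx1
  exact (Finset.ne_of_mem_erase hmem) this

lemma drop2_spec (hP : IsSetPartition 𝒜) (hD : DistinctBlocks 𝒜 {x | (x:ℕ) < r'})
    (hns : ({Fin.last M} : Finset (Fin (M+1))) ∉ 𝒜) :
    IsSetPartition ((insert ((lastBlock 𝒜 hP).erase (Fin.last M))
        (𝒜.erase (lastBlock 𝒜 hP))).image fdown) ∧
    ((insert ((lastBlock 𝒜 hP).erase (Fin.last M))
        (𝒜.erase (lastBlock 𝒜 hP))).image fdown).card = 𝒜.card ∧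
    DistinctBlocks ((insert ((lastBlock 𝒜 hP).erase (Fin.last M))
        (𝒜.erase (lastBlock 𝒜 hP))).image fdown) {x | (x:ℕ) < r'} := by
  set b := lastBlock 𝒜 hP with hb
  set 𝒞 := insert (b.erase (Fin.last M)) (𝒜.erase b) with h𝒞
  have hmem𝒞 : ∀ t, t ∈ 𝒞 ↔ t = b.erase (Fin.last M) ∨ (t ∈ 𝒜 ∧ t ≠ b) := by
    intro t
    rw [h𝒞, Finset.mem_insert, Finset.mem_erase]
    tauto
  have hbmem := lastBlock_mem hP
  have hblast := lastBlock_last hP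
  have hlastnot : ∀ t ∈ 𝒞, Fin.last M ∉ t := by
    intro t ht
    rw [hmem𝒞] at ht
    rcases ht with rfl | ⟨ht, hne⟩
    · exact Finset.notMem_erase _ _
    · intro hl
      exact hne (part_eq_of_mem hP ht hbmem hl hblast)
  have hne𝒞 : ∀ t ∈ 𝒞, t.Nonempty := by
    intro t ht
    rw [hmem𝒞] at ht
    rcases ht with rfl | ⟨ht, -⟩
    · exact drop2_aux hP hns
    · exact hP.1 t ht
  have hcover : ∀ x : Fin (M+1), x ≠ Fin.last M → ∃! t, t ∈ 𝒞 ∧ x ∈ t := by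
    intro x hx
    obtain ⟨t, ⟨ht, hxt⟩, huniq⟩ := hP.2 x
    by_cases htb : t = b
    · refine ⟨b.erase (Fin.last M), ⟨(hmem𝒞 _).mpr (Or.inl rfl),
        Finset.mem_erase.mpr ⟨hx, htb ▸ hxt⟩⟩, ?_⟩
      rintro s ⟨hs, hxs⟩
      rw [hmem𝒞] at hs
      rcases hs with rfl | ⟨hs, hsne⟩
      · rfl
      · exact absurd ((huniq s ⟨hs, hxs⟩).trans htb) hsne
    · refine ⟨t, ⟨(hmem𝒞 _).mpr (Or.inr ⟨ht, htb⟩), hxt⟩, ?_⟩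
      rintro s ⟨hs, hxs⟩
      rw [hmem𝒞] at hs
      rcases hs with rfl | ⟨hs, -⟩
      · exact absurd (huniq b ⟨hbmem, Finset.mem_of_mem_erase hxs⟩).symm htb
      · exact huniq s ⟨hs, hxs⟩
  have hD𝒞 : ∀ a : Fin (M+1), (a:ℕ) < r' → ∀ c : Fin (M+1), (c:ℕ) < r' → a ≠ c →
      ∀ t ∈ 𝒞, ¬(a ∈ t ∧ c ∈ t) := by
    intro a ha c hc hac t ht ⟨hat, hct⟩
    rw [hmem𝒞] at ht
    rcases ht with rfl | ⟨ht, -⟩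
    · exact hD a ha c hc hac b hbmem
        ⟨Finset.mem_of_mem_erase hat, Finset.mem_of_mem_erase hct⟩
    · exact hD a ha c hc hac t ht ⟨hat, hct⟩
  have h := down_family r' 𝒞 hne𝒞 hlastnot hcover hD𝒞
  refine ⟨h.1, ?_, h.2.2⟩
  rw [h.2.1, h𝒞, Finset.card_insert_of_notMem (drop2_notmem hP hns),
    Finset.card_erase_of_mem hbmem]
  have : 1 ≤ 𝒜.card := Finset.card_pos.mpr ⟨b, hbmem⟩
  omega

lemma drop2_mark_mem (hP : IsSetPartition 𝒜) :
    fdown ((lastBlock 𝒜 hP).erase (Fin.last M)) ∈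
      (insert ((lastBlock 𝒜 hP).erase (Fin.last M))
        (𝒜.erase (lastBlock 𝒜 hP))).image fdown :=
  Finset.mem_image_of_mem _ (Finset.mem_insert_self _ _)

lemma drop2_recon (hP : IsSetPartition 𝒜)
    (hns : ({Fin.last M} : Finset (Fin (M+1))) ∉ 𝒜) :
    insert (insert (Fin.last M) (fup (fdown ((lastBlock 𝒜 hP).erase (Fin.last M)))))
      (((((insert ((lastBlock 𝒜 hP).erase (Fin.last M)) (𝒜.erase (lastBlock 𝒜 hP))).image
        fdown).erase (fdown ((lastBlock 𝒜 hP).erase (Fin.last M)))).image fup)) = 𝒜 := by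
  set b := lastBlock 𝒜 hP with hb
  have hbmem := lastBlock_mem hP
  have hblast := lastBlock_last hP
  have hlasterase : ∀ t ∈ 𝒜.erase b, Fin.last M ∉ t := by
    intro t ht hl
    exact (Finset.ne_of_mem_erase ht) (part_eq_of_mem hP (Finset.mem_of_mem_erase ht) hbmem hl hblast)
  have h1 : fup (fdown (b.erase (Fin.last M))) = b.erase (Fin.last M) :=
    fup_fdown (Finset.notMem_erase _ _)
  have h2 : insert (Fin.last M) (b.erase (Fin.last M)) = b :=
    Finset.insert_erase hblast
  have h3 : (insert (b.erase (Fin.last M)) (𝒜.erase b)).image fdown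
      = insert (fdown (b.erase (Fin.last M))) ((𝒜.erase b).image fdown) :=
    Finset.image_insert _ _ _
  have h4 : fdown (b.erase (Fin.last M)) ∉ (𝒜.erase b).image fdown := by
    intro hmem
    obtain ⟨t, ht, hteq⟩ := Finset.mem_image.mp hmem
    have : t = b.erase (Fin.last M) := by
      rw [← fup_fdown (hlasterase t ht), hteq, h1]
    rw [this] at ht
    exact drop2_notmem hP hns ht
  have h5 : ((insert (b.erase (Fin.last M)) (𝒜.erase b)).image fdown).erase
      (fdown (b.erase (Fin.last M))) = (𝒜.erase b).image fdown := by
    rw [h3, Finset.erase_insert h4]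
  rw [h5, h1, h2, Finset.image_image]
  have h6 : ∀ t ∈ 𝒜.erase b, (fup ∘ fdown) t = t :=
    fun t ht => fup_fdown (hlasterase t ht)
  rw [Finset.image_congr (fun t ht => h6 t ht), Finset.image_id', Finset.insert_erase hbmem]

end Drop2

section Lift2

variable {r' : ℕ} {ℬ : Finset (Finset (Fin M))}

lemma lift2_spec (hr : r' ≤ M) (hP : IsSetPartition ℬ)
    (hD : DistinctBlocks ℬ {x | (x:ℕ) < r'}) {c : Finset (Fin M)} (hc : c ∈ ℬ) :
    IsSetPartition (insert (insert (Fin.last M) (fup c)) ((ℬ.erase c).image fup)) ∧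
    (insert (insert (Fin.last M) (fup c)) ((ℬ.erase c).image fup)).card = ℬ.card ∧
    DistinctBlocks (insert (insert (Fin.last M) (fup c)) ((ℬ.erase c).image fup))
      {x | (x:ℕ) < r'} := by
  have h := lift_family r' hr ℬ hP hD c (Or.inr hc)
  refine ⟨h.1, ?_, h.2.2⟩
  rw [h.2.1, Finset.card_erase_of_mem hc]
  have : 1 ≤ ℬ.card := Finset.card_pos.mpr ⟨c, hc⟩
  omega

lemma lift2_nolast (hP : IsSetPartition ℬ) {c : Finset (Fin M)} (hc : c ∈ ℬ) :
    ({Fin.last M} : Finset (Fin (M+1))) ∉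
      insert (insert (Fin.last M) (fup c)) ((ℬ.erase c).image fup) := by
  intro hmem
  rw [Finset.mem_insert] at hmem
  rcases hmem with h | h
  · obtain ⟨y, hy⟩ := hP.1 c hc
    have : Fin.castSucc y ∈ insert (Fin.last M) (fup c) :=
      Finset.mem_insert_of_mem (mem_fup'.mpr hy)
    rw [← h, Finset.mem_singleton] at this
    exact (Fin.castSucc_lt_last y).ne this
  · obtain ⟨s, -, hs⟩ := Finset.mem_image.mp h
    exact fup_ne_singleton_last s hs

lemma lift2_recon (hP : IsSetPartition ℬ) {c : Finset (Fin M)} (hc : c ∈ ℬ)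
    (hP' : IsSetPartition (insert (insert (Fin.last M) (fup c)) ((ℬ.erase c).image fup))) :
    lastBlock _ hP' = insert (Fin.last M) (fup c) ∧
    ((insert (insert (Fin.last M) (fup c)) ((ℬ.erase c).image fup)).erase
      (insert (Fin.last M) (fup c))) = (ℬ.erase c).image fup := by
  constructor
  · exact (lastBlock_eq hP' (Finset.mem_insert_self _ _) (Finset.mem_insert_self _ _)).symm
  · apply Finset.erase_insert
    intro hmem
    obtain ⟨s, -, hs⟩ := Finset.mem_image.mp hmem
    have : Fin.last M ∈ fup s := by rw [hs]; exact Finset.mem_insert_self _ _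
    exact last_not_mem_fup s this

lemma lift2_recon2 (hP : IsSetPartition ℬ) {c : Finset (Fin M)} (hc : c ∈ ℬ) :
    (insert (fup c) ((ℬ.erase c).image fup)).image fdown = ℬ ∧
    fdown (fup c) = c := by
  constructor
  · rw [Finset.image_insert, fdown_fup, Finset.image_image]
    have : ∀ s ∈ ℬ.erase c, (fdown ∘ fup) s = s := fun s _ => fdown_fup s
    rw [Finset.image_congr (fun s hs => this s hs), Finset.image_id', Finset.insert_erase hc]
  · exact fdown_fup c

end Lift2

end Comb
namespace Comb
open Finset

theorem cnt_succ (M k r' : ℕ) (hr : r' ≤ M) :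
    cnt (M+1) (k+1) r' = (k+1) * cnt M (k+1) r' + cnt M k r' := by
  classical
  let E : {𝒜 : Finset (Finset (Fin (M+1))) //
      IsSetPartition 𝒜 ∧ 𝒜.card = k+1 ∧ DistinctBlocks 𝒜 {x | (x:ℕ) < r'}} ≃
    {p : Finset (Finset (Fin M)) × Finset (Fin M) //
      (IsSetPartition p.1 ∧ p.1.card = k+1 ∧ DistinctBlocks p.1 {x | (x:ℕ) < r'}) ∧
        p.2 ∈ p.1} ⊕
    {ℬ : Finset (Finset (Fin M)) //
      IsSetPartition ℬ ∧ ℬ.card = k ∧ DistinctBlocks ℬ {x | (x:ℕ) < r'}} :=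
  { toFun := fun A =>
      if hs : ({Fin.last M} : Finset (Fin (M+1))) ∈ A.val then
        Sum.inr ⟨(A.val.erase {Fin.last M}).image fdown, by
          obtain ⟨h1, h2, h3⟩ := drop1_spec A.2.1 A.2.2.2 hs
          refine ⟨h1, ?_, h3⟩
          rw [h2, A.2.2.1]
          omega⟩
      else
        Sum.inl ⟨((insert ((lastBlock A.val A.2.1).erase (Fin.last M))
            (A.val.erase (lastBlock A.val A.2.1))).image fdown,
            fdown ((lastBlock A.val A.2.1).erase (Fin.last M))), by
          obtain ⟨h1, h2, h3⟩ := drop2_spec A.2.1 A.2.2.2 hs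
          exact ⟨⟨h1, by rw [h2, A.2.2.1], h3⟩, drop2_mark_mem A.2.1⟩⟩
    invFun := fun Y =>
      match Y with
      | Sum.inr B => ⟨insert {Fin.last M} (B.val.image fup), by
          obtain ⟨h1, h2, h3⟩ := lift1_spec hr B.2.1 B.2.2.2
          refine ⟨h1, ?_, h3⟩
          rw [h2, B.2.2.1]⟩
      | Sum.inl B => ⟨insert (insert (Fin.last M) (fup B.val.2))
            ((B.val.1.erase B.val.2).image fup), by
          obtain ⟨h1, h2, h3⟩ := lift2_spec hr B.2.1.1 B.2.1.2.2 B.2.2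
          refine ⟨h1, ?_, h3⟩
          rw [h2, B.2.1.2.1]⟩
    left_inv := by
      intro A
      by_cases hs : ({Fin.last M} : Finset (Fin (M+1))) ∈ A.val
      · simp only [dif_pos hs]
        exact Subtype.ext (drop1_recon A.2.1 hs)
      · simp only [dif_neg hs]
        exact Subtype.ext (drop2_recon A.2.1 hs)
    right_inv := by
      rintro (⟨⟨ℬ, c⟩, hB, hc⟩ | ⟨ℬ, hB⟩)
      · have hno := lift2_nolast hB.1 hc
        simp only [dif_neg hno]
        congr 1
        apply Subtype.ext
        have hA : IsSetPartition (insert (insert (Fin.last M) (fup c))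
            ((ℬ.erase c).image fup)) := (lift2_spec hr hB.1 hB.2.2 hc).1
        have hL := (lift2_recon hB.1 hc hA).1
        have hE : (lastBlock _ hA).erase (Fin.last M) = fup c := by
          rw [hL, Finset.erase_insert (last_not_mem_fup c)]
        have hA2 : (insert (insert (Fin.last M) (fup c)) ((ℬ.erase c).image fup)).erase
            (lastBlock _ hA) = (ℬ.erase c).image fup := by
          rw [hL]
          exact (lift2_recon hB.1 hc hA).2
        have h1 := (lift2_recon2 hB.1 hc).1
        have h2 := (lift2_recon2 hB.1 hc).2
        refine Prod.ext ?_ ?_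
        · show (insert ((lastBlock _ _).erase (Fin.last M))
              (Finset.erase _ (lastBlock _ _))).image fdown = ℬ
          rw [hE, hA2]
          exact h1
        · show fdown ((lastBlock _ _).erase (Fin.last M)) = c
          rw [hE]
          exact h2
      · have hs : ({Fin.last M} : Finset (Fin (M+1))) ∈
            insert {Fin.last M} (ℬ.image fup) := Finset.mem_insert_self _ _
        simp only [dif_pos hs]
        congr 1
        exact Subtype.ext (lift1_recon hB.1) }
  have hcnt1 : cnt (M+1) (k+1) r' = Nat.card {𝒜 : Finset (Finset (Fin (M+1))) //
      IsSetPartition 𝒜 ∧ 𝒜.card = k+1 ∧ DistinctBlocks 𝒜 {x | (x:ℕ) < r'}} := rfl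
  rw [hcnt1, Nat.card_congr E, Nat.card_sum]
  congr 1
  · -- sigma count
    let E2 : {p : Finset (Finset (Fin M)) × Finset (Fin M) //
        (IsSetPartition p.1 ∧ p.1.card = k+1 ∧ DistinctBlocks p.1 {x | (x:ℕ) < r'}) ∧
          p.2 ∈ p.1} ≃
      (Σ ℬ : {ℬ : Finset (Finset (Fin M)) //
          IsSetPartition ℬ ∧ ℬ.card = k+1 ∧ DistinctBlocks ℬ {x | (x:ℕ) < r'}},
        {c : Finset (Fin M) // c ∈ ℬ.val}) :=
    { toFun := fun p => ⟨⟨p.val.1, p.2.1⟩, ⟨p.val.2, p.2.2⟩⟩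
      invFun := fun s => ⟨(s.1.val, s.2.val), ⟨s.1.2, s.2.2⟩⟩
      left_inv := fun p => rfl
      right_inv := fun s => rfl }
    rw [Nat.card_congr E2]
    letI : Fintype {ℬ : Finset (Finset (Fin M)) //
        IsSetPartition ℬ ∧ ℬ.card = k+1 ∧ DistinctBlocks ℬ {x | (x:ℕ) < r'}} :=
      Fintype.ofFinite _
    rw [Nat.card_eq_fintype_card, Fintype.card_sigma]
    have hfib : ∀ ℬ : {ℬ : Finset (Finset (Fin M)) //
        IsSetPartition ℬ ∧ ℬ.card = k+1 ∧ DistinctBlocks ℬ {x | (x:ℕ) < r'}},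
        Fintype.card {c : Finset (Fin M) // c ∈ ℬ.val} = k+1 := by
      intro ℬ
      rw [Fintype.card_coe]
      exact ℬ.2.2.1
    rw [Finset.sum_congr rfl (fun ℬ _ => hfib ℬ), Finset.sum_const, Finset.card_univ,
      smul_eq_mul]
    have hc2 : cnt M (k+1) r' = Nat.card {ℬ : Finset (Finset (Fin M)) //
        IsSetPartition ℬ ∧ ℬ.card = k+1 ∧ DistinctBlocks ℬ {x | (x:ℕ) < r'}} := rfl
    rw [hc2, Nat.card_eq_fintype_card]
    ring

theorem rStirling_zero_zero (r : ℕ) : rStirling r 0 0 = 1 := by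
  rw [rStirling_eq_cnt, Nat.zero_add]
  exact cnt_diag

theorem rStirling_of_lt {r n k : ℕ} (h : n < k) : rStirling r n k = 0 := by
  rw [rStirling_eq_cnt]
  exact cnt_eq_zero_of_gt (by omega)

theorem rStirling_succ_succ (r n k : ℕ) :
    rStirling r (n+1) (k+1) = (k+1+r) * rStirling r n (k+1) + rStirling r n k := by
  have h := cnt_succ (n+r) (k+r) r (by omega)
  rw [rStirling_eq_cnt r (n+1) (k+1), rStirling_eq_cnt r n (k+1), rStirling_eq_cnt r n k]
  rw [show n+1+r = (n+r)+1 from by omega, show k+1+r = (k+r)+1 from by omega]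
  exact h

theorem rStirling_succ_zero (r n : ℕ) : rStirling r (n+1) 0 = r * rStirling r n 0 := by
  rw [rStirling_eq_cnt r (n+1) 0, rStirling_eq_cnt r n 0]
  cases r with
  | zero =>
    rw [Nat.add_zero, Nat.add_zero, Nat.zero_add]
    rw [cnt_zero_eq_zero (by omega)]
    exact (Nat.zero_mul _).symm
  | succ r'' =>
    rw [show n+1+(r''+1) = (n+(r''+1))+1 from by omega, Nat.zero_add]
    have h := cnt_succ (n+(r''+1)) r'' (r''+1) (by omega)
    rw [h, cnt_eq_zero_of_lt_r (Nat.lt_succ_self r'')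
      (by omega : r''+1 ≤ n+(r''+1)), Nat.add_zero]

end Comb
namespace Comb

theorem rStirling_diag (r n : ℕ) : rStirling r n n = 1 := by
  induction n with
  | zero => exact rStirling_zero_zero r
  | succ n ih =>
    rw [rStirling_succ_succ, rStirling_of_lt (Nat.lt_succ_self n), ih, mul_zero, zero_add]

end Comb
namespace Main
open Comb PBaux RootAux Polynomial

/-- derivative of the r-Bell polynomial -/
noncomputable def rBellD (r n : ℕ) (z : ℝ) : ℝ :=
  ∑ k ∈ range n, ((k:ℝ)+1) * (rStirling r n (k+1) : ℝ) * z^k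

lemma hasDerivAt_rBell (r n : ℕ) (z : ℝ) : HasDerivAt (rBell r n) (rBellD r n z) z := by
  have h : HasDerivAt (rBell r n)
      (∑ k ∈ range (n+1), (rStirling r n k : ℝ) * ((k:ℝ) * z^(k-1))) z := by
    apply HasDerivAt.fun_sum
    intro k _
    exact (hasDerivAt_pow k z).const_mul _
  convert h using 1
  rw [Finset.sum_range_succ' (fun k => (rStirling r n k : ℝ) * ((k:ℝ) * z^(k-1))) n]
  simp only [Nat.cast_zero, zero_mul, mul_zero, add_zero, Nat.cast_add, Nat.cast_one,
    Nat.add_sub_cancel]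
  rw [rBellD]
  congr 1
  ext k
  ring

lemma rBell_rec (r n : ℕ) (z : ℝ) :
    rBell r (n+1) z = z * rBellD r n z + (z + (r:ℝ)) * rBell r n z := by
  have e1 : rBell r (n+1) z
      = ∑ k ∈ range (n+1), (((k:ℝ)+1+r) * (rStirling r n (k+1) : ℝ)
          + (rStirling r n k : ℝ)) * z^(k+1) + (r:ℝ) * (rStirling r n 0 : ℝ) := by
    rw [rBell, Finset.sum_range_succ' _ (n+1)]
    rw [rStirling_succ_zero]
    push_cast
    congr 1
    · congr 1; ext k
      rw [rStirling_succ_succ]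
      push_cast
      ring
    · ring
  have e2 : z * rBellD r n z
      = ∑ k ∈ range (n+1), ((k:ℝ)+1) * (rStirling r n (k+1) : ℝ) * z^(k+1) := by
    rw [rBellD, Finset.mul_sum, Finset.sum_range_succ,
      rStirling_of_lt (Nat.lt_succ_self n)]
    simp only [Nat.cast_zero, mul_zero, zero_mul, add_zero]
    congr 1; ext k; ring
  have e3 : (z + (r:ℝ)) * rBell r n z
      = ∑ k ∈ range (n+1), (rStirling r n k : ℝ) * z^(k+1)
        + ((∑ k ∈ range (n+1), (r:ℝ) * (rStirling r n (k+1) : ℝ) * z^(k+1))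
            + (r:ℝ) * (rStirling r n 0 : ℝ)) := by
    have h4 : (r:ℝ) * rBell r n z
        = (∑ k ∈ range (n+1), (r:ℝ) * (rStirling r n (k+1) : ℝ) * z^(k+1))
            + (r:ℝ) * (rStirling r n 0 : ℝ) := by
      rw [rBell, Finset.mul_sum, Finset.sum_range_succ' _ n]
      rw [Finset.sum_range_succ, rStirling_of_lt (Nat.lt_succ_self n)]
      simp only [Nat.cast_zero, mul_zero, zero_mul, add_zero, pow_zero, mul_one]
      congr 1
      congr 1; ext k; ring
    have h5 : z * rBell r n z = ∑ k ∈ range (n+1), (rStirling r n k : ℝ) * z^(k+1) := by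
      rw [rBell, Finset.mul_sum]
      congr 1; ext k; ring
    rw [add_mul, h5, h4]
  have e5 : ∑ k ∈ range (n+1), (((k:ℝ)+1+r) * (rStirling r n (k+1) : ℝ)
          + (rStirling r n k : ℝ)) * z^(k+1)
      = ∑ k ∈ range (n+1), (((k:ℝ)+1) * (rStirling r n (k+1) : ℝ) * z^(k+1)
          + ((rStirling r n k : ℝ) * z^(k+1)
            + (r:ℝ) * (rStirling r n (k+1) : ℝ) * z^(k+1))) := by
    apply Finset.sum_congr rfl
    intro k _
    ring
  rw [e1, e2, e3, e5, Finset.sum_add_distrib, Finset.sum_add_distrib]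
  ring

/-- multiplicity of the root 0 -/
def mval (r n : ℕ) : ℕ := if r = 0 ∧ n ≠ 0 then 1 else 0

lemma mval_le (r n : ℕ) : mval r n ≤ n := by
  rw [mval]; split
  · omega
  · omega

lemma rBell_roots (r n : ℕ) : ∃ y : ℕ → ℝ,
    (∀ i, i+1 < n - mval r n → y i < y (i+1)) ∧ (∀ i, i < n - mval r n → y i < 0) ∧
    ∀ z, rBell r n z = z ^ (mval r n) * ∏ i ∈ range (n - mval r n), (z - y i) := by
  induction n with
  | zero =>
    refine ⟨fun _ => 0, by omega, by omega, ?_⟩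
    intro z
    simp [rBell, mval, rStirling_zero_zero]
  | succ n ih =>
    obtain ⟨y, hmono, hneg, hfac⟩ := ih
    have hrBell0 : r = 0 → rBell r (n+1) 0 = 0 := by
      intro hr0
      have he : rBell r (n+1) 0 = (rStirling r (n+1) 0 : ℝ) := by
        rw [rBell, Finset.sum_eq_single 0]
        · simp
        · intro k _ hk
          rcases Nat.exists_eq_succ_of_ne_zero hk with ⟨k', rfl⟩
          simp [zero_pow]
        · intro h; simp at h
      rw [he, rStirling_succ_zero, hr0]
      simp
    have htop : (rStirling r (n+1) (n+1) : ℝ) = 1 := by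
      rw [rStirling_diag]; norm_num
    by_cases hr : r = 0
    · by_cases hn : n = 0
      · -- B_1(z;0) = z
        subst hr; subst hn
        have hm1 : mval 0 1 = 1 := by simp [mval]
        refine ⟨fun _ => 0, ?_, ?_, ?_⟩
        · intro i hi; rw [hm1] at hi; omega
        · intro i hi; rw [hm1] at hi; omega
        · intro z
          have h1 : rStirling 0 1 0 = 0 := by
            rw [rStirling_succ_zero]; exact Nat.zero_mul _
          have h2 : rStirling 0 1 1 = 1 := rStirling_diag 0 1
          rw [hm1]
          simp [rBell, h1, h2, Finset.sum_range_succ]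
      · -- r = 0, n ≥ 1 : mval r n = 1, mval r (n+1) = 1
        have hmn : mval r n = 1 := by simp [mval, hr, hn]
        have hmn' : mval r (n+1) = 1 := by simp [mval, hr]
        rw [hmn] at hmono hneg hfac
        obtain ⟨c, hcmono, hcneg, hcroot⟩ := step r 1 (n - 1)
          (rBell r n) (rBellD r n) (rBell r (n+1))
          (fun z => hasDerivAt_rBell r n z) (fun z => rBell_rec r n z)
          y hmono hneg hfac (by omega)
        -- n - 1 + 1 = n negative roots, plus the root 0
        set w : ℕ → ℝ := fun i => if i < n then c i else 0 with hw
        have hcn : n - 1 + 1 = n := by omega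
        rw [hcn] at hcmono hcneg hcroot
        have hwinj : ∀ i j, i < n + 1 → j < n + 1 → w i = w j → i = j := by
          intro i j hi hj hij
          rw [hw] at hij; dsimp only at hij
          by_contra hne
          rcases Nat.lt_or_ge i n with h1 | h1 <;> rcases Nat.lt_or_ge j n with h2 | h2
          · rw [if_pos h1, if_pos h2] at hij
            rcases Nat.lt_or_ge i j with h3 | h3
            · have := chain_lt c n hcmono i j h3 h2; linarith
            · have := chain_lt c n hcmono j i (by omega) h1; linarith
          · rw [if_pos h1, if_neg (by omega)] at hij
            have := hcneg i h1; linarith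
          · rw [if_neg (by omega), if_pos h2] at hij
            have := hcneg j h2; linarith
          · omega
        have hwroot : ∀ i, i < n + 1 → rBell r (n+1) (w i) = 0 := by
          intro i hi
          rw [hw]; dsimp only
          by_cases h1 : i < n
          · rw [if_pos h1]; exact hcroot i h1
          · rw [if_neg h1]; exact hrBell0 hr
        have hprod := eq_prod_of_roots (n+1) (fun k => (rStirling r (n+1) k : ℝ)) htop
          w hwinj (fun i hi => by rw [← rBell]; exact hwroot i hi)
        refine ⟨c, ?_, ?_, ?_⟩
        · intro i hi; exact hcmono i (by omega)
        · intro i hi; exact hcneg i (by omega)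
        · intro z
          have hz := hprod z
          rw [← rBell] at hz
          rw [hz, hmn', Finset.prod_range_succ]
          have he1 : ∏ i ∈ range n, (z - w i) = ∏ i ∈ range (n + 1 - 1), (z - c i) := by
            rw [Nat.add_sub_cancel]
            apply Finset.prod_congr rfl
            intro i hi
            rw [Finset.mem_range] at hi
            rw [hw]; dsimp only
            rw [if_pos hi]
          rw [he1]
          have : w n = 0 := by rw [hw]; dsimp only; rw [if_neg (by omega)]
          rw [this]
          ring
    · -- r ≠ 0 : mval r n = 0, mval r (n+1) = 0
      have hmn : mval r n = 0 := by simp [mval, hr]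
      have hmn' : mval r (n+1) = 0 := by simp [mval, hr]
      rw [hmn] at hmono hneg hfac
      obtain ⟨c, hcmono, hcneg, hcroot⟩ := step r 0 (n - 0)
        (rBell r n) (rBellD r n) (rBell r (n+1))
        (fun z => hasDerivAt_rBell r n z) (fun z => rBell_rec r n z)
        y (by simpa using hmono) (by simpa using hneg) (by simpa using hfac) (by omega)
      rw [show n - 0 + 1 = n + 1 by omega] at hcmono hcneg hcroot
      have hcinj : ∀ i j, i < n + 1 → j < n + 1 → c i = c j → i = j := by
        intro i j hi hj hij
        by_contra hne
        rcases Nat.lt_or_ge i j with h3 | h3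
        · have := chain_lt c (n+1) hcmono i j h3 hj; linarith
        · have := chain_lt c (n+1) hcmono j i (by omega) hi; linarith
      have hprod := eq_prod_of_roots (n+1) (fun k => (rStirling r (n+1) k : ℝ)) htop
        c hcinj (fun i hi => by rw [← rBell]; exact hcroot i hi)
      refine ⟨c, ?_, ?_, ?_⟩
      · intro i hi; exact hcmono i (by omega)
      · intro i hi; exact hcneg i (by omega)
      · intro z
        have hz := hprod z
        rw [← rBell] at hz
        rw [hz, hmn']
        rw [show n + 1 - 0 = n + 1 by omega, pow_zero, one_mul]

end Main
namespace Main
open Comb PBaux RootAux Polynomial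

lemma list_range_prod (len : ℕ) (g : ℕ → ℝ) :
    ((List.range len).map g).prod = ∏ i ∈ range len, g i := by
  induction len with
  | zero => simp
  | succ n ih =>
    rw [List.range_succ, List.map_append, List.prod_append, Finset.prod_range_succ, ih]
    simp

lemma list_range_sum (len : ℕ) (g : ℕ → ℝ) :
    ((List.range len).map g).sum = ∑ i ∈ range len, g i := by
  induction len with
  | zero => simp
  | succ n ih =>
    rw [List.range_succ, List.map_append, List.sum_append, Finset.sum_range_succ, ih]
    simp

lemma pb_coeff (L : List ℝ) (k : ℕ) :
    ((L.map fun p => C (1-p) + C p * X).prod).coeff k = pb L k := by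
  induction L generalizing k with
  | nil =>
    cases k with
    | zero => simp
    | succ k => simp [Polynomial.coeff_one, Nat.succ_ne_zero]
  | cons p M ih =>
    rw [List.map_cons, List.prod_cons, add_mul, mul_assoc]
    cases k with
    | zero =>
      rw [Polynomial.coeff_add, Polynomial.coeff_C_mul, Polynomial.coeff_C_mul,
        Polynomial.mul_coeff_zero, Polynomial.coeff_X_zero, pb_cons_zero, ih]
      ring
    | succ k =>
      rw [Polynomial.coeff_add, Polynomial.coeff_C_mul, Polynomial.coeff_C_mul,
        Polynomial.coeff_X_mul, pb_cons_succ, ih, ih]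

lemma coeff_sum_monomials (N : ℕ) (S : ℕ → ℝ) (k : ℕ) (hk : k < N) :
    (∑ j ∈ range N, C (S j) * X^j).coeff k = S k := by
  rw [Polynomial.finset_sum_coeff]
  simp only [Polynomial.coeff_C_mul, Polynomial.coeff_X_pow]
  rw [Finset.sum_eq_single k]
  · simp
  · intro j _ hj; simp [Ne.symm hj]
  · intro h; exact absurd (Finset.mem_range.mpr hk) h

/-- The master bridge lemma. -/
lemma key (r n : ℕ) : ∃ (m : ℕ) (L : List ℝ) (C₀ : ℝ),
    m ≤ n ∧ L.length = n - m ∧ (∀ p ∈ L, 0 < p ∧ p < 1) ∧ 0 < C₀ ∧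
    (∀ k, k ≤ n → (rStirling r n k : ℝ) = C₀ * (if m ≤ k then pb L (k - m) else 0)) ∧
    rBell r n 1 = C₀ ∧
    rBell r (n+1) 1 = C₀ * ((m : ℝ) + L.sum + (1 + (r:ℝ))) := by
  classical
  obtain ⟨y, hmono, hneg, hfac⟩ := rBell_roots r n
  set m := mval r n with hm
  set len := n - m with hlen
  set g : ℕ → ℝ := fun i => 1/(1 - y i) with hg
  set L : List ℝ := (List.range len).map g with hL
  set C₀ : ℝ := ∏ i ∈ range len, (1 - y i) with hC₀
  have hy1 : ∀ i ∈ range len, 1 < 1 - y i := by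
    intro i hi
    have := hneg i (Finset.mem_range.mp hi)
    linarith
  have hC₀pos : 0 < C₀ := Finset.prod_pos (fun i hi => lt_trans one_pos (hy1 i hi))
  have hLlen : L.length = len := by rw [hL]; simp
  have hLmem : ∀ p ∈ L, 0 < p ∧ p < 1 := by
    intro p hp
    rw [hL, List.mem_map] at hp
    obtain ⟨i, hi, rfl⟩ := hp
    rw [List.mem_range] at hi
    have h1 := hy1 i (Finset.mem_range.mpr hi)
    constructor
    · rw [hg]; positivity
    · rw [hg]
      rw [div_lt_one (by linarith)]
      linarith
  -- factored form with normalized factors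
  have hfac2 : ∀ z, rBell r n z
      = z^m * (C₀ * ∏ i ∈ range len, ((1 - g i) + g i * z)) := by
    intro z
    rw [hfac z]
    congr 1
    rw [← Finset.prod_mul_distrib]
    apply Finset.prod_congr rfl
    intro i hi
    have h1 := hy1 i hi
    have hne : (1:ℝ) - y i ≠ 0 := by linarith
    rw [hg]
    field_simp
    ring
  -- polynomial identity
  set P₁ : Polynomial ℝ := ∑ k ∈ range (n+1), C ((rStirling r n k : ℝ)) * X^k with hP₁
  set P₂ : Polynomial ℝ := C C₀ * ((L.map fun p => C (1-p) + C p * X).prod * X^m) with hP₂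
  have hP₁eval : ∀ z, P₁.eval z = rBell r n z := by
    intro z
    rw [hP₁, Polynomial.eval_finset_sum, rBell]
    simp
  have hP₂eval : ∀ z, P₂.eval z = rBell r n z := by
    intro z
    have hlist : (List.map (Polynomial.eval z) (L.map fun p => C (1-p) + C p * X)).prod
        = ∏ i ∈ range len, ((1 - g i) + g i * z) := by
      rw [hL, List.map_map, List.map_map, list_range_prod]
      apply Finset.prod_congr rfl
      intro i _
      simp [Function.comp]
    rw [hP₂]
    rw [Polynomial.eval_mul, Polynomial.eval_mul, Polynomial.eval_C, Polynomial.eval_pow,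
      Polynomial.eval_X, Polynomial.eval_list_prod, hlist, hfac2 z]
    ring
  have hPP : P₁ = P₂ := Polynomial.funext (fun z => by rw [hP₁eval, hP₂eval])
  have hbridge : ∀ k, k ≤ n →
      (rStirling r n k : ℝ) = C₀ * (if m ≤ k then pb L (k - m) else 0) := by
    intro k hk
    have h1 : P₁.coeff k = (rStirling r n k : ℝ) :=
      coeff_sum_monomials (n+1) _ k (by omega)
    have h2 : P₂.coeff k = C₀ * (if m ≤ k then pb L (k - m) else 0) := by
      rw [hP₂, Polynomial.coeff_C_mul, Polynomial.coeff_mul_X_pow']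
      congr 1
      split
      · rw [pb_coeff]
      · rfl
    rw [← h1, hPP, h2]
  -- value at 1
  have hB1 : rBell r n 1 = C₀ := by
    rw [hfac2 1, one_pow, one_mul]
    have : ∏ i ∈ range len, ((1 - g i) + g i * 1) = 1 :=
      Finset.prod_eq_one (fun i _ => by ring)
    rw [this, mul_one]
  -- mean identity
  have hmean : ∑ k ∈ range (n+1), (k:ℝ) * (rStirling r n k : ℝ)
      = C₀ * ((m:ℝ) + L.sum) := by
    have hmn : m ≤ n := mval_le r n
    have e1 : ∀ k ∈ range (n+1), (k:ℝ) * (rStirling r n k : ℝ)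
        = C₀ * ((k:ℝ) * (if m ≤ k then pb L (k - m) else 0)) := by
      intro k hk
      rw [Finset.mem_range] at hk
      rw [hbridge k (by omega)]
      ring
    rw [Finset.sum_congr rfl e1, ← Finset.mul_sum]
    congr 1
    rw [Finset.range_eq_Ico, ← Finset.sum_Ico_consecutive _ (Nat.zero_le m) (by omega : m ≤ n+1)]
    have e2 : ∑ k ∈ Finset.Ico 0 m, (k:ℝ) * (if m ≤ k then pb L (k - m) else 0) = 0 := by
      apply Finset.sum_eq_zero
      intro k hk
      rw [Finset.mem_Ico] at hk
      rw [if_neg (by omega)]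
      ring
    rw [e2, zero_add, Finset.sum_Ico_eq_sum_range]
    have e3 : ∀ j ∈ range (n+1-m), ((m+j:ℕ):ℝ) * (if m ≤ m + j then pb L (m + j - m) else 0)
        = (m:ℝ) * pb L j + (j:ℝ) * pb L j := by
      intro j _
      rw [if_pos (by omega), Nat.add_sub_cancel_left]
      push_cast
      ring
    rw [Finset.sum_congr rfl e3, Finset.sum_add_distrib]
    have hn1m : n + 1 - m = len + 1 := by omega
    rw [hn1m, ← Finset.mul_sum]
    have hs := pb_sum L
    have hmu := pb_mean L
    rw [hLlen] at hs hmu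
    rw [hs, hmu]
    ring
  -- value of B_{n+1} at 1
  have hB2 : rBell r (n+1) 1 = C₀ * ((m : ℝ) + L.sum + (1 + (r:ℝ))) := by
    rw [rBell_rec r n 1, one_mul, hB1]
    have hD1 : rBellD r n 1 = ∑ k ∈ range (n+1), (k:ℝ) * (rStirling r n k : ℝ) := by
      rw [rBellD, Finset.sum_range_succ' (fun k => (k:ℝ) * (rStirling r n k : ℝ)) n]
      simp only [Nat.cast_zero, zero_mul, add_zero, one_pow, mul_one, Nat.cast_add, Nat.cast_one]
    rw [hD1, hmean]
    ring
  exact ⟨m, L, C₀, mval_le r n, hLlen.trans rfl, hLmem, hC₀pos, hbridge, hB1, hB2⟩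

end Main

/-- the greatest maximizing index $K$ of $k \mapsto {n+r \brace k+r}_r$
satisfies $|K - (B_{n+1}(1;r)/B_n(1;r) - (r+1))| < 1$. -/
theorem rStirling_max_index_bound (n r K : ℕ) (hK : K ≤ n)
    (hmax : ∀ j ≤ n, rStirling r n j ≤ rStirling r n K)
    (hgreatest : ∀ j ≤ n, rStirling r n j = rStirling r n K → j ≤ K) :
    |(K : ℝ) - (rBell r (n + 1) 1 / rBell r n 1 - (r + 1))| < 1 := by
  classical
  obtain ⟨m, L, C₀, hmn, hLlen, hLmem, hC₀, hbridge, hB1, hB2⟩ := Main.key r n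
  set len := n - m with hlen
  set μ := L.sum with hμ
  have hval : rBell r (n + 1) 1 / rBell r n 1 - ((r:ℝ) + 1) = (m:ℝ) + μ := by
    rw [hB1, hB2, mul_comm C₀, mul_div_assoc, div_self hC₀.ne', mul_one]
    ring
  rw [hval]
  -- K ≥ m
  have hSKpos : 1 ≤ rStirling r n K := by
    have h1 := hmax n le_rfl
    rw [Comb.rStirling_diag] at h1
    exact h1
  have hKm : m ≤ K := by
    by_contra hc
    have h1 := hbridge K hK
    rw [if_neg (by omega), mul_zero] at h1
    have : rStirling r n K = 0 := by exact_mod_cast h1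
    omega
  have hμ0 : 0 ≤ μ := List.sum_nonneg (fun p hp => (hLmem p hp).1.le)
  have hKlen : K - m ≤ len := by omega
  -- upper bound : m + μ < K + 1
  have hupper : (m:ℝ) + μ < (K:ℝ) + 1 := by
    rcases eq_or_lt_of_le hK with hKn | hKn
    · -- K = n : μ ≤ len
      have hμlen : μ ≤ (len:ℝ) := by
        have h2 := List.sum_le_card_nsmul L 1 (fun p hp => (hLmem p hp).2.le)
        rw [hLlen] at h2
        simpa using h2
      have hnm : (n:ℝ) = (m:ℝ) + (len:ℝ) := by
        rw [hlen, Nat.cast_sub hmn]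
        ring
      subst hKn
      rw [hnm]
      linarith
    · -- K < n : Darroch I
      by_contra hc
      push_neg at hc
      have hsum : ((K - m : ℕ):ℝ) + 1 ≤ L.sum := by
        rw [Nat.cast_sub hKm]
        linarith
      have hd := PBaux.darroch_I L.length L rfl hLmem (K - m) hsum
      have h1 := hbridge K hK
      have h2 := hbridge (K+1) (by omega)
      rw [if_pos hKm] at h1
      rw [if_pos (by omega)] at h2
      rw [show K + 1 - m = (K - m) + 1 by omega] at h2
      have hlt : (rStirling r n K : ℝ) < (rStirling r n (K+1) : ℝ) := by
        rw [h1, h2]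
        exact (mul_lt_mul_iff_right₀ hC₀).mpr hd
      have : rStirling r n K < rStirling r n (K+1) := by exact_mod_cast hlt
      have := hmax (K+1) (by omega)
      omega
  -- lower bound : K - 1 < m + μ
  have hlower : (K:ℝ) - 1 < (m:ℝ) + μ := by
    rcases eq_or_lt_of_le hKm with hKm' | hKm'
    · -- K = m
      rw [← hKm']
      linarith
    · -- m < K : Darroch II
      by_contra hc
      push_neg at hc
      have hkm1 : K - m - 1 < L.length := by rw [hLlen]; omega
      have hsum : L.sum ≤ ((K - m - 1 : ℕ):ℝ) := by
        have hcast : ((K - m - 1 : ℕ):ℝ) = (K:ℝ) - (m:ℝ) - 1 := by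
          rw [show K - m - 1 = K - (m+1) from by omega,
            Nat.cast_sub (by omega : m + 1 ≤ K)]
          push_cast
          ring
        rw [hcast]
        linarith
      have hd := PBaux.darroch_II L.length L rfl hLmem (K - m - 1) hkm1 hsum
      rw [show K - m - 1 + 1 = K - m by omega] at hd
      have h1 := hbridge K hK
      have h2 := hbridge (K-1) (by omega)
      rw [if_pos hKm] at h1
      rw [if_pos (by omega)] at h2
      rw [show K - 1 - m = K - m - 1 by omega] at h2
      have hlt : (rStirling r n K : ℝ) < (rStirling r n (K-1) : ℝ) := by
        rw [h1, h2]
        exact (mul_lt_mul_iff_right₀ hC₀).mpr hd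
      have : rStirling r n K < rStirling r n (K-1) := by exact_mod_cast hlt
      have := hmax (K-1) (by omega)
      omega
  rw [abs_lt]
  constructor <;> linarith
end

section
/- For nonnegative integers n, r1, r2 with r1 ≤ r2, the (r1,r2)-Bell polynomial expands in ordinary r2-Bell polynomials via signed Stirling numbers of the first kind: B_n(z; r1, r2) = Σ_{k=0}^{r1} (−1)^{r1−k} · s_abs(r1, k) · B_{n+k}(z; r2), where s_abs denotes the unsigned Stirling number of the first kind. -/
open Finset

/-- The unsigned Stirling number of the first kind, via the standard recurrence. -/
def sabs : ℕ → ℕ → ℕ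
  | 0, 0 => 1
  | 0, _ + 1 => 0
  | _ + 1, 0 => 0
  | n + 1, k + 1 => n * sabs n (k + 1) + sabs n k

def PartC (M c : ℕ) (S T : Set (Fin M)) : Type :=
  {𝒜 : Finset (Finset (Fin M)) // IsSetPartition 𝒜 ∧ 𝒜.card = c ∧
    DistinctBlocks 𝒜 S ∧ DistinctBlocks 𝒜 T}

instance (M c : ℕ) (S T : Set (Fin M)) : Finite (PartC M c S T) := by
  unfold PartC; infer_instance

lemma rrStirling_eq_card (r₁ r₂ n k M : ℕ) (h : n + r₁ + r₂ = M) :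
    rrStirling r₁ r₂ n k = Nat.card (PartC M (k + r₂)
      {x | (x : ℕ) < r₁} {x | r₁ ≤ (x : ℕ) ∧ (x : ℕ) < r₁ + r₂}) := by
  subst h; rfl

lemma distinctBlocks_congr {N : ℕ} {𝒜 : Finset (Finset (Fin N))} {S T : Set (Fin N)}
    (h : S = T) : DistinctBlocks 𝒜 S ↔ DistinctBlocks 𝒜 T := by rw [h]

-- image of a partition under a permutation
lemma isSetPartition_image {M : ℕ} (σ : Fin M ≃ Fin M) {𝒜 : Finset (Finset (Fin M))}
    (h : IsSetPartition 𝒜) : IsSetPartition (𝒜.image (Finset.image σ)) := by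
  obtain ⟨h1, h2⟩ := h
  constructor
  · intro t ht
    obtain ⟨s, hs, rfl⟩ := Finset.mem_image.1 ht
    exact (h1 s hs).image σ
  · intro x
    obtain ⟨t, ⟨ht, hxt⟩, huniq⟩ := h2 (σ.symm x)
    refine ⟨t.image σ, ⟨Finset.mem_image_of_mem _ ht, ?_⟩, ?_⟩
    · exact Finset.mem_image.2 ⟨σ.symm x, hxt, σ.apply_symm_apply x⟩
    · rintro t' ⟨ht', hxt'⟩
      obtain ⟨s, hs, rfl⟩ := Finset.mem_image.1 ht'
      obtain ⟨y, hy, hyx⟩ := Finset.mem_image.1 hxt'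
      have : y = σ.symm x := by rw [← hyx]; simp
      subst this
      rw [huniq s ⟨hs, hy⟩]

lemma card_image_part {M : ℕ} (σ : Fin M ≃ Fin M) (𝒜 : Finset (Finset (Fin M))) :
    (𝒜.image (Finset.image σ)).card = 𝒜.card :=
  Finset.card_image_of_injective _ (Finset.image_injective σ.injective)

lemma distinctBlocks_image {M : ℕ} (σ : Fin M ≃ Fin M) {𝒜 : Finset (Finset (Fin M))}
    {S S' : Set (Fin M)} (hS : ∀ x, σ x ∈ S' ↔ x ∈ S)
    (h : DistinctBlocks 𝒜 S) : DistinctBlocks (𝒜.image (Finset.image σ)) S' := by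
  intro a ha b hb hab t ht ⟨hat, hbt⟩
  obtain ⟨s, hs, rfl⟩ := Finset.mem_image.1 ht
  obtain ⟨a', ha', rfl⟩ := Finset.mem_image.1 hat
  obtain ⟨b', hb', rfl⟩ := Finset.mem_image.1 hbt
  exact h a' ((hS a').1 ha) b' ((hS b').1 hb)
    (fun e => hab (by rw [e])) s hs ⟨ha', hb'⟩

/-- Transport `PartC` along a permutation. -/
noncomputable def partCEquiv {M c : ℕ} {S T S' T' : Set (Fin M)} (σ : Fin M ≃ Fin M)
    (hS : ∀ x, σ x ∈ S' ↔ x ∈ S) (hT : ∀ x, σ x ∈ T' ↔ x ∈ T) :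
    PartC M c S T ≃ PartC M c S' T' where
  toFun A := ⟨A.1.image (Finset.image σ),
    isSetPartition_image σ A.2.1, by rw [card_image_part]; exact A.2.2.1,
    distinctBlocks_image σ hS A.2.2.2.1, distinctBlocks_image σ hT A.2.2.2.2⟩
  invFun A := ⟨A.1.image (Finset.image σ.symm),
    isSetPartition_image σ.symm A.2.1, by rw [card_image_part]; exact A.2.2.1,
    distinctBlocks_image σ.symm (fun x => by rw [← hS (σ.symm x)]; simp) A.2.2.2.1,
    distinctBlocks_image σ.symm (fun x => by rw [← hT (σ.symm x)]; simp) A.2.2.2.2⟩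
  left_inv A := by
    apply Subtype.ext
    simp [Finset.image_image, Function.comp_def]
  right_inv A := by
    apply Subtype.ext
    simp [Finset.image_image, Function.comp_def]

section updn
variable {M : ℕ}

noncomputable def dn (t : Finset (Fin (M + 1))) : Finset (Fin M) :=
  t.preimage Fin.castSucc (Fin.castSucc_injective M).injOn

@[simp] lemma mem_dn {t : Finset (Fin (M + 1))} {x : Fin M} :
    x ∈ dn t ↔ x.castSucc ∈ t := Finset.mem_preimage

def up (i : Fin M) (t : Finset (Fin M)) : Finset (Fin (M + 1)) :=
  if i ∈ t then insert (Fin.last M) (t.image Fin.castSucc) else t.image Fin.castSucc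

lemma mem_up_last {i : Fin M} {t : Finset (Fin M)} : Fin.last M ∈ up i t ↔ i ∈ t := by
  unfold up
  split_ifs with h
  · simp [h]
  · simp only [Finset.mem_image, iff_false, h]
    rintro ⟨y, -, hy⟩
    exact (Fin.castSucc_lt_last y).ne hy

lemma mem_up_castSucc {i : Fin M} {t : Finset (Fin M)} {x : Fin M} :
    x.castSucc ∈ up i t ↔ x ∈ t := by
  unfold up
  have h2 : x.castSucc ∈ t.image Fin.castSucc ↔ x ∈ t := by
    simp [Fin.castSucc_injective M |>.eq_iff]
  split_ifs with h
  · simp only [Finset.mem_insert, h2, or_iff_right_iff_imp]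
    intro he; exact absurd he (Fin.castSucc_lt_last x).ne
  · exact h2

@[simp] lemma dn_up (i : Fin M) (t : Finset (Fin M)) : dn (up i t) = t := by
  ext x; rw [mem_dn, mem_up_castSucc]

end updn

section updn2
variable {M : ℕ}

lemma up_injective (i : Fin M) : Function.Injective (up i) := fun t t' h => by
  rw [← dn_up i t, h, dn_up]

lemma distinctBlocks_mono {N : ℕ} {𝒜 : Finset (Finset (Fin N))} {S S' : Set (Fin N)}
    (hss : S ⊆ S') (h : DistinctBlocks 𝒜 S') : DistinctBlocks 𝒜 S :=
  fun a ha b hb hab t ht => h a (hss ha) b (hss hb) hab t ht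

lemma isSetPartition_up (i : Fin M) {𝒜 : Finset (Finset (Fin M))}
    (hP : IsSetPartition 𝒜) : IsSetPartition (𝒜.image (up i)) := by
  constructor
  · intro t ht
    obtain ⟨s, hs, rfl⟩ := Finset.mem_image.1 ht
    obtain ⟨x, hx⟩ := hP.1 s hs
    exact ⟨x.castSucc, mem_up_castSucc.2 hx⟩
  · intro x
    induction x using Fin.lastCases with
    | last =>
      obtain ⟨t₀, ⟨ht₀, hit₀⟩, huniq⟩ := hP.2 i
      refine ⟨up i t₀, ⟨Finset.mem_image_of_mem _ ht₀, mem_up_last.2 hit₀⟩, ?_⟩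
      rintro t' ⟨ht', hlt'⟩
      obtain ⟨s, hs, rfl⟩ := Finset.mem_image.1 ht'
      rw [huniq s ⟨hs, mem_up_last.1 hlt'⟩]
    | cast y =>
      obtain ⟨t₀, ⟨ht₀, hyt₀⟩, huniq⟩ := hP.2 y
      refine ⟨up i t₀, ⟨Finset.mem_image_of_mem _ ht₀, mem_up_castSucc.2 hyt₀⟩, ?_⟩
      rintro t' ⟨ht', hyt'⟩
      obtain ⟨s, hs, rfl⟩ := Finset.mem_image.1 ht'
      rw [huniq s ⟨hs, mem_up_castSucc.1 hyt'⟩]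

lemma distinctBlocks_up (i : Fin M) {𝒜 : Finset (Finset (Fin M))}
    {U : Set (Fin (M + 1))} {V : Set (Fin M)}
    (hUV : ∀ x : Fin M, x.castSucc ∈ U ↔ x ∈ V) (hlast : Fin.last M ∉ U)
    (h : DistinctBlocks 𝒜 V) : DistinctBlocks (𝒜.image (up i)) U := by
  intro a ha b hb hab t ht ⟨hat, hbt⟩
  obtain ⟨s, hs, rfl⟩ := Finset.mem_image.1 ht
  have hane : a ≠ Fin.last M := fun e => hlast (e ▸ ha)
  have hbne : b ≠ Fin.last M := fun e => hlast (e ▸ hb)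
  obtain ⟨a', rfl⟩ := Fin.exists_castSucc_eq.2 hane
  obtain ⟨b', rfl⟩ := Fin.exists_castSucc_eq.2 hbne
  exact h a' ((hUV a').1 ha) b' ((hUV b').1 hb)
    (fun e => hab (by rw [e])) s hs ⟨mem_up_castSucc.1 hat, mem_up_castSucc.1 hbt⟩

lemma up_dn_of (i : Fin M) (t : Finset (Fin (M + 1)))
    (h : Fin.last M ∈ t ↔ i.castSucc ∈ t) : up i (dn t) = t := by
  by_cases hi : i ∈ dn t
  · have hl : Fin.last M ∈ t := h.2 (mem_dn.1 hi)
    rw [up, if_pos hi]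
    ext y
    induction y using Fin.lastCases with
    | last => simp [hl]
    | cast x =>
      simp only [Finset.mem_insert, Finset.mem_image]
      constructor
      · rintro (he | ⟨x', hx', he⟩)
        · exact absurd he (Fin.castSucc_lt_last x).ne
        · have : x' = x := Fin.castSucc_injective M he
          exact this ▸ mem_dn.1 hx'
      · intro hx
        exact Or.inr ⟨x, mem_dn.2 hx, rfl⟩
  · have hl : Fin.last M ∉ t := fun hl => hi (mem_dn.2 (h.1 hl))
    rw [up, if_neg hi]
    ext y
    induction y using Fin.lastCases with
    | last =>
      simp only [Finset.mem_image]
      constructor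
      · rintro ⟨x', hx', he⟩
        exact absurd he (Fin.castSucc_lt_last x').ne
      · intro hy; exact absurd hy hl
    | cast x =>
      simp only [Finset.mem_image]
      constructor
      · rintro ⟨x', hx', he⟩
        have : x' = x := Fin.castSucc_injective M he
        exact this ▸ mem_dn.1 hx'
      · intro hx; exact ⟨x, mem_dn.2 hx, rfl⟩

end updn2

section core
variable {M r1 r2 c : ℕ}

/-- separation predicate: no small element shares a block with the last element -/
def SepSet (M r1 : ℕ) : Set (Fin (M + 1)) := {x | (x : ℕ) < r1 ∨ (x : ℕ) = M}

def castLT1 (h12 : r1 + r2 ≤ M) (i : Fin r1) : Fin M := ⟨i, by omega⟩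

@[simp] lemma castLT1_val (h12 : r1 + r2 ≤ M) (i : Fin r1) :
    (castLT1 h12 i : ℕ) = (i : ℕ) := rfl

lemma hUV1 (h12 : r1 + r2 ≤ M) :
    ∀ x : Fin M, x.castSucc ∈ {y : Fin (M+1) | (y : ℕ) < r1} ↔ x ∈ {y : Fin M | (y : ℕ) < r1} := by
  intro x; simp

lemma hUV2 (h12 : r1 + r2 ≤ M) : ∀ x : Fin M,
    x.castSucc ∈ {y : Fin (M+1) | r1 ≤ (y : ℕ) ∧ (y : ℕ) < r1 + r2} ↔
      x ∈ {y : Fin M | r1 ≤ (y : ℕ) ∧ (y : ℕ) < r1 + r2} := by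
  intro x; simp

lemma hlast1 (h12 : r1 + r2 ≤ M) : Fin.last M ∉ {y : Fin (M+1) | (y : ℕ) < r1} := by
  simp [Set.mem_setOf_eq]; omega

lemma hlast2 (h12 : r1 + r2 ≤ M) :
    Fin.last M ∉ {y : Fin (M+1) | r1 ≤ (y : ℕ) ∧ (y : ℕ) < r1 + r2} := by
  simp [Set.mem_setOf_eq]; omega

/-- The map inserting the last element into the block of `i`. -/
noncomputable def Fmap (h12 : r1 + r2 ≤ M)
    (p : Fin r1 × PartC M c {x | (x : ℕ) < r1} {x | r1 ≤ (x : ℕ) ∧ (x : ℕ) < r1 + r2}) :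
    {A : PartC (M + 1) c {x | (x : ℕ) < r1} {x | r1 ≤ (x : ℕ) ∧ (x : ℕ) < r1 + r2} //
      ¬ DistinctBlocks A.1 (SepSet M r1)} := by
  refine ⟨⟨p.2.1.image (up (castLT1 h12 p.1)), isSetPartition_up _ p.2.2.1,
    by rw [Finset.card_image_of_injective _ (up_injective _)]; exact p.2.2.2.1,
    distinctBlocks_up _ (hUV1 h12) (hlast1 h12) p.2.2.2.2.1,
    distinctBlocks_up _ (hUV2 h12) (hlast2 h12) p.2.2.2.2.2⟩, ?_⟩
  intro hD
  obtain ⟨t₀, ⟨ht₀, hit₀⟩, -⟩ := p.2.2.1.2 (castLT1 h12 p.1)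
  refine hD (castLT1 h12 p.1).castSucc (Or.inl (by simp)) (Fin.last M)
    (Or.inr (by simp)) (fun e => ?_) (up (castLT1 h12 p.1) t₀)
    (Finset.mem_image_of_mem _ ht₀)
    ⟨mem_up_castSucc.2 hit₀, mem_up_last.2 hit₀⟩
  have := congrArg Fin.val e
  simp at this; omega

lemma Fmap_injective (h12 : r1 + r2 ≤ M) : Function.Injective (Fmap (c := c) h12) := by
  rintro ⟨i, 𝒜, hA⟩ ⟨j, ℬ, hB⟩ he
  have he1 : 𝒜.image (up (castLT1 h12 i)) = ℬ.image (up (castLT1 h12 j)) :=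
    congrArg (fun x => x.1.1) he
  have hAB : 𝒜 = ℬ := by
    have := congrArg (Finset.image dn) he1
    simpa [Finset.image_image, Function.comp_def] using this
  subst hAB
  have hij : castLT1 h12 i = castLT1 h12 j := by
    by_contra hne
    obtain ⟨t₀, ⟨ht₀, hit₀⟩, -⟩ := hA.1.2 (castLT1 h12 i)
    obtain ⟨t₁, ⟨ht₁, hjt₁⟩, -⟩ := hA.1.2 (castLT1 h12 j)
    have hPup : IsSetPartition (𝒜.image (up (castLT1 h12 i))) :=
      isSetPartition_up _ hA.1
    have hmem0 : up (castLT1 h12 i) t₀ ∈ 𝒜.image (up (castLT1 h12 i)) :=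
      Finset.mem_image_of_mem _ ht₀
    have hmem1 : up (castLT1 h12 j) t₁ ∈ 𝒜.image (up (castLT1 h12 i)) :=
      he1 ▸ Finset.mem_image_of_mem _ ht₁
    obtain ⟨u, -, huniq⟩ := hPup.2 (Fin.last M)
    have e0 : up (castLT1 h12 i) t₀ = u := huniq _ ⟨hmem0, mem_up_last.2 hit₀⟩
    have e1 : up (castLT1 h12 j) t₁ = u := huniq _ ⟨hmem1, mem_up_last.2 hjt₁⟩
    have hD1 : DistinctBlocks (𝒜.image (up (castLT1 h12 i))) {x : Fin (M+1) | (x : ℕ) < r1} :=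
      distinctBlocks_up _ (hUV1 h12) (hlast1 h12) hA.2.2.1
    refine hD1 (castLT1 h12 i).castSucc (by simp)
      (castLT1 h12 j).castSucc (by simp)
      (fun e => hne (Fin.castSucc_injective M e)) u (e0 ▸ hmem0)
      ⟨e0 ▸ mem_up_castSucc.2 hit₀, e1 ▸ mem_up_castSucc.2 hjt₁⟩
  have hij' : i = j := by
    apply Fin.ext
    simpa using congrArg Fin.val hij
  subst hij'
  exact Prod.ext rfl (Subtype.ext rfl)

lemma S1_subset_SepSet : {x : Fin (M + 1) | (x : ℕ) < r1} ⊆ SepSet M r1 :=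
  fun _ hx => Or.inl hx

lemma surj_core (h12 : r1 + r2 ≤ M) {𝒜 : Finset (Finset (Fin (M + 1)))}
    (hP : IsSetPartition 𝒜) (hc : 𝒜.card = c)
    (h1 : DistinctBlocks 𝒜 {x | (x : ℕ) < r1})
    (h2 : DistinctBlocks 𝒜 {x | r1 ≤ (x : ℕ) ∧ (x : ℕ) < r1 + r2})
    (i : Fin r1) {t₀ : Finset (Fin (M + 1))} (ht₀ : t₀ ∈ 𝒜)
    (hat : (castLT1 h12 i).castSucc ∈ t₀) (hlt : Fin.last M ∈ t₀) :
    ∃ B : PartC M c {x | (x : ℕ) < r1} {x | r1 ≤ (x : ℕ) ∧ (x : ℕ) < r1 + r2},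
      𝒜 = B.1.image (up (castLT1 h12 i)) := by
  set ii := castLT1 h12 i with hii
  have huniq : ∀ t ∈ 𝒜, (Fin.last M ∈ t ↔ ii.castSucc ∈ t) := by
    intro t ht
    constructor
    · intro hl
      obtain ⟨u, -, huq⟩ := hP.2 (Fin.last M)
      rw [huq t ⟨ht, hl⟩, ← huq t₀ ⟨ht₀, hlt⟩]; exact hat
    · intro hl
      obtain ⟨u, -, huq⟩ := hP.2 ii.castSucc
      rw [huq t ⟨ht, hl⟩, ← huq t₀ ⟨ht₀, hat⟩]; exact hlt
  have hud : ∀ t ∈ 𝒜, up ii (dn t) = t := fun t ht => up_dn_of ii t (huniq t ht)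
  have hinj : Set.InjOn dn (𝒜 : Set (Finset (Fin (M + 1)))) := by
    intro t ht t' ht' he
    rw [← hud t ht, ← hud t' ht', he]
  have himg : (𝒜.image dn).image (up ii) = 𝒜 := by
    rw [Finset.image_image]
    rw [show 𝒜.image (up ii ∘ dn) = 𝒜.image id from Finset.image_congr hud]
    exact Finset.image_id
  refine ⟨⟨𝒜.image dn, ⟨?_, ?_⟩, ?_, ?_, ?_⟩, himg.symm⟩
  · -- nonempty
    intro s hs
    obtain ⟨t, ht, rfl⟩ := Finset.mem_image.1 hs
    rcases Finset.eq_empty_or_nonempty (dn t) with he | hne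
    · exfalso
      have h5 := hud t ht
      rw [he] at h5
      rw [up, if_neg (Finset.notMem_empty ii), Finset.image_empty] at h5
      exact (hP.1 t ht).ne_empty h5.symm
    · exact hne
  · -- exists unique
    intro x
    obtain ⟨t, ⟨ht, hxt⟩, huq⟩ := hP.2 x.castSucc
    refine ⟨dn t, ⟨Finset.mem_image_of_mem _ ht, mem_dn.2 hxt⟩, ?_⟩
    rintro s' ⟨hs', hxs'⟩
    obtain ⟨s, hs, rfl⟩ := Finset.mem_image.1 hs'
    rw [huq s ⟨hs, mem_dn.1 hxs'⟩]
  · rw [Finset.card_image_of_injOn hinj]; exact hc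
  · intro a ha b hb hab s hs ⟨has, hbs⟩
    obtain ⟨t, ht, rfl⟩ := Finset.mem_image.1 hs
    exact h1 a.castSucc (by simpa using ha) b.castSucc (by simpa using hb)
      (fun e => hab (Fin.castSucc_injective M e)) t ht
      ⟨mem_dn.1 has, mem_dn.1 hbs⟩
  · intro a ha b hb hab s hs ⟨has, hbs⟩
    obtain ⟨t, ht, rfl⟩ := Finset.mem_image.1 hs
    exact h2 a.castSucc (by simpa using ha) b.castSucc (by simpa using hb)
      (fun e => hab (Fin.castSucc_injective M e)) t ht
      ⟨mem_dn.1 has, mem_dn.1 hbs⟩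

lemma Fmap_surjective (h12 : r1 + r2 ≤ M) : Function.Surjective (Fmap (c := c) h12) := by
  rintro ⟨⟨𝒜, hP, hc, h1, h2⟩, hnp⟩
  unfold DistinctBlocks at hnp
  push_neg at hnp
  obtain ⟨a, ha, b, hb, hab, t₀, ht₀, hat, hbt⟩ := hnp
  have main : ∃ i : Fin r1, (castLT1 h12 i).castSucc ∈ t₀ ∧ Fin.last M ∈ t₀ := by
    rcases ha with ha | ha <;> rcases hb with hb | hb
    · exact absurd ⟨hat, hbt⟩ (h1 a ha b hb hab t₀ ht₀)
    · refine ⟨⟨(a : ℕ), ha⟩, ?_, ?_⟩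
      · have : (castLT1 h12 ⟨(a : ℕ), ha⟩).castSucc = a := by
          apply Fin.ext; simp
        rw [this]; exact hat
      · have : Fin.last M = b := by apply Fin.ext; simp [hb.symm]
        rw [this]; exact hbt
    · refine ⟨⟨(b : ℕ), hb⟩, ?_, ?_⟩
      · have : (castLT1 h12 ⟨(b : ℕ), hb⟩).castSucc = b := by
          apply Fin.ext; simp
        rw [this]; exact hbt
      · have : Fin.last M = a := by apply Fin.ext; simp [ha.symm]
        rw [this]; exact hat
    · exact absurd (Fin.ext (by omega : (a : ℕ) = (b : ℕ))) hab
  obtain ⟨i, hat', hbt'⟩ := main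
  obtain ⟨B, hB⟩ := surj_core h12 hP hc h1 h2 i ht₀ hat' hbt'
  refine ⟨(i, B), ?_⟩
  apply Subtype.ext
  apply Subtype.ext
  exact hB.symm

lemma core_card (h12 : r1 + r2 ≤ M) :
    Nat.card (PartC (M + 1) c {x | (x : ℕ) < r1} {x | r1 ≤ (x : ℕ) ∧ (x : ℕ) < r1 + r2}) =
    Nat.card (PartC (M + 1) c (SepSet M r1) {x | r1 ≤ (x : ℕ) ∧ (x : ℕ) < r1 + r2}) +
      r1 * Nat.card (PartC M c {x | (x : ℕ) < r1} {x | r1 ≤ (x : ℕ) ∧ (x : ℕ) < r1 + r2}) := by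
  classical
  rw [Nat.card_congr (Equiv.sumCompl
    (fun A : PartC (M + 1) c {x | (x : ℕ) < r1} {x | r1 ≤ (x : ℕ) ∧ (x : ℕ) < r1 + r2} =>
      DistinctBlocks A.1 (SepSet M r1))).symm, Nat.card_sum]
  congr 1
  · apply Nat.card_congr
    exact { toFun := fun x => ⟨x.1.1, x.1.2.1, x.1.2.2.1, x.2, x.1.2.2.2.2⟩
            invFun := fun y => ⟨⟨y.1, y.2.1, y.2.2.1,
              distinctBlocks_mono S1_subset_SepSet y.2.2.2.1, y.2.2.2.2⟩, y.2.2.2.1⟩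
            left_inv := fun x => by apply Subtype.ext; apply Subtype.ext; rfl
            right_inv := fun y => Subtype.ext rfl }
  · rw [Nat.card_congr (Equiv.ofBijective _
      ⟨Fmap_injective (c := c) h12, Fmap_surjective h12⟩).symm, Nat.card_prod,
      Nat.card_eq_fintype_card, Fintype.card_fin]

end core

section relabel
variable {M r1 r2 c : ℕ}

def sigma0f (M r1 : ℕ) : Fin (M + 1) → Fin (M + 1) := fun x =>
  if (x : ℕ) < r1 then x else if (x : ℕ) = r1 then ⟨M, by omega⟩
  else ⟨(x : ℕ) - 1, by have := x.isLt; omega⟩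

lemma sigma0f_injective (M r1 : ℕ) (h : r1 ≤ M) : Function.Injective (sigma0f M r1) := by
  intro x y hxy
  have hx := x.isLt
  have hy := y.isLt
  have h2 := congrArg Fin.val hxy
  apply Fin.ext
  unfold sigma0f at h2
  split_ifs at h2 <;> (try simp only [Fin.val_mk] at h2) <;> omega

noncomputable def sigma0 (M r1 : ℕ) (h : r1 ≤ M) : Fin (M + 1) ≃ Fin (M + 1) :=
  Equiv.ofBijective _ ((Finite.injective_iff_bijective).1 (sigma0f_injective M r1 h))

lemma sigma0_apply (M r1 : ℕ) (h : r1 ≤ M) (x : Fin (M + 1)) :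
    sigma0 M r1 h x = sigma0f M r1 x := rfl

lemma sigma0_spec1 (h12 : r1 + r2 ≤ M) (x : Fin (M + 1)) :
    sigma0 M r1 (by omega) x ∈ SepSet M r1 ↔ x ∈ {y : Fin (M + 1) | (y : ℕ) < r1 + 1} := by
  have hx := x.isLt
  rw [sigma0_apply]
  unfold sigma0f SepSet
  split_ifs with h1 h2 <;> simp only [Set.mem_setOf_eq, Fin.val_mk, or_true, true_iff] <;> omega

lemma sigma0_spec2 (h12 : r1 + r2 ≤ M) (x : Fin (M + 1)) :
    sigma0 M r1 (by omega) x ∈ {y : Fin (M + 1) | r1 ≤ (y : ℕ) ∧ (y : ℕ) < r1 + r2} ↔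
      x ∈ {y : Fin (M + 1) | r1 + 1 ≤ (y : ℕ) ∧ (y : ℕ) < r1 + 1 + r2} := by
  have hx := x.isLt
  rw [sigma0_apply]
  unfold sigma0f
  split_ifs with h1 h2 <;> simp only [Set.mem_setOf_eq, Fin.val_mk, or_true, true_iff] <;> omega

lemma card_relabel (h12 : r1 + r2 ≤ M) :
    Nat.card (PartC (M + 1) c {x | (x : ℕ) < r1 + 1}
      {x | r1 + 1 ≤ (x : ℕ) ∧ (x : ℕ) < r1 + 1 + r2}) =
    Nat.card (PartC (M + 1) c (SepSet M r1) {x | r1 ≤ (x : ℕ) ∧ (x : ℕ) < r1 + r2}) :=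
  Nat.card_congr (partCEquiv (sigma0 M r1 (by omega))
    (sigma0_spec1 h12) (sigma0_spec2 h12))

end relabel

lemma rrStirling_rec (r1 r2 n k : ℕ) :
    rrStirling r1 r2 (n + 1) k =
      rrStirling (r1 + 1) r2 n k + r1 * rrStirling r1 r2 n k := by
  have h12 : r1 + r2 ≤ n + r1 + r2 := by omega
  rw [rrStirling_eq_card r1 r2 (n + 1) k ((n + r1 + r2) + 1) (by omega),
    rrStirling_eq_card (r1 + 1) r2 n k ((n + r1 + r2) + 1) (by omega),
    rrStirling_eq_card r1 r2 n k (n + r1 + r2) rfl,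
    core_card h12, card_relabel h12]

lemma sabs_succ_zero (n : ℕ) : sabs (n + 1) 0 = 0 := rfl

lemma sabs_rec (n k : ℕ) : sabs (n + 1) (k + 1) = n * sabs n (k + 1) + sabs n k := rfl

lemma sabs_eq_zero_of_lt : ∀ {n k : ℕ}, n < k → sabs n k = 0 := by
  intro n
  induction n with
  | zero => intro k h; match k, h with | k + 1, _ => rfl
  | succ n ih =>
    intro k h
    match k, h with
    | m + 1, h =>
      rw [sabs_rec, ih (by omega), ih (by omega)]
      simp

lemma rrStirling_zero (r2 n k : ℕ) : rrStirling 0 r2 n k = rStirling r2 n k := by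
  apply Nat.card_congr
  apply Equiv.subtypeEquivRight
  intro 𝒜
  constructor
  · rintro ⟨hP, hc, -, h2⟩
    refine ⟨hP, hc, ?_⟩
    have := distinctBlocks_congr (𝒜 := 𝒜)
      (show {x : Fin (n + r2) | 0 ≤ (x : ℕ) ∧ (x : ℕ) < 0 + r2} = ({x | (x : ℕ) < r2} : Set (Fin (n + r2))) by
        ext x; simp)
    exact this.1 h2
  · rintro ⟨hP, hc, h2⟩
    refine ⟨hP, hc, fun a ha => absurd ha (by simp), ?_⟩
    have := distinctBlocks_congr (𝒜 := 𝒜)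
      (show {x : Fin (n + r2) | 0 ≤ (x : ℕ) ∧ (x : ℕ) < 0 + r2} = ({x | (x : ℕ) < r2} : Set (Fin (n + r2))) by
        ext x; simp)
    exact this.2 h2

lemma IsSetPartition.card_le {N : ℕ} {𝒜 : Finset (Finset (Fin N))}
    (h : IsSetPartition 𝒜) : 𝒜.card ≤ N := by
  classical
  have hdisj : ∀ t ∈ 𝒜, ∀ s ∈ 𝒜, t ≠ s → Disjoint (id t) (id s) := by
    intro t ht s hs hts
    rw [Finset.disjoint_left]
    intro x hxt hxs
    obtain ⟨u, -, huq⟩ := h.2 x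
    exact hts ((huq t ⟨ht, hxt⟩).trans (huq s ⟨hs, hxs⟩).symm)
  calc 𝒜.card = ∑ _t ∈ 𝒜, 1 := by simp
    _ ≤ ∑ t ∈ 𝒜, t.card := Finset.sum_le_sum (fun t ht => Finset.card_pos.2 (h.1 t ht))
    _ = (𝒜.biUnion id).card := (Finset.card_biUnion hdisj).symm
    _ ≤ (Finset.univ : Finset (Fin N)).card := Finset.card_le_card (Finset.subset_univ _)
    _ = N := by simp

lemma rrStirling_eq_zero {r1 r2 n k : ℕ} (h : n + r1 < k) : rrStirling r1 r2 n k = 0 := by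
  have : IsEmpty {𝒜 : Finset (Finset (Fin (n + r1 + r2))) //
      IsSetPartition 𝒜 ∧ 𝒜.card = k + r2 ∧
      DistinctBlocks 𝒜 {x | (x : ℕ) < r1} ∧
      DistinctBlocks 𝒜 {x | r1 ≤ (x : ℕ) ∧ (x : ℕ) < r1 + r2}} := by
    constructor
    rintro ⟨𝒜, hP, hc, -⟩
    have := hP.card_le
    omega
  exact Nat.card_of_isEmpty

lemma rrBell_zero (r2 n : ℕ) (z : ℝ) : rrBell 0 r2 n z = rBell r2 n z := by
  unfold rrBell rBell
  apply Finset.sum_congr rfl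
  intro k _
  rw [rrStirling_zero]

lemma rrBell_rec (r1 r2 n : ℕ) (z : ℝ) :
    rrBell r1 r2 (n + 1) z = rrBell (r1 + 1) r2 n z + r1 * rrBell r1 r2 n z := by
  unfold rrBell
  rw [show n + 1 + r1 + 1 = (n + r1 + 1) + 1 by omega,
    show n + (r1 + 1) + 1 = (n + r1 + 1) + 1 by omega]
  have h3 : ∑ k ∈ range ((n + r1 + 1) + 1), (rrStirling r1 r2 n k : ℝ) * z ^ k
      = ∑ k ∈ range (n + r1 + 1), (rrStirling r1 r2 n k : ℝ) * z ^ k := by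
    rw [Finset.sum_range_succ, rrStirling_eq_zero (by omega)]
    simp
  rw [← h3, Finset.mul_sum, ← Finset.sum_add_distrib]
  apply Finset.sum_congr rfl
  intro k _
  rw [rrStirling_rec r1 r2 n k]
  push_cast
  ring

lemma mul_sabs_zero (r : ℕ) : (r : ℝ) * (sabs r 0 : ℝ) = 0 := by
  cases r with
  | zero => simp
  | succ m => rw [sabs_succ_zero]; simp


/-- $B_n(z;r_1,r_2) = \sum_{k=0}^{r_1} (-1)^{r_1-k} |s(r_1,k)| B_{n+k}(z;r_2)$. -/
theorem rrBell_eq_signed_sum_rBell (n r₁ r₂ : ℕ) (h : r₁ ≤ r₂) (z : ℝ) :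
    rrBell r₁ r₂ n z =
      ∑ k ∈ range (r₁ + 1), (-1 : ℝ) ^ (r₁ - k) * (sabs r₁ k : ℝ) * rBell r₂ (n + k) z := by
  clear h
  induction r₁ generalizing n with
  | zero =>
    rw [Finset.sum_range_one, rrBell_zero]
    norm_num [sabs]
  | succ r ih =>
    have hrec : rrBell (r + 1) r₂ n z = rrBell r r₂ (n + 1) z - r * rrBell r r₂ n z := by
      have := rrBell_rec r r₂ n z
      linarith
    rw [hrec, ih (n + 1), ih n]
    -- abbreviations
    set B : ℕ → ℝ := fun m => rBell r₂ m z with hB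
    have hg' : ∀ i ∈ range (r + 1), (-1 : ℝ) ^ (r + 1 - (i + 1)) * (sabs (r + 1) (i + 1) : ℝ)
        * B (n + (i + 1)) = (-1 : ℝ) ^ (r - i) * (sabs r i : ℝ) * B (n + 1 + i)
          + (r : ℝ) * ((-1 : ℝ) ^ (r - i) * (sabs r (i + 1) : ℝ) * B (n + 1 + i)) := by
      intro i _
      rw [show r + 1 - (i + 1) = r - i from by omega,
        show n + (i + 1) = n + 1 + i from by omega, sabs_rec]
      push_cast
      ring
    have hRHS : ∑ k ∈ range (r + 1 + 1), (-1 : ℝ) ^ (r + 1 - k) * (sabs (r + 1) k : ℝ)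
        * B (n + k)
        = (∑ k ∈ range (r + 1), (-1 : ℝ) ^ (r - k) * (sabs r k : ℝ) * B (n + 1 + k))
          + (r : ℝ) * ∑ k ∈ range (r + 1),
              (-1 : ℝ) ^ (r - k) * (sabs r (k + 1) : ℝ) * B (n + 1 + k) := by
      rw [Finset.sum_range_succ']
      rw [show (-1 : ℝ) ^ (r + 1 - 0) * (sabs (r + 1) 0 : ℝ) * B (n + 0) = 0 from by
        rw [sabs_succ_zero]; simp]
      rw [add_zero, Finset.sum_congr rfl hg', Finset.sum_add_distrib, Finset.mul_sum]
    have hcancel : (r : ℝ) * ∑ k ∈ range (r + 1),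
        (-1 : ℝ) ^ (r - k) * (sabs r (k + 1) : ℝ) * B (n + 1 + k)
        = - ((r : ℝ) * ∑ k ∈ range (r + 1), (-1 : ℝ) ^ (r - k) * (sabs r k : ℝ) * B (n + k)) := by
      have e1 : ∑ k ∈ range (r + 1), (-1 : ℝ) ^ (r - k) * (sabs r (k + 1) : ℝ) * B (n + 1 + k)
          = ∑ k ∈ range r, (-1 : ℝ) ^ (r - k) * (sabs r (k + 1) : ℝ) * B (n + 1 + k) := by
        rw [Finset.sum_range_succ, sabs_eq_zero_of_lt (by omega)]
        simp
      have e2 : ∑ k ∈ range (r + 1), (-1 : ℝ) ^ (r - k) * (sabs r k : ℝ) * B (n + k)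
          = (∑ k ∈ range r, (-1 : ℝ) ^ (r - (k + 1)) * (sabs r (k + 1) : ℝ) * B (n + (k + 1)))
            + (-1 : ℝ) ^ (r - 0) * (sabs r 0 : ℝ) * B (n + 0) := by
        rw [Finset.sum_range_succ']
      have e3 : ∀ k ∈ range r, (-1 : ℝ) ^ (r - k) * (sabs r (k + 1) : ℝ) * B (n + 1 + k)
          = - ((-1 : ℝ) ^ (r - (k + 1)) * (sabs r (k + 1) : ℝ) * B (n + (k + 1))) := by
        intro k hk
        have hk' : k < r := Finset.mem_range.1 hk
        rw [show r - k = (r - (k + 1)) + 1 from by omega, pow_succ,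
          show n + (k + 1) = n + 1 + k from by omega]
        ring
      rw [e1, e2, Finset.sum_congr rfl e3, Finset.sum_neg_distrib]
      have e4 : (r : ℝ) * ((-1 : ℝ) ^ (r - 0) * (sabs r 0 : ℝ) * B (n + 0)) = 0 := by
        have := mul_sabs_zero r
        calc (r : ℝ) * ((-1 : ℝ) ^ (r - 0) * (sabs r 0 : ℝ) * B (n + 0))
            = ((r : ℝ) * (sabs r 0 : ℝ)) * ((-1 : ℝ) ^ (r - 0) * B (n + 0)) := by ring
          _ = 0 := by rw [this]; ring
      calc (r : ℝ) * -∑ k ∈ range r,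
            (-1 : ℝ) ^ (r - (k + 1)) * (sabs r (k + 1) : ℝ) * B (n + (k + 1))
          = - ((r : ℝ) * ((∑ k ∈ range r, (-1 : ℝ) ^ (r - (k + 1)) * (sabs r (k + 1) : ℝ)
              * B (n + (k + 1))) + (-1 : ℝ) ^ (r - 0) * (sabs r 0 : ℝ) * B (n + 0)))
            + (r : ℝ) * ((-1 : ℝ) ^ (r - 0) * (sabs r 0 : ℝ) * B (n + 0)) := by ring
        _ = - ((r : ℝ) * ((∑ k ∈ range r, (-1 : ℝ) ^ (r - (k + 1)) * (sabs r (k + 1) : ℝ)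
              * B (n + (k + 1))) + (-1 : ℝ) ^ (r - 0) * (sabs r 0 : ℝ) * B (n + 0))) := by
            rw [e4]; ring
    rw [hRHS, hcancel]
    ring
end

section
/- For nonnegative integers n, k, r1, r2 with r1 ≤ r2, the (r1,r2)-Stirling number of the second kind satisfies {n+r1+r2 brace k+r2}_{r1,r2} = Σ_{j=0}^{r1} (−1)^{r1−j} · s_abs(r1, j) · {n+j+r2 brace k+r2}_{r2}, where s_abs is the unsigned Stirling number of the first kind. -/
open Finset

namespace SA
variable {N : ℕ}

def Good {N : ℕ} (s1 s2 : Finset (Fin N)) (K : ℕ) (𝒜 : Finset (Finset (Fin N))) : Prop :=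
  IsSetPartition 𝒜 ∧ 𝒜.card = K ∧ DistinctBlocks 𝒜 ↑s1 ∧ DistinctBlocks 𝒜 ↑s2

noncomputable def PC (N : ℕ) (s1 s2 : Finset (Fin N)) (K : ℕ) : ℕ :=
  Nat.card {𝒜 : Finset (Finset (Fin N)) // Good s1 s2 K 𝒜}

/-! block lifting / lowering -/

def up (t : Finset (Fin N)) : Finset (Fin (N+1)) := t.map Fin.castSuccEmb

def down (t : Finset (Fin (N+1))) : Finset (Fin N) := univ.filter (fun y => y.castSucc ∈ t)

@[simp] lemma mem_up {t : Finset (Fin N)} {x : Fin (N+1)} :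
    x ∈ up t ↔ ∃ y ∈ t, Fin.castSucc y = x := by
  simp only [up, Finset.mem_map, Fin.castSuccEmb]
  rfl

@[simp] lemma castSucc_mem_up {t : Finset (Fin N)} {y : Fin N} :
    Fin.castSucc y ∈ up t ↔ y ∈ t := by
  simp only [mem_up]
  constructor
  · rintro ⟨z, hz, hzy⟩
    rwa [← Fin.castSucc_injective N hzy]
  · exact fun h => ⟨y, h, rfl⟩

@[simp] lemma mem_down {t : Finset (Fin (N+1))} {y : Fin N} :
    y ∈ down t ↔ Fin.castSucc y ∈ t := by simp [down]

lemma last_not_mem_up (t : Finset (Fin N)) : Fin.last N ∉ up t := by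
  simp only [mem_up]
  rintro ⟨y, -, hy⟩
  exact absurd hy ((Fin.castSucc_lt_last y).ne)

@[simp] lemma down_up (t : Finset (Fin N)) : down (up t) = t := by
  ext y; simp

@[simp] lemma up_down (t : Finset (Fin (N+1))) : up (down t) = t.erase (Fin.last N) := by
  ext x
  refine Fin.lastCases ?_ (fun y => ?_) x
  · exact iff_of_false (last_not_mem_up _) (Finset.notMem_erase _ _)
  · simp [fun z : Fin N => (Fin.castSucc_lt_last z).ne]

lemma up_injective : Function.Injective (up (N := N)) :=
  Finset.map_injective _

lemma up_nonempty {t : Finset (Fin N)} (h : t.Nonempty) : (up t).Nonempty :=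
  Finset.Nonempty.map h

lemma up_ne_singleton_last (t : Finset (Fin N)) : up t ≠ {Fin.last N} := by
  intro h
  have : Fin.last N ∈ up t := h ▸ Finset.mem_singleton_self _
  exact last_not_mem_up t this

def upB (ℬ : Finset (Finset (Fin N))) : Finset (Finset (Fin (N+1))) :=
  ℬ.map ⟨up, up_injective⟩

def downB (𝒜 : Finset (Finset (Fin (N+1)))) : Finset (Finset (Fin N)) := 𝒜.image down

@[simp] lemma mem_upB {ℬ : Finset (Finset (Fin N))} {t' : Finset (Fin (N+1))} :
    t' ∈ upB ℬ ↔ ∃ t ∈ ℬ, up t = t' := by simp [upB]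

@[simp] lemma up_mem_upB {ℬ : Finset (Finset (Fin N))} {t : Finset (Fin N)} :
    up t ∈ upB ℬ ↔ t ∈ ℬ := by
  simp only [mem_upB]
  constructor
  · rintro ⟨s, hs, h⟩; rwa [← up_injective h]
  · exact fun h => ⟨t, h, rfl⟩

lemma mem_downB {𝒜 : Finset (Finset (Fin (N+1)))} {t : Finset (Fin N)} :
    t ∈ downB 𝒜 ↔ ∃ t' ∈ 𝒜, down t' = t := by simp [downB]

lemma not_mem_upB_of_last_mem {ℬ : Finset (Finset (Fin N))} {t' : Finset (Fin (N+1))}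
    (h : Fin.last N ∈ t') : t' ∉ upB ℬ := by
  simp only [mem_upB]
  rintro ⟨t, -, rfl⟩
  exact last_not_mem_up t h

lemma upB_downB {𝒞 : Finset (Finset (Fin (N+1)))} (h : ∀ t ∈ 𝒞, Fin.last N ∉ t) :
    upB (downB 𝒞) = 𝒞 := by
  ext t'
  simp only [mem_upB, mem_downB]
  constructor
  · rintro ⟨t, ⟨s, hs, rfl⟩, rfl⟩
    rwa [up_down, Finset.erase_eq_of_notMem (h s hs)]
  · intro ht'
    exact ⟨down t', ⟨t', ht', rfl⟩, by rw [up_down, Finset.erase_eq_of_notMem (h t' ht')]⟩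

/-! partition helpers -/

lemma part_unique {𝒜 : Finset (Finset (Fin N))} (h : IsSetPartition 𝒜)
    {t t' : Finset (Fin N)} (ht : t ∈ 𝒜) (ht' : t' ∈ 𝒜) {x : Fin N}
    (hx : x ∈ t) (hx' : x ∈ t') : t = t' :=
  ((h.2 x).unique ⟨ht, hx⟩ ⟨ht', hx'⟩)

end SA

namespace SA
variable {N : ℕ}

/-- The insertion map: add a new last element to block `t0` (new singleton if `t0 = ∅`). -/
def ΨA (ℬ : Finset (Finset (Fin N))) (t0 : Finset (Fin N)) : Finset (Finset (Fin (N+1))) :=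
  insert (insert (Fin.last N) (up t0)) (upB (ℬ.erase t0))

lemma empty_not_mem_of_part {𝒜 : Finset (Finset (Fin N))} (h : IsSetPartition 𝒜) :
    ∅ ∉ 𝒜 := fun h0 => by simpa using h.1 _ h0

lemma mem_ΨA_of_last_mem {ℬ : Finset (Finset (Fin N))} {t0 : Finset (Fin N)}
    {t : Finset (Fin (N+1))} (ht : t ∈ ΨA ℬ t0) (hL : Fin.last N ∈ t) :
    t = insert (Fin.last N) (up t0) := by
  rcases Finset.mem_insert.1 ht with h | h
  · exact h
  · exact absurd h (not_mem_upB_of_last_mem hL)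

lemma good_ΨA {s1 s2 : Finset (Fin N)} {K : ℕ} {ℬ : Finset (Finset (Fin N))}
    {t0 : Finset (Fin N)}
    (hP : IsSetPartition ℬ) (hD1 : DistinctBlocks ℬ ↑s1) (hD2 : DistinctBlocks ℬ ↑s2)
    (hc : (ℬ.erase t0).card = K) (ht0 : t0 ∈ ℬ ∨ t0 = ∅) (hfree : ∀ s ∈ s1, s ∉ t0) :
    Good (insert (Fin.last N) (up s1)) (up s2) (K+1) (ΨA ℬ t0) := by
  classical
  set L := Fin.last N with hLdef
  set B0 := insert L (up t0) with hB0
  have hB0mem : B0 ∈ ΨA ℬ t0 := Finset.mem_insert_self _ _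
  have hLB0 : L ∈ B0 := Finset.mem_insert_self _ _
  have hmem : ∀ t, t ∈ ΨA ℬ t0 ↔ t = B0 ∨ ∃ s ∈ ℬ.erase t0, up s = t := by
    intro t; simp [ΨA, hB0, hLdef]
  have ht0B : ∀ {y : Fin N}, y ∈ t0 → t0 ∈ ℬ := by
    intro y hy
    rcases ht0 with h | h
    · exact h
    · simp [h] at hy
  refine ⟨⟨?_, ?_⟩, ?_, ?_, ?_⟩
  · -- nonempty
    intro t ht
    rcases (hmem t).1 ht with rfl | ⟨s, hs, rfl⟩
    · exact ⟨L, hLB0⟩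
    · exact up_nonempty (hP.1 s (Finset.mem_of_mem_erase hs))
  · -- cover
    intro x
    refine Fin.lastCases ?_ (fun z => ?_) x
    · refine ⟨B0, ⟨hB0mem, hLB0⟩, ?_⟩
      rintro y ⟨hy, hLy⟩
      exact mem_ΨA_of_last_mem hy hLy
    · obtain ⟨s, ⟨hsB, hzs⟩, huniq⟩ := hP.2 z
      by_cases hst : s = t0
      · subst hst
        refine ⟨B0, ⟨hB0mem, Finset.mem_insert_of_mem (castSucc_mem_up.2 hzs)⟩, ?_⟩
        rintro y ⟨hy, hzy⟩
        rcases (hmem y).1 hy with rfl | ⟨s', hs', rfl⟩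
        · rfl
        · exact absurd (huniq s' ⟨Finset.mem_of_mem_erase hs', castSucc_mem_up.1 hzy⟩)
            (Finset.ne_of_mem_erase hs')
      · have hsmem : s ∈ ℬ.erase t0 := Finset.mem_erase.2 ⟨hst, hsB⟩
        refine ⟨up s, ⟨(hmem _).2 (Or.inr ⟨s, hsmem, rfl⟩), castSucc_mem_up.2 hzs⟩, ?_⟩
        rintro y ⟨hy, hzy⟩
        rcases (hmem y).1 hy with rfl | ⟨s', hs', rfl⟩
        · exfalso
          rcases Finset.mem_insert.1 hzy with hzl | hzu
          · exact (Fin.castSucc_lt_last z).ne hzl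
          · have hz0 : z ∈ t0 := castSucc_mem_up.1 hzu
            exact hst (huniq t0 ⟨ht0B hz0, hz0⟩).symm
        · rw [huniq s' ⟨Finset.mem_of_mem_erase hs', castSucc_mem_up.1 hzy⟩]
  · -- card
    have hB0not : B0 ∉ upB (ℬ.erase t0) := not_mem_upB_of_last_mem hLB0
    rw [show ΨA ℬ t0 = insert B0 (upB (ℬ.erase t0)) from rfl,
      Finset.card_insert_of_notMem hB0not, upB, Finset.card_map, hc]
  · -- DB (insert L (up s1))
    rintro a ha b hb hab t ht ⟨hat, hbt⟩
    have hchar : ∀ {c : Fin (N+1)}, c ∈ (↑(insert L (up s1)) : Set (Fin (N+1))) →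
        c = L ∨ ∃ sc ∈ s1, Fin.castSucc sc = c := by
      intro c hc
      simpa using hc
    have key : ∀ {c : Fin (N+1)}, c ≠ L →
        c ∈ (↑(insert L (up s1)) : Set (Fin (N+1))) → c ∈ B0 → False := by
      intro c hcL hc hcB0
      rcases hchar hc with rfl | ⟨sc, hsc, rfl⟩
      · exact hcL rfl
      · rcases Finset.mem_insert.1 hcB0 with hl | hu
        · exact hcL hl
        · exact hfree sc hsc (castSucc_mem_up.1 hu)
    rcases (hmem t).1 ht with rfl | ⟨s', hs', rfl⟩
    · -- t = B0
      by_cases haL : a = L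
      · exact key (fun hbl => hab (haL ▸ hbl ▸ rfl)) hb hbt
      · exact key haL ha hat
    · -- t = up s'
      rcases hchar ha with rfl | ⟨sa, hsa, rfl⟩
      · exact last_not_mem_up s' hat
      rcases hchar hb with rfl | ⟨sb, hsb, rfl⟩
      · exact last_not_mem_up s' hbt
      have hne : sa ≠ sb := fun hh => hab (hh ▸ rfl)
      exact hD1 sa (Finset.mem_coe.2 hsa) sb (Finset.mem_coe.2 hsb) hne s'
        (Finset.mem_of_mem_erase hs') ⟨castSucc_mem_up.1 hat, castSucc_mem_up.1 hbt⟩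
  · -- DB (up s2)
    rintro a ha b hb hab t ht ⟨hat, hbt⟩
    have hchar : ∀ {c : Fin (N+1)}, c ∈ (↑(up s2) : Set (Fin (N+1))) →
        ∃ sc ∈ s2, Fin.castSucc sc = c := by
      intro c hc
      simpa using hc
    obtain ⟨sa, hsa, rfl⟩ := hchar ha
    obtain ⟨sb, hsb, rfl⟩ := hchar hb
    have hne : sa ≠ sb := fun hh => hab (hh ▸ rfl)
    rcases (hmem t).1 ht with rfl | ⟨s', hs', rfl⟩
    · -- t = B0
      have ha0 : sa ∈ t0 := by
        rcases Finset.mem_insert.1 hat with hl | hu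
        · exact absurd hl (Fin.castSucc_lt_last sa).ne
        · exact castSucc_mem_up.1 hu
      have hb0 : sb ∈ t0 := by
        rcases Finset.mem_insert.1 hbt with hl | hu
        · exact absurd hl (Fin.castSucc_lt_last sb).ne
        · exact castSucc_mem_up.1 hu
      exact hD2 sa (Finset.mem_coe.2 hsa) sb (Finset.mem_coe.2 hsb) hne t0
        (ht0B ha0) ⟨ha0, hb0⟩
    · exact hD2 sa (Finset.mem_coe.2 hsa) sb (Finset.mem_coe.2 hsb) hne s'
        (Finset.mem_of_mem_erase hs') ⟨castSucc_mem_up.1 hat, castSucc_mem_up.1 hbt⟩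

lemma ΨA_inj {ℬ ℬ' : Finset (Finset (Fin N))} {t0 t0' : Finset (Fin N)}
    (hP : IsSetPartition ℬ) (hP' : IsSetPartition ℬ')
    (ht0 : t0 ∈ ℬ ∨ t0 = ∅) (ht0' : t0' ∈ ℬ' ∨ t0' = ∅)
    (h : ΨA ℬ t0 = ΨA ℬ' t0') : ℬ = ℬ' ∧ t0 = t0' := by
  classical
  set L := Fin.last N
  have hB0 : insert L (up t0) = insert L (up t0') := by
    have h1 : insert L (up t0) ∈ ΨA ℬ' t0' := h ▸ Finset.mem_insert_self _ _
    exact mem_ΨA_of_last_mem h1 (Finset.mem_insert_self _ _)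
  have ht00 : t0 = t0' := by
    have h2 : up t0 = up t0' := by
      rw [← Finset.erase_insert (last_not_mem_up t0),
        ← Finset.erase_insert (last_not_mem_up t0'), hB0]
    exact up_injective h2
  subst ht00
  have herase : ℬ.erase t0 = ℬ'.erase t0 := by
    have h3 : upB (ℬ.erase t0) = upB (ℬ'.erase t0) := by
      have h4 := congrArg (fun X => Finset.erase X (insert L (up t0))) h
      simp only [ΨA] at h4
      rwa [Finset.erase_insert (not_mem_upB_of_last_mem (Finset.mem_insert_self _ _)),
        Finset.erase_insert (not_mem_upB_of_last_mem (Finset.mem_insert_self _ _))] at h4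
    simp only [upB] at h3
    exact Finset.map_injective _ h3
  refine ⟨?_, rfl⟩
  rcases ht0 with h0 | h0
  · have h0' : t0 ∈ ℬ' := by
      rcases ht0' with h1 | h1
      · exact h1
      · subst h1; exact absurd h0 (empty_not_mem_of_part hP)
    rw [← Finset.insert_erase h0, ← Finset.insert_erase h0', herase]
  · subst h0
    rw [← Finset.erase_eq_of_notMem (empty_not_mem_of_part hP),
      ← Finset.erase_eq_of_notMem (empty_not_mem_of_part hP'), herase]

lemma surj_decomp {s1 s2 : Finset (Fin N)} {K : ℕ} {𝒜 : Finset (Finset (Fin (N+1)))}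
    (h : Good (insert (Fin.last N) (up s1)) (up s2) (K+1) 𝒜) :
    ∃ ℬ t0, ΨA ℬ t0 = 𝒜 ∧ IsSetPartition ℬ ∧ DistinctBlocks ℬ ↑s1 ∧
      DistinctBlocks ℬ ↑s2 ∧ (∀ s ∈ s1, s ∉ t0) ∧
      ((t0 ∈ ℬ ∧ ℬ.card = K+1) ∨ (t0 = ∅ ∧ ℬ.card = K)) := by
  classical
  obtain ⟨hP, hK, hD1, hD2⟩ := h
  set L := Fin.last N with hLdef
  obtain ⟨T, ⟨hT𝒜, hLT⟩, hTuniq⟩ := hP.2 L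
  have hnotL : ∀ t ∈ 𝒜, t ≠ T → L ∉ t := fun t ht hne hLt => hne (hTuniq t ⟨ht, hLt⟩)
  have hupdown : ∀ t ∈ 𝒜, t ≠ T → up (down t) = t := fun t ht hne => by
    rw [up_down, Finset.erase_eq_of_notMem (hnotL t ht hne)]
  have hdownne : ∀ t ∈ 𝒜, t ≠ T → down t ≠ ∅ := by
    intro t ht hne h0
    have h1 : t = ∅ := by rw [← hupdown t ht hne, h0]; rfl
    exact (hP.1 t ht).ne_empty h1
  have hdinj : ∀ t ∈ 𝒜, down t = down T → t = T := by
    intro t ht hdeq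
    by_contra hne
    have h1 : t = T.erase L := by rw [← hupdown t ht hne, hdeq, up_down]
    obtain ⟨y, hy⟩ := hP.1 t ht
    have hyT : y ∈ T := Finset.mem_of_mem_erase (h1 ▸ hy)
    exact hne (part_unique hP ht hT𝒜 hy hyT)
  set ℬ := (downB 𝒜).erase ∅ with hℬdef
  set t0 := down T with ht0def
  have hmemℬ : ∀ s, s ∈ ℬ ↔ s ≠ ∅ ∧ ∃ t ∈ 𝒜, down t = s := by
    intro s
    rw [hℬdef, Finset.mem_erase, mem_downB]
  have herase : ℬ.erase t0 = downB (𝒜.erase T) := by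
    ext s
    rw [Finset.mem_erase, hmemℬ, mem_downB]
    constructor
    · rintro ⟨hst0, hs0, t, ht, rfl⟩
      exact ⟨t, Finset.mem_erase.2 ⟨fun hh => hst0 (hh ▸ rfl), ht⟩, rfl⟩
    · rintro ⟨t, ht', rfl⟩
      obtain ⟨htT, ht⟩ := Finset.mem_erase.1 ht'
      exact ⟨fun hdeq => htT (hdinj t ht hdeq), hdownne t ht htT, t, ht, rfl⟩
  have hinjOn : Set.InjOn (down (N := N)) ↑(𝒜.erase T) := by
    intro t ht t' ht' hdeq
    rw [Finset.mem_coe, Finset.mem_erase] at ht ht'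
    rw [← hupdown t ht.2 ht.1, hdeq, hupdown t' ht'.2 ht'.1]
  have hcarderase : (ℬ.erase t0).card = K := by
    rw [herase, downB, Finset.card_image_of_injOn hinjOn]
    have := Finset.card_erase_add_one hT𝒜
    omega
  have hΨ : ΨA ℬ t0 = 𝒜 := by
    rw [ΨA, herase,
      upB_downB (fun t ht => hnotL t (Finset.mem_of_mem_erase ht) (Finset.ne_of_mem_erase ht)),
      ht0def, up_down, Finset.insert_erase hLT, Finset.insert_erase hT𝒜]
  have hmb1 : ∀ {a : Fin N}, a ∈ s1 →
      Fin.castSucc a ∈ (↑(insert L (up s1)) : Set (Fin (N+1))) := by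
    intro a ha
    simp only [Finset.coe_insert, Set.mem_insert_iff, Finset.mem_coe, mem_up]
    exact Or.inr ⟨a, ha, rfl⟩
  have hmb2 : ∀ {a : Fin N}, a ∈ s2 → Fin.castSucc a ∈ (↑(up s2) : Set (Fin (N+1))) := by
    intro a ha
    simp only [Finset.mem_coe, mem_up]
    exact ⟨a, ha, rfl⟩
  have hPℬ : IsSetPartition ℬ := by
    constructor
    · intro s hs
      exact Finset.nonempty_iff_ne_empty.2 ((hmemℬ s).1 hs).1
    · intro y
      obtain ⟨t, ⟨ht, hyt⟩, huniq⟩ := hP.2 (Fin.castSucc y)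
      have hy' : y ∈ down t := mem_down.2 hyt
      have hdt : down t ∈ ℬ := (hmemℬ _).2
        ⟨fun h0 => absurd (h0 ▸ hy') (Finset.notMem_empty y), ⟨t, ht, rfl⟩⟩
      refine ⟨down t, ⟨hdt, mem_down.2 hyt⟩, ?_⟩
      rintro s ⟨hs, hys⟩
      obtain ⟨-, t', ht', rfl⟩ := (hmemℬ s).1 hs
      rw [huniq t' ⟨ht', mem_down.1 hys⟩]
  have hDB1 : DistinctBlocks ℬ ↑s1 := by
    rintro a ha b hb hab s hs ⟨has, hbs⟩
    obtain ⟨-, t, ht, rfl⟩ := (hmemℬ s).1 hs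
    exact hD1 (Fin.castSucc a) (hmb1 ha) (Fin.castSucc b) (hmb1 hb)
      (fun hh => hab (Fin.castSucc_injective N hh)) t ht
      ⟨mem_down.1 has, mem_down.1 hbs⟩
  have hDB2 : DistinctBlocks ℬ ↑s2 := by
    rintro a ha b hb hab s hs ⟨has, hbs⟩
    obtain ⟨-, t, ht, rfl⟩ := (hmemℬ s).1 hs
    exact hD2 (Fin.castSucc a) (hmb2 ha) (Fin.castSucc b) (hmb2 hb)
      (fun hh => hab (Fin.castSucc_injective N hh)) t ht
      ⟨mem_down.1 has, mem_down.1 hbs⟩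
  have hfree : ∀ s ∈ s1, s ∉ t0 := by
    intro s hs hst0
    have h1 : Fin.castSucc s ∈ T := mem_down.1 hst0
    exact hD1 (Fin.castSucc s) (hmb1 hs) L
      (by simp only [Finset.coe_insert, Set.mem_insert_iff]; exact Or.inl trivial)
      (Fin.castSucc_lt_last s).ne T hT𝒜 ⟨h1, hLT⟩
  refine ⟨ℬ, t0, hΨ, hPℬ, hDB1, hDB2, hfree, ?_⟩
  by_cases hTL : T = {L}
  · right
    have ht00 : t0 = ∅ := by
      rw [ht0def, hTL]
      ext y
      simp [hLdef, (Fin.castSucc_lt_last y).ne]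
    refine ⟨ht00, ?_⟩
    rw [← hcarderase, ht00, Finset.erase_eq_of_notMem (Finset.notMem_erase ∅ _)]
  · left
    have ht0ne : t0 ≠ ∅ := by
      intro h0
      obtain ⟨y, hyT, hyL⟩ : ∃ y ∈ T, y ≠ L := by
        by_contra hc
        push_neg at hc
        exact hTL (Finset.eq_singleton_iff_unique_mem.2 ⟨hLT, hc⟩)
      obtain ⟨z, rfl⟩ := Fin.exists_castSucc_eq.2 hyL
      have : z ∈ t0 := mem_down.2 hyT
      rw [h0] at this
      exact absurd this (Finset.notMem_empty z)
    have ht0mem : t0 ∈ ℬ := (hmemℬ t0).2 ⟨ht0ne, T, hT𝒜, rfl⟩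
    refine ⟨ht0mem, ?_⟩
    have := Finset.card_erase_add_one ht0mem
    omega

lemma meets_card {s1 : Finset (Fin N)} {ℬ : Finset (Finset (Fin N))}
    (hP : IsSetPartition ℬ) (hD1 : DistinctBlocks ℬ ↑s1) :
    (ℬ.filter (fun t => ∃ s ∈ s1, s ∈ t)).card = s1.card := by
  classical
  choose f hf1 hf2 using fun x : Fin N => (hP.2 x).exists
  symm
  apply Finset.card_bij (fun s _ => f s)
  · intro a ha
    exact Finset.mem_filter.2 ⟨hf1 a, a, ha, hf2 a⟩
  · intro a₁ ha₁ a₂ ha₂ heq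
    by_contra hne
    exact hD1 a₁ (Finset.mem_coe.2 ha₁) a₂ (Finset.mem_coe.2 ha₂) hne (f a₁) (hf1 a₁)
      ⟨hf2 a₁, by rw [heq]; exact hf2 a₂⟩
  · intro t ht
    obtain ⟨htB, ss, hs, hst⟩ := Finset.mem_filter.1 ht
    exact ⟨ss, hs, part_unique hP (hf1 ss) htB (hf2 ss) hst⟩

lemma fiber_card {s1 : Finset (Fin N)} {K : ℕ} {ℬ : Finset (Finset (Fin N))}
    (hP : IsSetPartition ℬ) (hD1 : DistinctBlocks ℬ ↑s1) (hK : ℬ.card = K) :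
    (ℬ.filter (fun t => ∀ s ∈ s1, s ∉ t)).card = K - s1.card := by
  classical
  have h1 := meets_card hP hD1
  have h2 := Finset.card_filter_add_card_filter_not (s := ℬ)
    (p := fun t => ∃ s ∈ s1, s ∈ t)
  have h3 : ℬ.filter (fun t => ¬ ∃ s ∈ s1, s ∈ t) = ℬ.filter (fun t => ∀ s ∈ s1, s ∉ t) := by
    apply Finset.filter_congr
    intro t _
    simp
  rw [h3, h1, hK] at h2
  omega

theorem removal (N K : ℕ) (s1 s2 : Finset (Fin N)) :
    PC (N+1) (insert (Fin.last N) (up s1)) (up s2) (K+1)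
      = (K + 1 - s1.card) * PC N s1 s2 (K+1) + PC N s1 s2 K := by
  classical
  let T1 : Type := {p : Finset (Finset (Fin N)) × Finset (Fin N) //
    Good s1 s2 (K+1) p.1 ∧ p.2 ∈ p.1 ∧ ∀ s ∈ s1, s ∉ p.2}
  let T2 : Type := {ℬ : Finset (Finset (Fin N)) // Good s1 s2 K ℬ}
  let F : T1 ⊕ T2 → {𝒜 : Finset (Finset (Fin (N+1))) //
      Good (insert (Fin.last N) (up s1)) (up s2) (K+1) 𝒜} := fun x =>
    match x with
    | Sum.inl ⟨⟨ℬ, t⟩, h⟩ => ⟨ΨA ℬ t, by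
        refine good_ΨA h.1.1 h.1.2.2.1 h.1.2.2.2 ?_ (Or.inl h.2.1) h.2.2
        have h1 : (ℬ.erase t).card + 1 = ℬ.card := Finset.card_erase_add_one h.2.1
        have h2 : ℬ.card = K + 1 := h.1.2.1
        omega⟩
    | Sum.inr ⟨ℬ, h⟩ => ⟨ΨA ℬ ∅, by
        refine good_ΨA h.1 h.2.2.1 h.2.2.2 ?_ (Or.inr rfl) (fun ss _ => Finset.notMem_empty ss)
        rw [Finset.erase_eq_of_notMem (empty_not_mem_of_part h.1)]
        exact h.2.1⟩
  have hbij : Function.Bijective F := by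
    constructor
    · rintro (⟨⟨ℬ, t⟩, h⟩ | ⟨ℬ, h⟩) (⟨⟨ℬ', t'⟩, h'⟩ | ⟨ℬ', h'⟩) hxy <;>
        simp only [F, Subtype.mk.injEq] at hxy
      · obtain ⟨hBB, htt⟩ := ΨA_inj h.1.1 h'.1.1 (Or.inl h.2.1) (Or.inl h'.2.1) hxy
        subst hBB; subst htt; rfl
      · obtain ⟨hBB, htt⟩ := ΨA_inj h.1.1 h'.1 (Or.inl h.2.1) (Or.inr rfl) hxy
        exact absurd (htt ▸ h.2.1) (empty_not_mem_of_part h.1.1)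
      · obtain ⟨hBB, htt⟩ := ΨA_inj h.1 h'.1.1 (Or.inr rfl) (Or.inl h'.2.1) hxy
        have he : (∅ : Finset (Fin N)) ∈ ℬ' := htt.symm ▸ h'.2.1
        exact absurd he (empty_not_mem_of_part h'.1.1)
      · obtain ⟨hBB, -⟩ := ΨA_inj h.1 h'.1 (Or.inr rfl) (Or.inr rfl) hxy
        subst hBB; rfl
    · rintro ⟨𝒜, h𝒜⟩
      obtain ⟨ℬ, t0, hΨ, hPℬ, hDB1, hDB2, hfree, hcase⟩ := surj_decomp h𝒜
      rcases hcase with ⟨ht0mem, hcard⟩ | ⟨rfl, hcard⟩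
      · exact ⟨Sum.inl ⟨⟨ℬ, t0⟩, ⟨⟨hPℬ, hcard, hDB1, hDB2⟩, ht0mem, hfree⟩⟩, Subtype.ext hΨ⟩
      · exact ⟨Sum.inr ⟨ℬ, hPℬ, hcard, hDB1, hDB2⟩, Subtype.ext hΨ⟩
  have hcards : PC (N+1) (insert (Fin.last N) (up s1)) (up s2) (K+1)
      = Nat.card T1 + Nat.card T2 := by
    rw [PC, ← Nat.card_eq_of_bijective F hbij, Nat.card_sum]
  have hT2 : Nat.card T2 = PC N s1 s2 K := rfl
  have hT1 : Nat.card T1 = (K + 1 - s1.card) * PC N s1 s2 (K+1) := by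
    let e : T1 ≃ Σ ℬ : {ℬ : Finset (Finset (Fin N)) // Good s1 s2 (K+1) ℬ},
        {t : Finset (Fin N) // t ∈ ℬ.1 ∧ ∀ s ∈ s1, s ∉ t} :=
      { toFun := fun p => ⟨⟨p.1.1, p.2.1⟩, ⟨p.1.2, p.2.2.1, p.2.2.2⟩⟩
        invFun := fun q => ⟨(q.1.1, q.2.1), q.1.2, q.2.2.1, q.2.2.2⟩
        left_inv := fun _ => rfl
        right_inv := fun _ => rfl }
    rw [Nat.card_congr e, Nat.card_eq_fintype_card, Fintype.card_sigma]
    have hfib : ∀ ℬ : {ℬ : Finset (Finset (Fin N)) // Good s1 s2 (K+1) ℬ},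
        Fintype.card {t : Finset (Fin N) // t ∈ ℬ.1 ∧ ∀ s ∈ s1, s ∉ t}
          = K + 1 - s1.card := by
      intro ℬ
      rw [Fintype.card_congr (Equiv.subtypeEquivRight (q := fun t =>
        t ∈ ℬ.1.filter (fun t => ∀ s ∈ s1, s ∉ t)) (by intro t; simp [Finset.mem_filter]))]
      rw [Fintype.card_coe]
      exact fiber_card ℬ.2.1 ℬ.2.2.2.1 ℬ.2.2.1
    simp only [hfib]
    rw [Finset.sum_const, Finset.card_univ, smul_eq_mul, ← Nat.card_eq_fintype_card]
    rw [mul_comm]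
    rfl
  rw [hcards, hT1, hT2]

/-! special sets -/

def topSet (N r : ℕ) : Finset (Fin N) := univ.filter (fun x => N - r ≤ x.val)
def botSet (N r : ℕ) : Finset (Fin N) := univ.filter (fun x => x.val < r)
def midSet (N r1 r2 : ℕ) : Finset (Fin N) :=
  univ.filter (fun x => r1 ≤ x.val ∧ x.val < r1 + r2)

@[simp] lemma mem_topSet {N r : ℕ} {x : Fin N} : x ∈ topSet N r ↔ N - r ≤ x.val := by
  simp [topSet]

@[simp] lemma mem_botSet {N r : ℕ} {x : Fin N} : x ∈ botSet N r ↔ x.val < r := by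
  simp [botSet]

@[simp] lemma mem_midSet {N r1 r2 : ℕ} {x : Fin N} :
    x ∈ midSet N r1 r2 ↔ r1 ≤ x.val ∧ x.val < r1 + r2 := by simp [midSet]

lemma botSet_card {N r : ℕ} (h : r ≤ N) : (botSet N r).card = r := by
  have : botSet N r = (univ : Finset (Fin r)).map (Fin.castLEEmb h) := by
    ext x
    simp only [mem_botSet, Finset.mem_map, Finset.mem_univ, true_and]
    constructor
    · intro hx; exact ⟨⟨x.val, hx⟩, rfl⟩
    · rintro ⟨y, rfl⟩; exact y.isLt
  rw [this, Finset.card_map, Finset.card_univ, Fintype.card_fin]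

lemma topSet_card {N r : ℕ} (h : r ≤ N) : (topSet N r).card = r := by
  classical
  have h1 : botSet N (N - r) = univ.filter (fun x : Fin N => ¬ (N - r ≤ x.val)) := by
    ext x; simp only [mem_botSet, Finset.mem_filter, Finset.mem_univ, true_and]; omega
  have h2 := Finset.card_filter_add_card_filter_not
    (s := (univ : Finset (Fin N))) (p := fun x : Fin N => N - r ≤ x.val)
  rw [← h1] at h2
  have h3 : (botSet N (N - r)).card = N - r := botSet_card (by omega)
  have h4 : (univ : Finset (Fin N)).card = N := by rw [Finset.card_univ, Fintype.card_fin]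
  rw [h3, h4] at h2
  have : (topSet N r).card = (univ.filter (fun x : Fin N => N - r ≤ x.val)).card := rfl
  omega

lemma insert_up_topSet (N r : ℕ) :
    insert (Fin.last N) (up (topSet N r)) = topSet (N+1) (r+1) := by
  ext x
  simp only [Finset.mem_insert, mem_up, mem_topSet]
  constructor
  · rintro (rfl | ⟨y, hy, rfl⟩)
    · simp only [Fin.val_last]; omega
    · simp only [Fin.coe_castSucc]
      omega
  · intro hx
    by_cases hxN : x.val = N
    · exact Or.inl (Fin.ext (by simpa using hxN))
    · have hlt : x.val < N := by have := x.isLt; omega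
      refine Or.inr ⟨⟨x.val, hlt⟩, ?_, ?_⟩
      · show N - r ≤ (x : ℕ)
        omega
      · exact Fin.ext (by simp)

lemma up_botSet {N r : ℕ} (h : r ≤ N) : up (botSet N r) = botSet (N+1) r := by
  ext x
  simp only [mem_up, mem_botSet]
  constructor
  · rintro ⟨y, hy, rfl⟩
    simpa using hy
  · intro hx
    have hlt : x.val < N := lt_of_lt_of_le hx h
    exact ⟨⟨x.val, hlt⟩, show (x:ℕ) < r from hx, Fin.ext (by simp)⟩

/-! the specialized counts -/

noncomputable def Dc (N r1 r2 K : ℕ) : ℕ := PC N (topSet N r1) (botSet N r2) K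

noncomputable def Ec (r2 m K : ℕ) : ℕ := Dc (m + r2) 0 r2 K

lemma Dc_cast {N N' : ℕ} (h : N = N') (r1 r2 K : ℕ) : Dc N r1 r2 K = Dc N' r1 r2 K := by
  subst h; rfl

/-! trivial DistinctBlocks -/

lemma DB_of_subsingleton {s : Finset (Fin N)} (h : ∀ a ∈ s, ∀ b ∈ s, a = b)
    (𝒜 : Finset (Finset (Fin N))) : DistinctBlocks 𝒜 ↑s := by
  rintro a ha b hb hab t ht ⟨-, -⟩
  exact hab (h a (Finset.mem_coe.1 ha) b (Finset.mem_coe.1 hb))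

lemma PC_congr_left {s1 s1' s2 : Finset (Fin N)} {K : ℕ}
    (h : ∀ 𝒜 : Finset (Finset (Fin N)),
      DistinctBlocks 𝒜 (↑s1 : Set (Fin N)) ↔ DistinctBlocks 𝒜 ↑s1') :
    PC N s1 s2 K = PC N s1' s2 K :=
  Nat.card_congr (Equiv.subtypeEquivRight (fun 𝒜 => by
    unfold Good
    rw [h 𝒜]))

/-! vanishing -/

lemma PC_eq_zero_left {s1 s2 : Finset (Fin N)} {K : ℕ} (h : K < s1.card) :
    PC N s1 s2 K = 0 := by
  rw [PC, Nat.card_eq_zero]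
  left
  refine ⟨fun ⟨𝒜, hG⟩ => ?_⟩
  have h1 := meets_card hG.1 hG.2.2.1
  have h2 : (𝒜.filter (fun t => ∃ s ∈ s1, s ∈ t)).card ≤ 𝒜.card := Finset.card_filter_le _ _
  have h3 := hG.2.1
  omega

lemma PC_eq_zero_right {s1 s2 : Finset (Fin N)} {K : ℕ} (h : K < s2.card) :
    PC N s1 s2 K = 0 := by
  rw [PC, Nat.card_eq_zero]
  left
  refine ⟨fun ⟨𝒜, hG⟩ => ?_⟩
  have h1 := meets_card hG.1 hG.2.2.2
  have h2 : (𝒜.filter (fun t => ∃ s ∈ s2, s ∈ t)).card ≤ 𝒜.card := Finset.card_filter_le _ _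
  have h3 := hG.2.1
  omega

lemma PC_eq_zero_K0 {s1 s2 : Finset (Fin N)} (h : 1 ≤ N) : PC N s1 s2 0 = 0 := by
  rw [PC, Nat.card_eq_zero]
  left
  refine ⟨fun ⟨𝒜, hG⟩ => ?_⟩
  have h𝒜 : 𝒜 = ∅ := Finset.card_eq_zero.1 hG.2.1
  obtain ⟨t, ⟨ht, -⟩, -⟩ := hG.1.2 ⟨0, h⟩
  rw [h𝒜] at ht
  exact absurd ht (Finset.notMem_empty t)

lemma Dc_eq_zero_left {N r1 r2 K : ℕ} (hK : K < r1) (hN : r1 ≤ N) : Dc N r1 r2 K = 0 :=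
  PC_eq_zero_left (by rwa [topSet_card hN])

lemma Dc_eq_zero_right {N r1 r2 K : ℕ} (hK : K < r2) (hN : r2 ≤ N) : Dc N r1 r2 K = 0 :=
  PC_eq_zero_right (by rwa [botSet_card hN])

/-! transport along an equivalence of the ground type -/

def collCongr {N M : ℕ} (e : Fin N ≃ Fin M) :
    Finset (Finset (Fin N)) ≃ Finset (Finset (Fin M)) :=
  (e.finsetCongr).finsetCongr

lemma mem_collCongr {N M : ℕ} (e : Fin N ≃ Fin M) {𝒜 : Finset (Finset (Fin N))}
    {t' : Finset (Fin M)} :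
    t' ∈ collCongr e 𝒜 ↔ ∃ t ∈ 𝒜, t.map e.toEmbedding = t' := by
  simp only [collCongr, Equiv.finsetCongr_apply, Finset.mem_map, Equiv.toEmbedding]
  constructor
  · rintro ⟨t, ht, rfl⟩
    exact ⟨t, ht, rfl⟩
  · rintro ⟨t, ht, rfl⟩
    exact ⟨t, ht, rfl⟩

lemma good_collCongr {N M : ℕ} (e : Fin N ≃ Fin M) {s1 s2 : Finset (Fin N)} {K : ℕ}
    {𝒜 : Finset (Finset (Fin N))} (h : Good s1 s2 K 𝒜) :
    Good (s1.map e.toEmbedding) (s2.map e.toEmbedding) K (collCongr e 𝒜) := by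
  obtain ⟨⟨hne, hcov⟩, hK, hD1, hD2⟩ := h
  have hDB : ∀ (s : Finset (Fin N)), DistinctBlocks 𝒜 ↑s →
      DistinctBlocks (collCongr e 𝒜) ↑(s.map e.toEmbedding) := by
    intro s hD
    rintro a ha b hb hab t' ht' ⟨hat, hbt⟩
    obtain ⟨t, ht, rfl⟩ := (mem_collCongr e).1 ht'
    obtain ⟨sa, hsa, rfl⟩ := Finset.mem_map.1 (Finset.mem_coe.1 ha)
    obtain ⟨sb, hsb, rfl⟩ := Finset.mem_map.1 (Finset.mem_coe.1 hb)
    have hne' : sa ≠ sb := fun hh => hab (by rw [hh])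
    refine hD sa (Finset.mem_coe.2 hsa) sb (Finset.mem_coe.2 hsb) hne' t ht ⟨?_, ?_⟩
    · have := Finset.mem_map_equiv.1 hat
      simpa using this
    · have := Finset.mem_map_equiv.1 hbt
      simpa using this
  refine ⟨⟨?_, ?_⟩, ?_, hDB s1 hD1, hDB s2 hD2⟩
  · intro t' ht'
    obtain ⟨t, ht, rfl⟩ := (mem_collCongr e).1 ht'
    exact (hne t ht).map
  · intro x
    obtain ⟨t, ⟨ht, hxt⟩, huniq⟩ := hcov (e.symm x)
    refine ⟨t.map e.toEmbedding, ⟨(mem_collCongr e).2 ⟨t, ht, rfl⟩,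
      Finset.mem_map_equiv.2 hxt⟩, ?_⟩
    rintro y ⟨hy, hxy⟩
    obtain ⟨s, hs, rfl⟩ := (mem_collCongr e).1 hy
    rw [huniq s ⟨hs, Finset.mem_map_equiv.1 hxy⟩]
  · simpa [collCongr] using hK

lemma map_map_symm {N M : ℕ} (e : Fin N ≃ Fin M) (s : Finset (Fin N)) :
    (s.map e.toEmbedding).map e.symm.toEmbedding = s := by
  ext x
  rw [Finset.mem_map_equiv, Finset.mem_map_equiv]
  simp

lemma collCongr_symm_apply {N M : ℕ} (e : Fin N ≃ Fin M) (𝒜 : Finset (Finset (Fin N))) :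
    collCongr e.symm (collCongr e 𝒜) = 𝒜 := by
  ext t
  rw [mem_collCongr]
  constructor
  · rintro ⟨t', ht', rfl⟩
    obtain ⟨t0, ht0, rfl⟩ := (mem_collCongr e).1 ht'
    rwa [map_map_symm]
  · intro ht
    exact ⟨t.map e.toEmbedding, (mem_collCongr e).2 ⟨t, ht, rfl⟩, map_map_symm e t⟩

lemma PC_map {N M K : ℕ} (e : Fin N ≃ Fin M) {s1 s2 : Finset (Fin N)}
    {s1' s2' : Finset (Fin M)}
    (hs1 : s1.map e.toEmbedding = s1') (hs2 : s2.map e.toEmbedding = s2') :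
    PC N s1 s2 K = PC M s1' s2' K := by
  subst hs1; subst hs2
  refine Nat.card_congr (Equiv.subtypeEquiv (collCongr e) (fun 𝒜 => ⟨good_collCongr e, ?_⟩))
  intro h
  have h2 := good_collCongr e.symm h
  rwa [collCongr_symm_apply, map_map_symm, map_map_symm] at h2

/-! rotation -/

lemma PC_rotate (M r1 r2 K : ℕ) (h : r1 + r2 ≤ M + 1) :
    PC (M+1) (botSet (M+1) r1) (midSet (M+1) r1 r2) K = Dc (M+1) r1 r2 K := by
  set N := M + 1 with hN
  have hN0 : 0 < N := Nat.succ_pos M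
  set c : Fin N := ⟨r1 % N, Nat.mod_lt _ hN0⟩ with hc
  have hval : ∀ x : Fin N, ((Equiv.subRight c).symm x : Fin N).val = (x.val + r1) % N := by
    intro x
    rw [Equiv.subRight_symm_apply]
    rw [Fin.add_def]
    show (x.val + (r1 % N)) % N = (x.val + r1) % N
    conv_rhs => rw [Nat.add_mod, Nat.mod_eq_of_lt x.isLt]
  have hmod : ∀ x : Fin N, ((x.val + r1) % N = x.val + r1 ∧ x.val + r1 < N) ∨
      ((x.val + r1) % N = x.val + r1 - N ∧ N ≤ x.val + r1) := by
    intro x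
    rcases Nat.lt_or_ge (x.val + r1) N with hlt | hge
    · exact Or.inl ⟨Nat.mod_eq_of_lt hlt, hlt⟩
    · refine Or.inr ⟨?_, hge⟩
      rw [Nat.mod_eq_sub_mod hge, Nat.mod_eq_of_lt (by have := x.isLt; omega)]
  apply PC_map (Equiv.subRight c)
  · ext x
    rw [Finset.mem_map_equiv, mem_botSet, mem_topSet, hval x]
    rcases hmod x with ⟨h1, h2⟩ | ⟨h1, h2⟩ <;> have := x.isLt <;> omega
  · ext x
    rw [Finset.mem_map_equiv, mem_midSet, mem_botSet, hval x]
    rcases hmod x with ⟨h1, h2⟩ | ⟨h1, h2⟩ <;> have := x.isLt <;> omega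

end SA

namespace SA
variable {N : ℕ}

lemma topSet_zero (N : ℕ) : topSet N 0 = ∅ := by
  ext x
  simp only [mem_topSet, Finset.notMem_empty, iff_false]
  have := x.isLt
  omega

lemma topSet_zero_sub (N : ℕ) : ∀ a ∈ topSet N 0, ∀ b ∈ topSet N 0, a = b := by
  intro a ha
  rw [topSet_zero] at ha
  exact absurd ha (Finset.notMem_empty a)

lemma topSet_one_sub (N : ℕ) : ∀ a ∈ topSet N 1, ∀ b ∈ topSet N 1, a = b := by
  intro a ha b hb
  rw [mem_topSet] at ha hb
  have h1 := a.isLt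
  have h2 := b.isLt
  exact Fin.ext (by omega)

lemma Dc_succ {N r1 r2 K : ℕ} (hr1 : r1 ≤ N) (hr2 : r2 ≤ N) :
    Dc (N+1) (r1+1) r2 (K+1) = (K + 1 - r1) * Dc N r1 r2 (K+1) + Dc N r1 r2 K := by
  have h := removal N K (topSet N r1) (botSet N r2)
  rw [insert_up_topSet, up_botSet hr2, topSet_card hr1] at h
  exact h

lemma Ec_succ (r2 m K : ℕ) :
    Ec r2 (m+1) (K+1) = (K+1) * Ec r2 m (K+1) + Ec r2 m K := by
  have h0 : Ec r2 (m+1) (K+1) = Dc ((m+r2)+1) 0 r2 (K+1) := Dc_cast (by omega) _ _ _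
  have h1 : Dc ((m+r2)+1) 0 r2 (K+1) = Dc ((m+r2)+1) 1 r2 (K+1) := by
    rw [Dc, Dc]
    exact (PC_congr_left (fun 𝒜 =>
      ⟨fun _ => DB_of_subsingleton (topSet_zero_sub _) 𝒜,
       fun _ => DB_of_subsingleton (topSet_one_sub _) 𝒜⟩)).symm
  have h2 := Dc_succ (N := m + r2) (r1 := 0) (r2 := r2) (K := K) (Nat.zero_le _)
    (Nat.le_add_left _ _)
  rw [h0, h1]
  rw [show (1 : ℕ) = 0 + 1 from rfl] at *
  rw [h2, Nat.sub_zero]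
  rfl

lemma trans_r (r2 m k : ℕ) : rStirling r2 m k = Ec r2 m (k + r2) := by
  have hset : (↑(botSet (m+r2) r2) : Set (Fin (m+r2))) = {x : Fin (m+r2) | (x:ℕ) < r2} := by
    ext x
    simp [mem_botSet]
  rw [rStirling, Ec, Dc, PC]
  apply Nat.card_congr (Equiv.subtypeEquivRight _)
  intro 𝒜
  constructor
  · rintro ⟨a, b, c⟩
    exact ⟨a, b, DB_of_subsingleton (topSet_zero_sub _) 𝒜, by rwa [hset]⟩
  · rintro ⟨a, b, -, d⟩
    exact ⟨a, b, by rwa [hset] at d⟩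

lemma PC_sets_cast {N N' : ℕ} (h : N = N') (r1 r2 K : ℕ) :
    PC N (botSet N r1) (midSet N r1 r2) K = PC N' (botSet N' r1) (midSet N' r1 r2) K := by
  subst h; rfl

lemma trans_rr (r1 r2 n k : ℕ) : rrStirling r1 r2 n k = Dc (n+r1+r2) r1 r2 (k+r2) := by
  have hsets1 : (↑(botSet (n+r1+r2) r1) : Set (Fin (n+r1+r2))) =
      {x : Fin (n+r1+r2) | (x:ℕ) < r1} := by ext x; simp [mem_botSet]
  have hsets2 : (↑(midSet (n+r1+r2) r1 r2) : Set (Fin (n+r1+r2))) =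
      {x : Fin (n+r1+r2) | r1 ≤ (x:ℕ) ∧ (x:ℕ) < r1+r2} := by ext x; simp [mem_midSet]
  have h1 : rrStirling r1 r2 n k = PC (n+r1+r2) (botSet (n+r1+r2) r1)
      (midSet (n+r1+r2) r1 r2) (k+r2) := by
    rw [rrStirling, PC]
    apply Nat.card_congr (Equiv.subtypeEquivRight _)
    intro 𝒜
    constructor
    · rintro ⟨a, b, c, d⟩
      exact ⟨a, b, by rw [hsets1]; exact c, by rw [hsets2]; exact d⟩
    · rintro ⟨a, b, c, d⟩
      exact ⟨a, b, by rwa [hsets1] at c, by rwa [hsets2] at d⟩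
  by_cases h0 : r1 = 0
  · subst h0
    have e1 : botSet (n+0+r2) 0 = topSet (n+0+r2) 0 := by
      rw [topSet_zero]
      ext x
      simp [mem_botSet]
    have e2 : midSet (n+0+r2) 0 r2 = botSet (n+0+r2) r2 := by
      ext x
      simp [mem_midSet, mem_botSet]
    rw [h1, e1, e2, Dc]
  · obtain ⟨M, hM⟩ : ∃ M, n + r1 + r2 = M + 1 := ⟨n+r1+r2-1, by omega⟩
    rw [h1, PC_sets_cast hM, PC_rotate M r1 r2 _ (by omega), ← Dc_cast hM]

end SA

namespace SA

lemma sabs_eq_zero_of_lt : ∀ {n k : ℕ}, n < k → sabs n k = 0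
  | 0, _+1, _ => rfl
  | n+1, k+1, h => by
      have h1 : sabs n (k+1) = 0 := sabs_eq_zero_of_lt (by omega)
      have h2 : sabs n k = 0 := sabs_eq_zero_of_lt (by omega)
      show n * sabs n (k+1) + sabs n k = 0
      rw [h1, h2]
      simp

lemma sabs_succ_zero (n : ℕ) : sabs (n+1) 0 = 0 := rfl

lemma mul_sabs_zero (n : ℕ) : n * sabs n 0 = 0 := by
  cases n with
  | zero => rfl
  | succ m => rw [sabs_succ_zero]; simp

lemma Dc_succ_int {N r1 r2 K : ℕ} (hr1 : r1 ≤ N) (hr2 : r2 ≤ N) :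
    (Dc (N+1) (r1+1) r2 (K+1) : ℤ)
      = ((K:ℤ) + 1 - r1) * Dc N r1 r2 (K+1) + Dc N r1 r2 K := by
  have h := Dc_succ (K := K) hr1 hr2
  by_cases hc : r1 ≤ K + 1
  · rw [h]
    push_cast [Nat.cast_sub hc]
    ring
  · have h1 : Dc N r1 r2 (K+1) = 0 := Dc_eq_zero_left (by omega) hr1
    have h2 : Dc N r1 r2 K = 0 := Dc_eq_zero_left (by omega) hr1
    rw [h, h1, h2]
    simp

noncomputable def Uu (r2 n r1 K : ℕ) : ℤ :=
  ∑ j ∈ range (r1+1), (-1:ℤ)^j * sabs r1 j * Ec r2 (n+j) K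

lemma Uu_succ (r2 n r1 K : ℕ) :
    Uu r2 n (r1+1) (K+1) = ((r1:ℤ) - ((K:ℤ)+1)) * Uu r2 n r1 (K+1) - Uu r2 n r1 K := by
  have key : ∀ j, (-1:ℤ)^(j+1) * sabs (r1+1) (j+1) * Ec r2 (n+(j+1)) (K+1)
      = (r1:ℤ) * ((-1)^(j+1) * sabs r1 (j+1) * Ec r2 (n+(j+1)) (K+1))
        - (((K:ℤ)+1) * ((-1)^j * sabs r1 j * Ec r2 (n+j) (K+1))
        + ((-1)^j * sabs r1 j * Ec r2 (n+j) K)) := by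
    intro j
    have hs : (sabs (r1+1) (j+1) : ℤ) = r1 * sabs r1 (j+1) + sabs r1 j := by
      rw [show sabs (r1+1) (j+1) = r1 * sabs r1 (j+1) + sabs r1 j from rfl]
      push_cast
      ring
    have hE : (Ec r2 (n+(j+1)) (K+1) : ℤ)
        = ((K:ℤ)+1) * Ec r2 (n+j) (K+1) + Ec r2 (n+j) K := by
      rw [show n+(j+1) = (n+j)+1 from rfl, Ec_succ r2 (n+j) K]
      push_cast
      ring
    linear_combination ((-1:ℤ)^(j+1) * (Ec r2 (n+(j+1)) (K+1) : ℤ)) * hs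
      + (-(-1:ℤ)^j * (sabs r1 j : ℤ)) * hE
  have h1 : ∑ j ∈ range (r1+1+1), ((-1:ℤ)^j * sabs r1 j * Ec r2 (n+j) (K+1))
      = Uu r2 n r1 (K+1) := by
    rw [Finset.sum_range_succ]
    rw [show sabs r1 (r1+1) = 0 from sabs_eq_zero_of_lt (by omega)]
    simp [Uu]
  have h2 := Finset.sum_range_succ'
    (fun j => (-1:ℤ)^j * sabs r1 j * Ec r2 (n+j) (K+1)) (r1+1)
  have hA : ∑ j ∈ range (r1+1), ((-1:ℤ)^(j+1) * sabs r1 (j+1) * Ec r2 (n+(j+1)) (K+1))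
      = Uu r2 n r1 (K+1) - sabs r1 0 * Ec r2 (n+0) (K+1) := by
    rw [h1] at h2
    linear_combination -h2
  have hr10 : (r1:ℤ) * (sabs r1 0 : ℤ) = 0 := by
    exact_mod_cast mul_sabs_zero r1
  show ∑ j ∈ range (r1+1+1), ((-1:ℤ)^j * sabs (r1+1) j * Ec r2 (n+j) (K+1)) = _
  rw [Finset.sum_range_succ'
    (fun j => (-1:ℤ)^j * sabs (r1+1) j * Ec r2 (n+j) (K+1)) (r1+1)]
  rw [Finset.sum_congr rfl (fun j _ => key j)]
  rw [show sabs (r1+1) 0 = (0:ℕ) from rfl]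
  simp only [Finset.sum_sub_distrib, Finset.sum_add_distrib, ← Finset.mul_sum]
  rw [hA]
  simp only [Uu]
  push_cast
  linear_combination (-(Ec r2 (n+0) (K+1) : ℤ)) * hr10

lemma main_ind (n r2 : ℕ) : ∀ r1 k,
    (Dc (n+r1+r2) r1 r2 (k+r2) : ℤ) = (-1)^r1 * Uu r2 n r1 (k+r2) := by
  intro r1
  induction r1 with
  | zero =>
    intro k
    show (Ec r2 n (k+r2) : ℤ) = _
    rw [Uu]
    simp [sabs]
  | succ r1 ih =>
    intro k
    by_cases hk : k + r2 = 0
    · have hr2 : r2 = 0 := by omega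
      have hk0 : k = 0 := by omega
      subst hr2; subst hk0
      have hL : Dc (n+(r1+1)+0) (r1+1) 0 0 = 0 := by
        rw [Dc]; exact PC_eq_zero_K0 (by omega)
      rw [hL, Uu]
      rw [Finset.sum_eq_zero]
      · simp
      · intro j hj
        rcases j with _ | j'
        · rw [show sabs (r1+1) 0 = (0:ℕ) from rfl]; simp
        · have hE : Ec 0 (n+(j'+1)) 0 = 0 := by
            rw [Ec, Dc]; exact PC_eq_zero_K0 (by omega)
          rw [hE]; simp
    · obtain ⟨K', hK'⟩ : ∃ K', k + r2 = K' + 1 := ⟨k + r2 - 1, by omega⟩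
      have hcast : n + (r1+1) + r2 = (n + r1 + r2) + 1 := by omega
      rw [Dc_cast hcast, hK']
      rw [Dc_succ_int (by omega) (by omega)]
      have h1 : (Dc (n+r1+r2) r1 r2 (K'+1) : ℤ) = (-1)^r1 * Uu r2 n r1 (K'+1) := by
        rw [← hK']; exact ih k
      have h2 : (Dc (n+r1+r2) r1 r2 K' : ℤ) = (-1)^r1 * Uu r2 n r1 K' := by
        rcases Nat.eq_zero_or_pos k with hk0 | hkpos
        · subst hk0
          have hd : Dc (n+r1+r2) r1 r2 K' = 0 := Dc_eq_zero_right (by omega) (by omega)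
          have hu : Uu r2 n r1 K' = 0 := by
            rw [Uu]
            apply Finset.sum_eq_zero
            intro j hj
            have hE : Ec r2 (n+j) K' = 0 := by
              rw [Ec]
              exact Dc_eq_zero_right (by omega) (by omega)
            rw [hE]; simp
          rw [hd, hu]; simp
        · obtain ⟨k'', rfl⟩ : ∃ k'', k = k'' + 1 := ⟨k - 1, by omega⟩
          have hK'' : K' = k'' + r2 := by omega
          rw [hK'']
          exact ih k''
      rw [h1, h2, Uu_succ]
      ring

end SA

/-- ${n+r_1+r_2 \brace k+r_2}_{r_1,r_2}
  = \sum_{j=0}^{r_1} (-1)^{r_1-j} |s(r_1,j)| {n+j+r_2 \brace k+r_2}_{r_2}$. -/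
theorem rrStirling_eq_signed_sum_rStirling (n k r₁ r₂ : ℕ) (h : r₁ ≤ r₂) :
    (rrStirling r₁ r₂ n k : ℤ) =
      ∑ j ∈ range (r₁ + 1),
        (-1 : ℤ) ^ (r₁ - j) * (sabs r₁ j : ℤ) * (rStirling r₂ (n + j) k : ℤ) := by
  rw [SA.trans_rr, SA.main_ind n r₂ r₁ k, SA.Uu, Finset.mul_sum]
  apply Finset.sum_congr rfl
  intro j hj
  have hjr : j ≤ r₁ := by
    rw [Finset.mem_range] at hj
    omega
  rw [SA.trans_r r₂ (n+j) k]
  have h1 : (-1:ℤ)^(r₁-j) * (-1:ℤ)^j = (-1:ℤ)^r₁ := by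
    rw [← pow_add]
    congr 1
    omega
  have h2 : (-1:ℤ)^j * (-1:ℤ)^j = 1 := by
    rw [← pow_add]
    exact Even.neg_one_pow ⟨j, rfl⟩
  linear_combination (-((sabs r₁ j : ℤ) * (SA.Ec r₂ (n+j) (k+r₂) : ℤ) * (-1:ℤ)^j)) * h1
    + ((sabs r₁ j : ℤ) * (SA.Ec r₂ (n+j) (k+r₂) : ℤ) * (-1:ℤ)^(r₁-j)) * h2
end
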